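/- arXiv:math/0107177 — 5 statements merged into one kernel-verified Lean document; each statement's English description precedes it below -/
import Mathlib

section
/- Let Δ be an irreducible simply-laced root system with fundamental weights ω_i, simple roots α_i, and Coxeter number h. Define Δ̂(ω_i) = {α + mδ : α ∈ Δ⁻, 1 ≤ m ≤ −(ω_i,α)} (a finite multiset of affine roots, where δ is the imaginary root with (δ,α_i)=0) and γ_i = ∑_{β∈Δ̂(ω_i)} β. Then (γ_i, α_i) = −h. -/
open scoped InnerProductSpace Classical

structure RootSystemData (V : Type*) [NormedAddCommGroup V] [InnerProductSpace ℝ V]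
    (I : Type*) [Fintype I] : Type _ where
  roots : Finset V
  simple : I → V
  simple_mem : ∀ i, simple i ∈ roots
  zero_notMem : (0 : V) ∉ roots
  neg_mem : ∀ α ∈ roots, -α ∈ roots
  reflect_mem : ∀ α ∈ roots, ∀ β ∈ roots, β - (2 * ⟪β, α⟫_ℝ / ⟪α, α⟫_ℝ) • α ∈ roots
  pairing_int : ∀ α ∈ roots, ∀ β ∈ roots, ∃ n : ℤ, 2 * ⟪β, α⟫_ℝ / ⟪α, α⟫_ℝ = (n : ℝ)
  indep : LinearIndependent ℝ simple
  span_eq : Submodule.span ℝ (Set.range simple) = ⊤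
  pos_or_neg : ∀ α ∈ roots,
    (∃ c : I → ℕ, α = ∑ i, (c i : ℝ) • simple i) ∨
    (∃ c : I → ℕ, α = -(∑ i, (c i : ℝ) • simple i))

namespace RootSystemData

variable {V : Type*} [NormedAddCommGroup V] [InnerProductSpace ℝ V]
  {I : Type*} [Fintype I]

noncomputable def posRoots (R : RootSystemData V I) : Finset V :=
  R.roots.filter fun α => ∃ c : I → ℕ, α = ∑ i, (c i : ℝ) • R.simple i

noncomputable def negRoots (R : RootSystemData V I) : Finset V :=
  R.posRoots.image fun α => -α

def IsSimplyLaced (R : RootSystemData V I) : Prop :=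
  ∀ α ∈ R.roots, ⟪α, α⟫_ℝ = 2

def IsIrreducible (R : RootSystemData V I) : Prop :=
  ∀ S : Set I, (∀ i ∈ S, ∀ j ∉ S, ⟪R.simple i, R.simple j⟫_ℝ = 0) → S = ∅ ∨ S = Set.univ

def HasCoxeterNumber (R : RootSystemData V I) (h : ℕ) : Prop :=
  R.roots.card = h * Fintype.card I

def IsFundamental (R : RootSystemData V I) (fw : I → V) : Prop :=
  ∀ i j, ⟪fw i, R.simple j⟫_ℝ = if i = j then 1 else 0

noncomputable def refl [FiniteDimensional ℝ V] (R : RootSystemData V I) (i : I) :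
    V ≃ₗᵢ[ℝ] V :=
  Submodule.reflection (ℝ ∙ R.simple i)ᗮ

noncomputable def weylGroup [FiniteDimensional ℝ V] (R : RootSystemData V I) :
    Subgroup (V ≃ₗᵢ[ℝ] V) :=
  Subgroup.closure (Set.range R.refl)

noncomputable def inversions [FiniteDimensional ℝ V] (R : RootSystemData V I)
    (w : V ≃ₗᵢ[ℝ] V) : Finset V :=
  R.posRoots.filter fun α => w α ∈ R.negRoots

end RootSystemData

section Aux
variable {V : Type*} [NormedAddCommGroup V] [InnerProductSpace ℝ V]
  {I : Type*} [Fintype I] (R : RootSystemData V I)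

lemma aux_pos_mem {α : V} (hα : α ∈ R.posRoots) :
    α ∈ R.roots ∧ ∃ c : I → ℕ, α = ∑ j, (c j : ℝ) • R.simple j := by
  simpa [RootSystemData.posRoots] using hα

lemma aux_fw_coeff (fw : I → V) (hfw : R.IsFundamental fw) (c : I → ℕ) (j : I) :
    ⟪fw j, ∑ k, (c k : ℝ) • R.simple k⟫_ℝ = (c j : ℝ) := by
  rw [inner_sum]
  simp [real_inner_smul_right, hfw j, mul_ite]

lemma aux_expand (fw : I → V) (hfw : R.IsFundamental fw) {α : V} (hα : α ∈ R.roots) :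
    α = ∑ j, ⟪fw j, α⟫_ℝ • R.simple j := by
  rcases R.pos_or_neg α hα with ⟨c, hc⟩ | ⟨c, hc⟩
  · have key : ∀ j, ⟪fw j, α⟫_ℝ = (c j : ℝ) := fun j => by
      rw [hc]; exact aux_fw_coeff R fw hfw c j
    calc α = ∑ j, (c j : ℝ) • R.simple j := hc
    _ = ∑ j, ⟪fw j, α⟫_ℝ • R.simple j := by
        refine Finset.sum_congr rfl fun j _ => by rw [key j]
  · have key : ∀ j, ⟪fw j, α⟫_ℝ = -(c j : ℝ) := fun j => by
      rw [hc, inner_neg_right, aux_fw_coeff R fw hfw c j]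
    calc α = -(∑ j, (c j : ℝ) • R.simple j) := hc
    _ = ∑ j, (-(c j : ℝ)) • R.simple j := by rw [← Finset.sum_neg_distrib]; simp [neg_smul]
    _ = ∑ j, ⟪fw j, α⟫_ℝ • R.simple j := by
        refine Finset.sum_congr rfl fun j _ => by rw [key j]

lemma aux_phi_mem (hSL : R.IsSimplyLaced) (j : I) {α : V} (hα : α ∈ R.roots) :
    α - ⟪α, R.simple j⟫_ℝ • R.simple j ∈ R.roots := by
  have := R.reflect_mem _ (R.simple_mem j) α hα
  rw [hSL _ (R.simple_mem j)] at this
  have h2 : (2 : ℝ) * ⟪α, R.simple j⟫_ℝ / 2 = ⟪α, R.simple j⟫_ℝ := by ring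
  rwa [h2] at this

lemma aux_phi_invol (hSL : R.IsSimplyLaced) (j : I) (α : V) :
    (α - ⟪α, R.simple j⟫_ℝ • R.simple j) -
      ⟪α - ⟪α, R.simple j⟫_ℝ • R.simple j, R.simple j⟫_ℝ • R.simple j = α := by
  have hs : ⟪R.simple j, R.simple j⟫_ℝ = 2 := hSL _ (R.simple_mem j)
  rw [inner_sub_left, real_inner_smul_left, hs]
  module

noncomputable def vv (j : I) : V := ∑ α ∈ R.roots, ⟪R.simple j, α⟫_ℝ • α

lemma aux_two_vv (hSL : R.IsSimplyLaced) (j : I) :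
    (2 : ℝ) • vv R j = ⟪vv R j, R.simple j⟫_ℝ • R.simple j := by
  set s := R.simple j with hs
  have hss : ⟪s, s⟫_ℝ = 2 := hSL _ (R.simple_mem j)
  have h1 : ∑ α ∈ R.roots, ⟪s, α - ⟪α, s⟫_ℝ • s⟫_ℝ • (α - ⟪α, s⟫_ℝ • s)
      = ∑ α ∈ R.roots, ⟪s, α⟫_ℝ • α := by
    refine Finset.sum_nbij' (fun α => α - ⟪α, s⟫_ℝ • s) (fun α => α - ⟪α, s⟫_ℝ • s)
      (fun α hα => aux_phi_mem R hSL j hα) (fun α hα => aux_phi_mem R hSL j hα)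
      (fun α _ => aux_phi_invol R hSL j α) (fun α _ => aux_phi_invol R hSL j α)
      (fun α _ => rfl)
  have h2 : ∀ α : V, ⟪s, α - ⟪α, s⟫_ℝ • s⟫_ℝ • (α - ⟪α, s⟫_ℝ • s)
      = -(⟪s, α⟫_ℝ • α) + (⟪s, α⟫_ℝ * ⟪α, s⟫_ℝ) • s := by
    intro α
    rw [inner_sub_right, real_inner_smul_right, hss, real_inner_comm s α]
    module
  rw [Finset.sum_congr rfl (fun α _ => h2 α)] at h1
  rw [Finset.sum_add_distrib, Finset.sum_neg_distrib, ← Finset.sum_smul] at h1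
  have h3 : ⟪vv R j, s⟫_ℝ = ∑ α ∈ R.roots, ⟪s, α⟫_ℝ * ⟪α, s⟫_ℝ := by
    rw [vv, sum_inner]
    exact Finset.sum_congr rfl fun α _ => by rw [real_inner_smul_left]
  rw [h3]
  have : vv R j = ∑ α ∈ R.roots, ⟪s, α⟫_ℝ • α := rfl
  rw [this]
  linear_combination (norm := module) -h1

end Aux

section Aux2
variable {V : Type*} [NormedAddCommGroup V] [InnerProductSpace ℝ V]
  {I : Type*} [Fintype I] (R : RootSystemData V I)

lemma aux_vv_symm (j k : I) : ⟪vv R j, R.simple k⟫_ℝ = ⟪vv R k, R.simple j⟫_ℝ := by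
  rw [vv, vv, sum_inner, sum_inner]
  refine Finset.sum_congr rfl fun α _ => ?_
  rw [real_inner_smul_left, real_inner_smul_left, real_inner_comm α (R.simple k),
    real_inner_comm α (R.simple j)]
  ring

noncomputable def cc (j : I) : ℝ := ⟪vv R j, R.simple j⟫_ℝ / 2

lemma aux_vv_eq (hSL : R.IsSimplyLaced) (j : I) : vv R j = cc R j • R.simple j := by
  have h := aux_two_vv R hSL j
  calc vv R j = (2:ℝ)⁻¹ • ((2:ℝ) • vv R j) := by rw [smul_smul]; norm_num
  _ = (2:ℝ)⁻¹ • (⟪vv R j, R.simple j⟫_ℝ • R.simple j) := by rw [h]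
  _ = cc R j • R.simple j := by rw [smul_smul, cc]; congr 1; ring

lemma aux_cc_mul (hSL : R.IsSimplyLaced) (j k : I) :
    cc R j * ⟪R.simple j, R.simple k⟫_ℝ = cc R k * ⟪R.simple j, R.simple k⟫_ℝ := by
  have h1 := aux_vv_symm R j k
  rw [aux_vv_eq R hSL j, aux_vv_eq R hSL k, real_inner_smul_left, real_inner_smul_left,
    show ⟪R.simple k, R.simple j⟫_ℝ = ⟪R.simple j, R.simple k⟫_ℝ from real_inner_comm _ _] at h1
  exact h1

lemma aux_cc_const (hSL : R.IsSimplyLaced) (hirr : R.IsIrreducible) (i j : I) :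
    cc R j = cc R i := by
  set S : Set I := {k | cc R k = cc R i} with hSdef
  have hS : ∀ a ∈ S, ∀ b ∉ S, ⟪R.simple a, R.simple b⟫_ℝ = 0 := by
    intro a ha b hb
    by_contra hne
    have hm := aux_cc_mul R hSL a b
    have hab : cc R a = cc R b := mul_right_cancel₀ hne hm
    exact hb (by rw [hSdef, Set.mem_setOf_eq, ← hab]; exact ha)
  rcases hirr S hS with h | h
  · exfalso
    have : i ∈ S := by rw [hSdef]; exact rfl
    rw [h] at this
    exact this
  · have : j ∈ S := by rw [h]; trivial
    exact this

lemma aux_trace (hSL : R.IsSimplyLaced) (fw : I → V) (hfw : R.IsFundamental fw) :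
    ∑ j, ⟪fw j, vv R j⟫_ℝ = 2 * (R.roots.card : ℝ) := by
  have e1 : ∀ j, ⟪fw j, vv R j⟫_ℝ = ∑ α ∈ R.roots, ⟪R.simple j, α⟫_ℝ * ⟪fw j, α⟫_ℝ := by
    intro j; rw [vv, inner_sum]
    exact Finset.sum_congr rfl fun α _ => real_inner_smul_right _ _ _
  rw [Finset.sum_congr rfl (fun j _ => e1 j), Finset.sum_comm]
  have e2 : ∀ α ∈ R.roots, ∑ j, ⟪R.simple j, α⟫_ℝ * ⟪fw j, α⟫_ℝ = 2 := by
    intro α hα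
    have h2 : ⟪α, α⟫_ℝ = 2 := hSL α hα
    calc ∑ j, ⟪R.simple j, α⟫_ℝ * ⟪fw j, α⟫_ℝ
        = ⟪∑ j, ⟪fw j, α⟫_ℝ • R.simple j, α⟫_ℝ := by
          rw [sum_inner]
          exact (Finset.sum_congr rfl fun j _ => by rw [real_inner_smul_left]; ring).symm
      _ = ⟪α, α⟫_ℝ := by rw [← aux_expand R fw hfw hα]
      _ = 2 := h2
  rw [Finset.sum_congr rfl e2, Finset.sum_const, nsmul_eq_mul]
  ring

lemma aux_cc_val (hSL : R.IsSimplyLaced) (hirr : R.IsIrreducible)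
    (fw : I → V) (hfw : R.IsFundamental fw) (h : ℕ) (hcox : R.HasCoxeterNumber h) (i : I) :
    cc R i = 2 * (h : ℝ) := by
  have : Nonempty I := ⟨i⟩
  have hn : (Fintype.card I : ℝ) ≠ 0 := by
    simp [Fintype.card_ne_zero]
  have t := aux_trace R hSL fw hfw
  have e : ∀ j, ⟪fw j, vv R j⟫_ℝ = cc R i := by
    intro j
    rw [aux_vv_eq R hSL j, real_inner_smul_right, hfw j j, if_pos rfl, mul_one,
      aux_cc_const R hSL hirr i j]
  rw [Finset.sum_congr rfl (fun j _ => e j), Finset.sum_const, Finset.card_univ,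
    nsmul_eq_mul, hcox] at t
  push_cast at t
  have t2 : (Fintype.card I : ℝ) * cc R i = (Fintype.card I : ℝ) * (2 * h) := by linarith
  exact mul_left_cancel₀ hn t2

lemma aux_union : R.posRoots ∪ R.negRoots = R.roots := by
  ext α
  constructor
  · intro hm
    rcases Finset.mem_union.mp hm with hp | hn
    · exact (aux_pos_mem R hp).1
    · rcases Finset.mem_image.mp hn with ⟨β, hβ, rfl⟩
      exact R.neg_mem β (aux_pos_mem R hβ).1
  · intro hα
    rcases R.pos_or_neg α hα with ⟨c, hc⟩ | ⟨c, hc⟩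
    · exact Finset.mem_union_left _ (Finset.mem_filter.mpr ⟨hα, c, hc⟩)
    · refine Finset.mem_union_right _ (Finset.mem_image.mpr ⟨-α, ?_, neg_neg α⟩)
      exact Finset.mem_filter.mpr ⟨R.neg_mem α hα, c, by rw [hc, neg_neg]⟩

lemma aux_disj (fw : I → V) (hfw : R.IsFundamental fw) :
    Disjoint R.posRoots R.negRoots := by
  rw [Finset.disjoint_left]
  intro α hp hn
  rcases aux_pos_mem R hp with ⟨hmem, c, hc⟩
  rcases Finset.mem_image.mp hn with ⟨β, hβ, hβα⟩
  rcases aux_pos_mem R hβ with ⟨hmemβ, d, hd⟩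
  have hz : ∀ j, ⟪fw j, α⟫_ℝ = 0 := by
    intro j
    have h1 : ⟪fw j, α⟫_ℝ = (c j : ℝ) := by rw [hc]; exact aux_fw_coeff R fw hfw c j
    have h2 : ⟪fw j, α⟫_ℝ = -(d j : ℝ) := by
      rw [← hβα, inner_neg_right, hd, aux_fw_coeff R fw hfw d j]
    have hc0 : (0:ℝ) ≤ (c j : ℝ) := Nat.cast_nonneg _
    have hd0 : (0:ℝ) ≤ (d j : ℝ) := Nat.cast_nonneg _
    linarith
  have h0 : α = 0 := by
    rw [aux_expand R fw hfw hmem]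
    simp [hz]
  exact R.zero_notMem (h0 ▸ hmem)

lemma aux_sum_neg (f : V → ℝ) (hf : ∀ α, f (-α) = f α) :
    ∑ α ∈ R.negRoots, f α = ∑ α ∈ R.posRoots, f α := by
  rw [RootSystemData.negRoots, Finset.sum_image (fun a _ b _ hab => neg_injective hab)]
  exact Finset.sum_congr rfl fun α _ => hf α

end Aux2

/-- with `Δ̂(ω_i) = {α + mδ : α ∈ Δ⁻, 1 ≤ m ≤ −(ω_i,α)}` (affine roots modeled as
pairs `(α, m) ∈ V × ℤ` with `δ = (0,1)`, the pairing extended by `(δ, α_i) = 0`, i.e. pairing of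
`(α,n)` with `(β,m)` is `(α,β)`), and `γ_i = ∑_{β ∈ Δ̂(ω_i)} β`, one has `(γ_i, α_i) = −h`. -/


theorem stmt2 {V : Type*} [NormedAddCommGroup V] [InnerProductSpace ℝ V]
    {I : Type*} [Fintype I] (R : RootSystemData V I)
    (hSL : R.IsSimplyLaced) (hirr : R.IsIrreducible)
    (h : ℕ) (hcox : R.HasCoxeterNumber h)
    (fw : I → V) (hfw : R.IsFundamental fw) (i : I) :
    (fun x y : V × ℤ => ⟪x.1, y.1⟫_ℝ)
      (∑ α ∈ R.negRoots, ∑ m ∈ Finset.Icc 1 (⌊-(⟪fw i, α⟫_ℝ)⌋₊), ((α, (m : ℤ)) : V × ℤ))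
      ((R.simple i, 0) : V × ℤ)
    = -(h : ℝ) := by
  have step1 : (fun x y : V × ℤ => ⟪x.1, y.1⟫_ℝ)
      (∑ α ∈ R.negRoots, ∑ m ∈ Finset.Icc 1 (⌊-(⟪fw i, α⟫_ℝ)⌋₊), ((α, (m : ℤ)) : V × ℤ))
      ((R.simple i, 0) : V × ℤ)
      = ∑ α ∈ R.negRoots, ((⌊-(⟪fw i, α⟫_ℝ)⌋₊ : ℕ) : ℝ) * ⟪α, R.simple i⟫_ℝ := by
    simp only [Prod.fst_sum, sum_inner]
    refine Finset.sum_congr rfl fun α _ => ?_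
    simp [Finset.sum_const, Nat.card_Icc, ← Nat.cast_smul_eq_nsmul ℝ, real_inner_smul_left]
  rw [step1]
  set f : V → ℝ := fun α => ⟪fw i, α⟫_ℝ * ⟪α, R.simple i⟫_ℝ with hfdef
  have hN : ∀ α ∈ R.negRoots, ((⌊-(⟪fw i, α⟫_ℝ)⌋₊ : ℕ) : ℝ) = -⟪fw i, α⟫_ℝ := by
    intro α hn
    rcases Finset.mem_image.mp hn with ⟨β, hβ, rfl⟩
    rcases aux_pos_mem R hβ with ⟨hm, c, hc⟩
    have e : -⟪fw i, -β⟫_ℝ = (c i : ℝ) := by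
      rw [inner_neg_right, neg_neg, hc, aux_fw_coeff R fw hfw c i]
    rw [e, Nat.floor_natCast]
  have step2 : ∑ α ∈ R.negRoots, ((⌊-(⟪fw i, α⟫_ℝ)⌋₊ : ℕ) : ℝ) * ⟪α, R.simple i⟫_ℝ
      = -∑ α ∈ R.negRoots, f α := by
    rw [← Finset.sum_neg_distrib]
    refine Finset.sum_congr rfl fun α hα => ?_
    rw [hN α hα, hfdef]; ring
  rw [step2]
  have hfneg : ∀ α, f (-α) = f α := by
    intro α; rw [hfdef]; simp only [inner_neg_right, inner_neg_left]; ring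
  have hroots : ∑ α ∈ R.roots, f α = 2 * ∑ α ∈ R.negRoots, f α := by
    rw [← aux_union R, Finset.sum_union (aux_disj R fw hfw), aux_sum_neg R f hfneg]
    ring
  have hval : ∑ α ∈ R.roots, f α = 2 * (h : ℝ) := by
    have e1 : ∑ α ∈ R.roots, f α = ⟪fw i, vv R i⟫_ℝ := by
      rw [vv, inner_sum]
      refine Finset.sum_congr rfl fun α _ => ?_
      rw [real_inner_smul_right, hfdef, real_inner_comm α (R.simple i)]
      ring
    rw [e1, aux_vv_eq R hSL i, real_inner_smul_right, hfw i i, if_pos rfl, mul_one]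
    exact aux_cc_val R hSL hirr fw hfw h hcox i
  have : ∑ α ∈ R.negRoots, f α = (h : ℝ) := by linarith [hroots, hval]
  rw [this]
end

section
/- Let Δ be an irreducible simply-laced root system with simple roots {α_i}_{i∈I}, Cartan matrix (a_ij), Coxeter number h, and longest Weyl group element w₀. Define the involution i ↦ ī of I by w₀(α_i) = −α_ī. Suppose o : I → {±1} satisfies o_i·o_j = −1 whenever a_ij < 0. Then o_i·o_ī = (−1)^h for every i ∈ I. -/
open scoped InnerProductSpace Classical

namespace Stmt5Aux

set_option linter.unusedSectionVars false

open RootSystemData Finset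

variable {V : Type*} [NormedAddCommGroup V] [InnerProductSpace ℝ V] [FiniteDimensional ℝ V]
  {I : Type*} [Fintype I]

/-! ### Basis and coefficients -/

noncomputable def rb (R : RootSystemData V I) : Module.Basis I ℝ V :=
  Module.Basis.mk R.indep (le_of_eq R.span_eq.symm)

lemma rb_apply (R : RootSystemData V I) (i : I) : rb R i = R.simple i := Module.Basis.mk_apply _ _ _

/-- real coefficient of a vector in the simple-root basis -/
noncomputable def co (R : RootSystemData V I) (α : V) (i : I) : ℝ := (rb R).repr α i

lemma co_sum (R : RootSystemData V I) (c : I → ℝ) (j : I) :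
    co R (∑ i, c i • R.simple i) j = c j := by
  have : (∑ i, c i • R.simple i) = ∑ i, c i • (rb R) i := by
    simp only [rb_apply]
  rw [co, this, Module.Basis.repr_sum_self]

lemma eq_sum_co (R : RootSystemData V I) (α : V) : α = ∑ i, co R α i • R.simple i := by
  conv_lhs => rw [← Module.Basis.sum_repr (rb R) α]
  simp only [rb_apply]; rfl

lemma co_neg (R : RootSystemData V I) (α : V) (i : I) : co R (-α) i = - co R α i := by
  simp [co]

lemma co_sub (R : RootSystemData V I) (α β : V) (i : I) :
    co R (α - β) i = co R α i - co R β i := by simp [co]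

lemma co_smul (R : RootSystemData V I) (r : ℝ) (α : V) (i : I) :
    co R (r • α) i = r * co R α i := by simp [co]

lemma co_simple (R : RootSystemData V I) (i j : I) :
    co R (R.simple i) j = if i = j then 1 else 0 := by
  classical
  have h : R.simple i = ∑ k, (if i = k then (1:ℝ) else 0) • R.simple k := by
    simp only [ite_smul, one_smul, zero_smul, Finset.sum_ite_eq, Finset.mem_univ, if_true]
  rw [h, co_sum]

lemma co_eq_iff (R : RootSystemData V I) (α β : V) : α = β ↔ ∀ i, co R α i = co R β i := by
  constructor
  · rintro rfl _; rfl
  · intro h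
    rw [eq_sum_co R α, eq_sum_co R β]
    exact Finset.sum_congr rfl fun i _ => by rw [h i]

/-! ### Positive / negative roots -/

lemma mem_posRoots (R : RootSystemData V I) {α : V} :
    α ∈ R.posRoots ↔ α ∈ R.roots ∧ ∃ c : I → ℕ, α = ∑ i, (c i : ℝ) • R.simple i := by
  simp [posRoots, Finset.mem_filter]

lemma mem_negRoots (R : RootSystemData V I) {α : V} :
    α ∈ R.negRoots ↔ -α ∈ R.posRoots := by
  constructor
  · rw [negRoots, Finset.mem_image]
    rintro ⟨β, hβ, rfl⟩; simpa using hβ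
  · intro h
    rw [negRoots, Finset.mem_image]
    exact ⟨-α, h, by simp⟩

lemma posRoots_sub_roots (R : RootSystemData V I) {α : V} (h : α ∈ R.posRoots) : α ∈ R.roots :=
  ((mem_posRoots R).mp h).1

lemma negRoots_sub_roots (R : RootSystemData V I) {α : V} (h : α ∈ R.negRoots) : α ∈ R.roots := by
  rw [mem_negRoots] at h
  have := R.neg_mem _ (posRoots_sub_roots R h); simpa using this

lemma pos_co_nonneg (R : RootSystemData V I) {α : V} (h : α ∈ R.posRoots) (i : I) :
    0 ≤ co R α i := by
  obtain ⟨-, c, rfl⟩ := (mem_posRoots R).mp h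
  rw [co_sum]; positivity

/-- coefficients of roots are integers -/
lemma pos_co_int (R : RootSystemData V I) {α : V} (h : α ∈ R.posRoots) (i : I) :
    ∃ n : ℕ, co R α i = n := by
  obtain ⟨-, c, rfl⟩ := (mem_posRoots R).mp h
  rw [co_sum]; exact ⟨c i, rfl⟩

lemma root_pos_or_neg (R : RootSystemData V I) {α : V} (h : α ∈ R.roots) :
    α ∈ R.posRoots ∨ α ∈ R.negRoots := by
  rcases R.pos_or_neg α h with ⟨c, hc⟩ | ⟨c, hc⟩
  · exact Or.inl ((mem_posRoots R).mpr ⟨h, c, hc⟩)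
  · right
    rw [mem_negRoots, mem_posRoots]
    have hneg : -α ∈ R.roots := R.neg_mem _ h
    exact ⟨hneg, c, by rw [hc]; simp⟩

lemma root_ne_zero (R : RootSystemData V I) {α : V} (h : α ∈ R.roots) : α ≠ 0 := by
  rintro rfl; exact R.zero_notMem h

lemma not_pos_and_neg (R : RootSystemData V I) {α : V} (h : α ∈ R.roots) :
    ¬(α ∈ R.posRoots ∧ α ∈ R.negRoots) := by
  rintro ⟨hp, hn⟩
  rw [mem_negRoots] at hn
  have h1 : ∀ i, 0 ≤ co R α i := pos_co_nonneg R hp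
  have h2 : ∀ i, co R α i ≤ 0 := by
    intro i; have := pos_co_nonneg R hn i; rw [co_neg] at this; linarith
  have : α = 0 := by
    rw [co_eq_iff R α 0]
    intro i; simp [co]
    have := h1 i; have := h2 i
    have : co R α i = 0 := le_antisymm (h2 i) (h1 i)
    simpa [co] using this
  exact root_ne_zero R h this

/-- a positive root with all coefficients ≥ as another vector's... basic: mem posRoots from
nonneg integer coefficients criterion -/
lemma pos_of_root_co_nonneg (R : RootSystemData V I) {α : V} (h : α ∈ R.roots)
    (hc : ∀ i, 0 ≤ co R α i) : α ∈ R.posRoots := by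
  rcases root_pos_or_neg R h with hp | hn
  · exact hp
  · rw [mem_negRoots] at hn
    exfalso
    have h2 : ∀ i, co R α i = 0 := by
      intro i
      have := pos_co_nonneg R hn i; rw [co_neg] at this
      linarith [hc i]
    exact root_ne_zero R h (by rw [co_eq_iff R α 0]; intro i; simpa [co] using h2 i)

/-! ### Pairing arithmetic -/

variable {R : RootSystemData V I}

lemma root_norm (hSL : R.IsSimplyLaced) {α : V} (h : α ∈ R.roots) : ⟪α, α⟫_ℝ = 2 := hSL α h

lemma pair_int (hSL : R.IsSimplyLaced) {α β : V} (hα : α ∈ R.roots) (hβ : β ∈ R.roots) :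
    ∃ n : ℤ, ⟪α, β⟫_ℝ = (n : ℝ) := by
  obtain ⟨n, hn⟩ := R.pairing_int β hβ α hα
  rw [root_norm hSL hβ] at hn
  exact ⟨n, by rw [← hn]; ring⟩

lemma pair_sq_le (hSL : R.IsSimplyLaced) {α β : V} (hα : α ∈ R.roots) (hβ : β ∈ R.roots) :
    -2 ≤ ⟪α, β⟫_ℝ ∧ ⟪α, β⟫_ℝ ≤ 2 := by
  have h1 : (0:ℝ) ≤ ⟪α - β, α - β⟫_ℝ := real_inner_self_nonneg
  have h2 : (0:ℝ) ≤ ⟪α + β, α + β⟫_ℝ := real_inner_self_nonneg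
  rw [real_inner_sub_sub_self, root_norm hSL hα, root_norm hSL hβ] at h1
  rw [real_inner_add_add_self, root_norm hSL hα, root_norm hSL hβ] at h2
  constructor <;> linarith

lemma pair_eq_two (hSL : R.IsSimplyLaced) {α β : V} (hα : α ∈ R.roots) (hβ : β ∈ R.roots)
    (h : ⟪α, β⟫_ℝ = 2) : α = β := by
  have h1 : ⟪α - β, α - β⟫_ℝ = 0 := by
    rw [real_inner_sub_sub_self, root_norm hSL hα, root_norm hSL hβ, h]; ring
  exact sub_eq_zero.mp (inner_self_eq_zero.mp h1)


lemma pair_eq_neg_two (hSL : R.IsSimplyLaced) {α β : V} (hα : α ∈ R.roots) (hβ : β ∈ R.roots)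
    (h : ⟪α, β⟫_ℝ = -2) : α = -β := by
  have h1 : ⟪α + β, α + β⟫_ℝ = 0 := by
    rw [real_inner_add_add_self, root_norm hSL hα, root_norm hSL hβ, h]; ring
  have := inner_self_eq_zero.mp h1
  have : α = -β := by linear_combination (norm := module) this
  exact this

/-- pairing of two distinct non-opposite roots is -1, 0 or 1 -/
lemma pair_cases (hSL : R.IsSimplyLaced) {α β : V} (hα : α ∈ R.roots) (hβ : β ∈ R.roots)
    (h1 : α ≠ β) (h2 : α ≠ -β) : ⟪α, β⟫_ℝ = -1 ∨ ⟪α, β⟫_ℝ = 0 ∨ ⟪α, β⟫_ℝ = 1 := by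
  obtain ⟨n, hn⟩ := pair_int hSL hα hβ
  obtain ⟨hb1, hb2⟩ := pair_sq_le hSL hα hβ
  rw [hn] at hb1 hb2 ⊢
  have hn2 : n ≠ 2 := by
    rintro rfl; exact h1 (pair_eq_two hSL hα hβ (by rw [hn]; norm_num))
  have hnm2 : n ≠ -2 := by
    rintro rfl; exact h2 (pair_eq_neg_two hSL hα hβ (by rw [hn]; norm_num))
  have hA : -2 ≤ n := by exact_mod_cast hb1
  have hB : n ≤ 2 := by exact_mod_cast hb2
  interval_cases n <;> simp_all

/-! ### Reflection as a formula -/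

/-- reflection in a norm-two vector, as a bare function -/
noncomputable def sref (γ x : V) : V := x - ⟪x, γ⟫_ℝ • γ

lemma refl_eq_sref (hSL : R.IsSimplyLaced) (i : I) (x : V) :
    R.refl i x = sref (R.simple i) x := by
  have h : ⟪R.simple i, R.simple i⟫_ℝ = 2 := root_norm hSL (R.simple_mem i)
  set γ := R.simple i
  show Submodule.reflection (ℝ ∙ γ)ᗮ x = x - ⟪x, γ⟫_ℝ • γ
  have hproj : ((ℝ ∙ γ).starProjection x : V) = (⟪γ, x⟫_ℝ / ((‖γ‖^2 : ℝ))) • γ :=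
    Submodule.starProjection_singleton ℝ x
  have hx : x = ((ℝ ∙ γ).starProjection x : V) + ((ℝ ∙ γ)ᗮ.starProjection x : V) := by
    rw [Submodule.starProjection_add_starProjection_orthogonal (K := ℝ ∙ γ) x]
  have hnorm : (‖γ‖^2 : ℝ) = 2 := by rw [← real_inner_self_eq_norm_sq]; exact h
  rw [Submodule.reflection_apply]
  have h2 : ((ℝ ∙ γ)ᗮ.starProjection x : V) = x - (⟪γ, x⟫_ℝ / 2) • γ := by
    have hx' := hx
    rw [hproj, hnorm] at hx'
    exact eq_sub_of_add_eq' hx'.symm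
  rw [h2, real_inner_comm x γ]
  match_scalars <;> ring

lemma sref_inner (γ : V) (hγ : ⟪γ,γ⟫_ℝ = 2) (x y : V) :
    ⟪sref γ x, sref γ y⟫_ℝ = ⟪x, y⟫_ℝ := by
  simp only [sref, inner_sub_left, inner_sub_right, real_inner_smul_left,
    real_inner_smul_right, hγ]
  rw [real_inner_comm γ y]
  ring

lemma sref_sref (γ : V) (hγ : ⟪γ,γ⟫_ℝ = 2) (x : V) : sref γ (sref γ x) = x := by
  simp only [sref, inner_sub_left, real_inner_smul_left, hγ]
  match_scalars <;> ring

lemma sref_self (γ : V) (hγ : ⟪γ,γ⟫_ℝ = 2) : sref γ γ = -γ := by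
  simp only [sref, hγ]
  match_scalars <;> ring

lemma sref_root (hSL : R.IsSimplyLaced) {γ : V} (hγ : γ ∈ R.roots) {β : V} (hβ : β ∈ R.roots) :
    sref γ β ∈ R.roots := by
  have := R.reflect_mem γ hγ β hβ
  rw [root_norm hSL hγ] at this
  have h2 : 2 * ⟪β, γ⟫_ℝ / 2 = ⟪β, γ⟫_ℝ := by ring
  rw [h2] at this
  exact this

lemma sref_apply (γ x : V) : sref γ x = x - ⟪x, γ⟫_ℝ • γ := rfl

lemma sref_orth (γ x : V) (h : ⟪x, γ⟫_ℝ = 0) : sref γ x = x := by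
  rw [sref_apply, h]; simp

lemma sref_linear (γ : V) (a b : ℝ) (x y : V) :
    sref γ (a • x + b • y) = a • sref γ x + b • sref γ y := by
  simp only [sref, inner_add_left, real_inner_smul_left]
  match_scalars <;> ring

lemma sref_neg (γ x : V) : sref γ (-x) = - sref γ x := by
  simp only [sref, inner_neg_left]; match_scalars <;> ring

lemma sref_sub (γ : V) (x y : V) : sref γ (x - y) = sref γ x - sref γ y := by
  simp only [sref, inner_sub_left]; match_scalars <;> ring

/-- commuting reflections for orthogonal vectors -/
lemma sref_comm (γ δ : V) (h : ⟪γ, δ⟫_ℝ = 0) (x : V) :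
    sref γ (sref δ x) = sref δ (sref γ x) := by
  have h' : ⟪δ, γ⟫_ℝ = 0 := by rw [real_inner_comm]; exact h
  simp only [sref, inner_sub_left, real_inner_smul_left, h, h']
  match_scalars <;> ring

end Stmt5Aux

-- continuation: simple root combinatorics + words (to be appended to secA content)
namespace Stmt5Aux

set_option linter.unusedSectionVars false
set_option maxHeartbeats 1000000

open RootSystemData Finset

variable {V : Type*} [NormedAddCommGroup V] [InnerProductSpace ℝ V] [FiniteDimensional ℝ V]
  {I : Type*} [Fintype I]

variable {R : RootSystemData V I}

lemma simple_mem_pos (R : RootSystemData V I) (i : I) : R.simple i ∈ R.posRoots := by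
  rw [mem_posRoots]
  refine ⟨R.simple_mem i, fun k => if i = k then 1 else 0, ?_⟩
  simp only [Nat.cast_ite, Nat.cast_one, Nat.cast_zero, ite_smul, one_smul, zero_smul,
    Finset.sum_ite_eq, Finset.mem_univ, if_true]

lemma simple_injective (R : RootSystemData V I) : Function.Injective R.simple := by
  intro i j hij
  by_contra hne
  have h1 : co R (R.simple i) i = 1 := by rw [co_simple]; simp
  have h2 : co R (R.simple j) i = 0 := by
    rw [co_simple, if_neg (fun h : j = i => hne h.symm)]
  rw [hij, h2] at h1; norm_num at h1

lemma simple_ne_neg (R : RootSystemData V I) (i j : I) : R.simple i ≠ -R.simple j := by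
  intro hij
  have h1 : co R (R.simple i) i = 1 := by rw [co_simple]; simp
  have h2 : co R (-R.simple j) i = - co R (R.simple j) i := co_neg R _ i
  rw [hij, h2, co_simple] at h1
  by_cases hji : j = i
  · rw [if_pos hji] at h1; norm_num at h1
  · rw [if_neg hji] at h1; norm_num at h1

/-- pairing between distinct simple roots is 0 or -1 -/
lemma simple_pair (hSL : R.IsSimplyLaced) {i j : I} (hne : i ≠ j) :
    ⟪R.simple i, R.simple j⟫_ℝ = 0 ∨ ⟪R.simple i, R.simple j⟫_ℝ = -1 := by
  have hi := R.simple_mem i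
  have hj := R.simple_mem j
  have hne1 : R.simple i ≠ R.simple j := fun h => hne (simple_injective R h)
  have hne2 : R.simple i ≠ -R.simple j := simple_ne_neg R i j
  rcases pair_cases hSL hi hj hne1 hne2 with h | h | h
  · exact Or.inr h
  · exact Or.inl h
  · exfalso
    have hroot : R.simple i - R.simple j ∈ R.roots := by
      have := sref_root hSL hj hi
      rwa [sref_apply, h, one_smul] at this
    rcases root_pos_or_neg R hroot with hp | hn
    · have := pos_co_nonneg R hp j
      rw [co_sub, co_simple, co_simple] at this
      simp [hne, hne.symm] at this
      linarith
    · rw [mem_negRoots] at hn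
      have := pos_co_nonneg R hn i
      rw [co_neg, co_sub, co_simple, co_simple] at this
      simp [hne, hne.symm] at this
      linarith

/-- a positive root supported on one coordinate is that simple root -/
lemma eq_simple_of_support (hSL : R.IsSimplyLaced) {α : V} (hα : α ∈ R.posRoots) (i : I)
    (hsupp : ∀ k, k ≠ i → co R α k = 0) : α = R.simple i := by
  have hform : α = co R α i • R.simple i := by
    conv_lhs => rw [eq_sum_co R α]
    rw [Finset.sum_eq_single i]
    · intro k _ hk; rw [hsupp k hk, zero_smul]
    · intro h; exact absurd (Finset.mem_univ i) h
  have hnorm : ⟪α, α⟫_ℝ = co R α i ^ 2 * 2 := by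
    conv_lhs => rw [hform]
    rw [real_inner_smul_left, real_inner_smul_right, root_norm hSL (R.simple_mem i)]
    ring
  rw [root_norm hSL (posRoots_sub_roots R hα)] at hnorm
  have hsq : co R α i ^ 2 = 1 := by linarith
  have hpos : 0 ≤ co R α i := pos_co_nonneg R hα i
  have : co R α i = 1 := by nlinarith
  rw [hform, this, one_smul]

/-- simple reflection permutes the positive roots other than its own simple root -/
lemma sref_pos (hSL : R.IsSimplyLaced) {α : V} (hα : α ∈ R.posRoots) (i : I)
    (hne : α ≠ R.simple i) : sref (R.simple i) α ∈ R.posRoots := by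
  have hroot : sref (R.simple i) α ∈ R.roots :=
    sref_root hSL (R.simple_mem i) (posRoots_sub_roots R hα)
  have hco : ∀ k, k ≠ i → co R (sref (R.simple i) α) k = co R α k := by
    intro k hk
    rw [sref_apply, co_sub, co_smul, co_simple, if_neg (fun h : i = k => hk h.symm)]
    ring
  obtain ⟨k, hki, hkpos⟩ : ∃ k, k ≠ i ∧ 0 < co R α k := by
    by_contra hcon
    push_neg at hcon
    refine hne (eq_simple_of_support hSL hα i fun k hk => ?_)
    exact le_antisymm (hcon k hk) (pos_co_nonneg R hα k)
  rcases root_pos_or_neg R hroot with hp | hn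
  · exact hp
  · exfalso
    rw [mem_negRoots] at hn
    have := pos_co_nonneg R hn k
    rw [co_neg, hco k hki] at this
    linarith

lemma sref_pos_ne (hSL : R.IsSimplyLaced) {α : V} (hα : α ∈ R.posRoots) (i : I)
    (hne : α ≠ R.simple i) : sref (R.simple i) α ≠ R.simple i := by
  intro hcon
  have h2 : ⟪R.simple i, R.simple i⟫_ℝ = 2 := root_norm hSL (R.simple_mem i)
  have : sref (R.simple i) (sref (R.simple i) α) = sref (R.simple i) (R.simple i) := by rw [hcon]
  rw [sref_sref _ h2, sref_self _ h2] at this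
  have hpos := pos_co_nonneg R hα
  rw [this] at hpos
  -- α = - simple i: contradiction since -simple i has a negative coefficient
  have := hpos i
  rw [co_neg, co_simple] at this
  norm_num at this

/-- if a simple reflection sends a positive root to a negative root, it is that simple root -/
lemma sref_neg_imp (hSL : R.IsSimplyLaced) {α : V} (hα : α ∈ R.posRoots) (i : I)
    (hneg : sref (R.simple i) α ∈ R.negRoots) : α = R.simple i := by
  by_contra hne
  have hpos := sref_pos hSL hα i hne
  exact not_pos_and_neg R (posRoots_sub_roots R hpos) ⟨hpos, hneg⟩

/-! ### Words in the Weyl group -/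

noncomputable def pw (R : RootSystemData V I) (l : List I) : V ≃ₗᵢ[ℝ] V :=
  (l.map R.refl).prod

lemma pw_nil (R : RootSystemData V I) : pw R [] = 1 := rfl

lemma pw_cons (R : RootSystemData V I) (i : I) (l : List I) :
    pw R (i :: l) = R.refl i * pw R l := by
  simp [pw]

lemma pw_append (R : RootSystemData V I) (l l' : List I) :
    pw R (l ++ l') = pw R l * pw R l' := by
  simp [pw]

lemma pw_mem (R : RootSystemData V I) (l : List I) : pw R l ∈ R.weylGroup := by
  induction l with
  | nil => exact Subgroup.one_mem _
  | cons i t ih =>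
    rw [pw_cons]
    exact Subgroup.mul_mem _ (Subgroup.subset_closure ⟨i, rfl⟩) ih

lemma mul_apply (u v : V ≃ₗᵢ[ℝ] V) (x : V) : (u * v) x = u (v x) := rfl

lemma refl_invol (hSL : R.IsSimplyLaced) (i : I) : R.refl i * R.refl i = 1 := by
  ext x
  rw [mul_apply, refl_eq_sref hSL, refl_eq_sref hSL,
    sref_sref _ (root_norm hSL (R.simple_mem i))]
  rfl

lemma refl_inv (hSL : R.IsSimplyLaced) (i : I) : (R.refl i)⁻¹ = R.refl i :=
  inv_eq_of_mul_eq_one_right (refl_invol hSL i)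

lemma pw_reverse (hSL : R.IsSimplyLaced) (l : List I) : pw R l.reverse = (pw R l)⁻¹ := by
  induction l with
  | nil => simp [pw_nil]
  | cons i t ih =>
    have h1 : pw R [i] = R.refl i := by simp [pw]
    rw [pw_cons, List.reverse_cons, pw_append, ih, mul_inv_rev, refl_inv hSL, h1]

lemma exists_word (R : RootSystemData V I) (hSL : R.IsSimplyLaced) {u : V ≃ₗᵢ[ℝ] V}
    (hu : u ∈ R.weylGroup) : ∃ l : List I, u = pw R l := by
  induction hu using Subgroup.closure_induction with
  | mem w hw => obtain ⟨i, rfl⟩ := hw; exact ⟨[i], by simp [pw]⟩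
  | one => exact ⟨[], rfl⟩
  | mul a b _ _ ha hb =>
    obtain ⟨la, rfl⟩ := ha; obtain ⟨lb, rfl⟩ := hb
    exact ⟨la ++ lb, (pw_append R la lb).symm⟩
  | inv a _ ha =>
    obtain ⟨la, rfl⟩ := ha
    exact ⟨la.reverse, (pw_reverse hSL la).symm⟩

lemma isom_conj_sref (u : V ≃ₗᵢ[ℝ] V) (γ x : V) : u (sref γ x) = sref (u γ) (u x) := by
  rw [sref_apply, sref_apply, map_sub, map_smul, LinearIsometryEquiv.inner_map_map]

lemma pw_root (hSL : R.IsSimplyLaced) (l : List I) {α : V} (hα : α ∈ R.roots) :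
    pw R l α ∈ R.roots := by
  induction l with
  | nil => simpa [pw_nil] using hα
  | cons i t ih =>
    rw [pw_cons, mul_apply, refl_eq_sref hSL]
    exact sref_root hSL (R.simple_mem i) ih

lemma weyl_root (hSL : R.IsSimplyLaced) {u : V ≃ₗᵢ[ℝ] V} (hu : u ∈ R.weylGroup) {α : V}
    (hα : α ∈ R.roots) : u α ∈ R.roots := by
  obtain ⟨l, rfl⟩ := exists_word R hSL hu
  exact pw_root hSL l hα

end Stmt5Aux

namespace Stmt5Aux

set_option linter.unusedSectionVars false
set_option maxHeartbeats 1000000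

open RootSystemData Finset

variable {V : Type*} [NormedAddCommGroup V] [InnerProductSpace ℝ V] [FiniteDimensional ℝ V]
  {I : Type*} [Fintype I]

variable {R : RootSystemData V I}

lemma neg_mem_neg (R : RootSystemData V I) {α : V} (h : α ∈ R.posRoots) : -α ∈ R.negRoots := by
  rw [mem_negRoots, neg_neg]; exact h

lemma one_apply (x : V) : (1 : V ≃ₗᵢ[ℝ] V) x = x := rfl

/-- right exchange property -/
lemma exchange_right (hSL : R.IsSimplyLaced) :
    ∀ (l : List I) (i : I), (pw R l) (R.simple i) ∈ R.negRoots →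
    ∃ l' : List I, l'.length + 1 = l.length ∧ pw R l' = pw R l * R.refl i := by
  intro l
  induction l with
  | nil =>
    intro i h
    rw [pw_nil, one_apply] at h
    exact absurd ⟨simple_mem_pos R i, h⟩ (not_pos_and_neg R (R.simple_mem i))
  | cons j t ih =>
    intro i h
    rw [pw_cons, mul_apply] at h
    by_cases hc : (pw R t) (R.simple i) ∈ R.negRoots
    · obtain ⟨t', ht1, ht2⟩ := ih i hc
      refine ⟨j :: t', by simp [← ht1], ?_⟩
      rw [pw_cons, ht2, pw_cons, mul_assoc]
    · have hroot : (pw R t) (R.simple i) ∈ R.roots := pw_root hSL t (R.simple_mem i)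
      have hpos : (pw R t) (R.simple i) ∈ R.posRoots := by
        rcases root_pos_or_neg R hroot with h' | h'
        · exact h'
        · exact absurd h' hc
      have hneg : sref (R.simple j) ((pw R t) (R.simple i)) ∈ R.negRoots := by
        rw [← refl_eq_sref hSL]; exact h
      have heq : (pw R t) (R.simple i) = R.simple j := sref_neg_imp hSL hpos j hneg
      have hconj : R.refl j * pw R t = pw R t * R.refl i := by
        ext x
        rw [mul_apply, mul_apply, refl_eq_sref hSL, refl_eq_sref hSL, isom_conj_sref, heq]
      refine ⟨t, rfl, ?_⟩
      rw [pw_cons, mul_assoc, ← hconj, ← mul_assoc, refl_invol hSL, one_mul]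

/-- left exchange property -/
lemma exchange_left (hSL : R.IsSimplyLaced) (l : List I) (i : I)
    (h : ((pw R l)⁻¹) (R.simple i) ∈ R.negRoots) :
    ∃ l' : List I, l'.length + 1 = l.length ∧ pw R l' = R.refl i * pw R l := by
  have h' : (pw R l.reverse) (R.simple i) ∈ R.negRoots := by rwa [pw_reverse hSL]
  obtain ⟨l'', h1, h2⟩ := exchange_right hSL l.reverse i h'
  refine ⟨l''.reverse, by simpa using h1, ?_⟩
  rw [pw_reverse hSL, h2, pw_reverse hSL, mul_inv_rev, inv_inv, refl_inv hSL]

/-- a word acting positively on all simple roots is the identity -/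
lemma pw_eq_one (hSL : R.IsSimplyLaced) :
    ∀ (n : ℕ) (l : List I), l.length ≤ n →
    (∀ i, (pw R l) (R.simple i) ∈ R.posRoots) → pw R l = 1 := by
  intro n
  induction n with
  | zero =>
    intro l hl _
    have : l = [] := List.eq_nil_of_length_eq_zero (Nat.le_zero.mp hl)
    rw [this, pw_nil]
  | succ n ih =>
    intro l hl hpos
    rcases l.eq_nil_or_concat with rfl | ⟨t, i, hconcat⟩
    · rw [pw_nil]
    · have hl' : l = t ++ [i] := by simpa [List.concat_eq_append] using hconcat
      subst hl'
      have hpwi : pw R [i] = R.refl i := by simp [pw]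
      have hu : pw R (t ++ [i]) = pw R t * R.refl i := by rw [pw_append, hpwi]
      have hut : pw R t = pw R (t ++ [i]) * R.refl i := by
        rw [hu, mul_assoc, refl_invol hSL, mul_one]
      have hti : (pw R t) (R.simple i) ∈ R.negRoots := by
        rw [hut, mul_apply, refl_eq_sref hSL, sref_self _ (root_norm hSL (R.simple_mem i)),
          map_neg]
        exact neg_mem_neg R (hpos i)
      obtain ⟨t', ht1, ht2⟩ := exchange_right hSL t i hti
      have heq : pw R t' = pw R (t ++ [i]) := by rw [ht2, hu]
      have hlen : t'.length ≤ n := by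
        have h3 : (t ++ [i]).length = t.length + 1 := by simp
        omega
      rw [← heq]
      exact ih t' hlen (fun k => by rw [heq]; exact hpos k)

lemma weyl_eq_one (hSL : R.IsSimplyLaced) {u : V ≃ₗᵢ[ℝ] V} (hu : u ∈ R.weylGroup)
    (h : ∀ i, u (R.simple i) ∈ R.posRoots) : u = 1 := by
  obtain ⟨l, rfl⟩ := exists_word R hSL hu
  exact pw_eq_one hSL l.length l le_rfl h

/-- Carter-type lemma: a nontrivial involution in the Weyl group negates some root -/
lemma negated_root_exists_aux (hSL : R.IsSimplyLaced) :
    ∀ (n : ℕ) (l : List I), l.length ≤ n →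
    ∀ u : V ≃ₗᵢ[ℝ] V, u = pw R l → u * u = 1 → u ≠ 1 →
    ∃ δ ∈ R.roots, u δ = -δ := by
  intro n
  induction n with
  | zero =>
    intro l hl u hu _ hne
    exfalso
    have : l = [] := List.eq_nil_of_length_eq_zero (Nat.le_zero.mp hl)
    rw [this, pw_nil] at hu
    exact hne hu
  | succ n ih =>
    intro l hl u hu hinv hne
    have huu : ∀ x, u (u x) = x := fun x => by rw [← mul_apply, hinv, one_apply]
    obtain ⟨i, hi⟩ : ∃ i, (u (R.simple i)) ∈ R.negRoots := by
      by_contra hcon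
      push_neg at hcon
      refine hne (weyl_eq_one hSL (hu ▸ pw_mem R l) fun i => ?_)
      have hroot : u (R.simple i) ∈ R.roots := by
        rw [hu]; exact pw_root hSL l (R.simple_mem i)
      rcases root_pos_or_neg R hroot with h' | h'
      · exact h'
      · exact absurd h' (hcon i)
    have hβpos : -(u (R.simple i)) ∈ R.posRoots := (mem_negRoots R).mp hi
    by_cases hcase : -(u (R.simple i)) = R.simple i
    · exact ⟨R.simple i, R.simple_mem i, neg_eq_iff_eq_neg.mp hcase⟩
    · -- build the shorter conjugated involution
      have hri : ∀ x, R.refl i (R.refl i x) = x := fun x => by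
        rw [← mul_apply, refl_invol hSL, one_apply]
      have hinv_u : u⁻¹ = u := inv_eq_of_mul_eq_one_right hinv
      -- left exchange
      have hle : ((pw R l)⁻¹) (R.simple i) ∈ R.negRoots := by
        rw [← hu, hinv_u]; exact hi
      obtain ⟨l₁, hl₁len, hl₁⟩ := exchange_left hSL l i hle
      -- right exchange on l₁
      have hl₁neg : (pw R l₁) (R.simple i) ∈ R.negRoots := by
        rw [hl₁, mul_apply, ← hu, refl_eq_sref hSL]
        have : u (R.simple i) = -(-(u (R.simple i))) := by simp
        rw [this, sref_neg]
        apply neg_mem_neg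
        exact sref_pos hSL hβpos i hcase
      obtain ⟨l₂, hl₂len, hl₂⟩ := exchange_right hSL l₁ i hl₁neg
      have hu' : pw R l₂ = R.refl i * u * R.refl i := by rw [hl₂, hl₁, hu]
      set u' : V ≃ₗᵢ[ℝ] V := R.refl i * u * R.refl i with hu'def
      have hu'app : ∀ x, u' x = R.refl i (u (R.refl i x)) := fun x => rfl
      have hu'inv : u' * u' = 1 := by
        ext x
        rw [mul_apply, one_apply, hu'app, hu'app, hri, huu, hri]
      have hu'ne : u' ≠ 1 := by
        intro hcon
        apply hne
        have : R.refl i * u' * R.refl i = u := by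
          rw [hu'def, ← mul_assoc, ← mul_assoc, refl_invol hSL, one_mul, mul_assoc,
            refl_invol hSL, mul_one]
        rw [← this, hcon, mul_one, refl_invol hSL]
      have hlen2 : l₂.length ≤ n := by omega
      obtain ⟨δ, hδ, hδneg⟩ := ih l₂ hlen2 u' (hu'def.trans hu'.symm) hu'inv hu'ne
      refine ⟨R.refl i δ, ?_, ?_⟩
      · rw [refl_eq_sref hSL]; exact sref_root hSL (R.simple_mem i) hδ
      · have : u' δ = -δ := hδneg
        rw [hu'app] at this
        have h2 := congrArg (R.refl i) this
        rw [hri, map_neg] at h2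
        exact h2

lemma negated_root_exists (hSL : R.IsSimplyLaced) {u : V ≃ₗᵢ[ℝ] V} (hu : u ∈ R.weylGroup)
    (hinv : u * u = 1) (hne : u ≠ 1) : ∃ δ ∈ R.roots, u δ = -δ := by
  obtain ⟨l, rfl⟩ := exists_word R hSL hu
  exact negated_root_exists_aux hSL l.length l le_rfl _ rfl hinv hne

/-! ### Reflections in arbitrary roots lie in the Weyl group -/

lemma sum_co_nat (R : RootSystemData V I) {α : V} (h : α ∈ R.posRoots) :
    ∃ n : ℕ, (∑ i, co R α i) = (n : ℝ) := by
  obtain ⟨-, c, rfl⟩ := (mem_posRoots R).mp h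
  refine ⟨∑ i, c i, ?_⟩
  rw [Nat.cast_sum]
  exact Finset.sum_congr rfl fun i _ => by rw [co_sum]

lemma pos_descent (hSL : R.IsSimplyLaced) {α : V} (h : α ∈ R.posRoots) :
    ∃ k, 0 < co R α k ∧ 0 < ⟪α, R.simple k⟫_ℝ := by
  by_contra hcon
  push_neg at hcon
  have h2 : ⟪α, α⟫_ℝ = ∑ k, co R α k * ⟪α, R.simple k⟫_ℝ := by
    nth_rewrite 2 [eq_sum_co R α]
    rw [inner_sum]
    exact Finset.sum_congr rfl fun k _ => by rw [real_inner_smul_right, mul_comm]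
  have h3 : ∀ k, co R α k * ⟪α, R.simple k⟫_ℝ ≤ 0 := by
    intro k
    rcases lt_or_eq_of_le (pos_co_nonneg R h k) with hk | hk
    · exact mul_nonpos_of_nonneg_of_nonpos (le_of_lt hk) (hcon k hk)
    · rw [← hk]; simp
  have h4 : ⟪α, α⟫_ℝ ≤ 0 := h2 ▸ Finset.sum_nonpos fun k _ => h3 k
  rw [root_norm hSL (posRoots_sub_roots R h)] at h4
  linarith

lemma pos_ne_neg_simple (R : RootSystemData V I) {α : V} (h : α ∈ R.posRoots) (k : I) :
    α ≠ -R.simple k := by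
  intro hcon
  have := pos_co_nonneg R h k
  rw [hcon, co_neg, co_simple, if_pos rfl] at this
  linarith

/-- reflection in any positive root is realized by the Weyl group -/
lemma sref_mem_weyl_pos (hSL : R.IsSimplyLaced) :
    ∀ (n : ℕ) {γ : V}, γ ∈ R.posRoots → (∑ i, co R γ i) = (n : ℝ) →
    ∃ u ∈ R.weylGroup, ∀ x, u x = sref γ x := by
  intro n
  induction n using Nat.strong_induction_on with
  | _ n ih =>
    intro γ hγ hn
    obtain ⟨k, hk1, hk2⟩ := pos_descent hSL hγ
    by_cases hcase : γ = R.simple k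
    · exact ⟨R.refl k, Subgroup.subset_closure ⟨k, rfl⟩, fun x => by
        rw [refl_eq_sref hSL, hcase]⟩
    · have hpair : ⟪γ, R.simple k⟫_ℝ = 1 := by
        rcases pair_cases hSL (posRoots_sub_roots R hγ) (R.simple_mem k) hcase
          (pos_ne_neg_simple R hγ k) with h' | h' | h' <;> [linarith; linarith; exact h']
      have hγ' : sref (R.simple k) γ ∈ R.posRoots := sref_pos hSL hγ k hcase
      have hγ'eq : sref (R.simple k) γ = γ - R.simple k := by
        rw [sref_apply, hpair, one_smul]
      -- height decreases
      obtain ⟨m, hm⟩ := sum_co_nat R hγ'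
      have hsum' : (∑ i, co R (sref (R.simple k) γ) i) = (∑ i, co R γ i) - 1 := by
        rw [hγ'eq]
        rw [Finset.sum_congr rfl fun i (_ : i ∈ Finset.univ) => co_sub R γ (R.simple k) i,
          Finset.sum_sub_distrib]
        have hone : (∑ i, co R (R.simple k) i) = 1 := by
          rw [Finset.sum_congr rfl fun i (_ : i ∈ Finset.univ) => co_simple R k i]
          simp
        rw [hone]
      have hmlt : m < n := by
        have hcast : (m:ℝ) + 1 = (n:ℝ) := by rw [← hm, hsum', hn]; ring
        have : m + 1 = n := by exact_mod_cast hcast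
        omega
      obtain ⟨u', hu'W, hu'eq⟩ := ih m hmlt hγ' hm
      have hri : ∀ y, R.refl k (R.refl k y) = y := fun y => by
        rw [← mul_apply, refl_invol hSL, one_apply]
      refine ⟨R.refl k * u' * R.refl k, ?_, ?_⟩
      · exact Subgroup.mul_mem _ (Subgroup.mul_mem _ (Subgroup.subset_closure ⟨k, rfl⟩) hu'W)
          (Subgroup.subset_closure ⟨k, rfl⟩)
      · intro x
        have e2 : R.refl k (sref (R.simple k) γ) = γ := by
          rw [refl_eq_sref hSL, sref_sref _ (root_norm hSL (R.simple_mem k))]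
        calc (R.refl k * u' * R.refl k) x = R.refl k (u' (R.refl k x)) := rfl
          _ = R.refl k (sref (sref (R.simple k) γ) (R.refl k x)) := by rw [hu'eq]
          _ = sref (R.refl k (sref (R.simple k) γ)) (R.refl k (R.refl k x)) :=
              isom_conj_sref _ _ _
          _ = sref γ x := by rw [e2, hri]

lemma sref_neg_vec (γ x : V) : sref (-γ) x = sref γ x := by
  simp only [sref, inner_neg_right, smul_neg, neg_smul, neg_neg]

lemma sref_mem_weyl (hSL : R.IsSimplyLaced) {γ : V} (hγ : γ ∈ R.roots) :
    ∃ u ∈ R.weylGroup, ∀ x, u x = sref γ x := by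
  rcases root_pos_or_neg R hγ with hp | hn
  · obtain ⟨n, hn'⟩ := sum_co_nat R hp
    exact sref_mem_weyl_pos hSL n hp hn'
  · have hp : -γ ∈ R.posRoots := (mem_negRoots R).mp hn
    obtain ⟨n, hn'⟩ := sum_co_nat R hp
    obtain ⟨u, huW, hu⟩ := sref_mem_weyl_pos hSL n hp hn'
    exact ⟨u, huW, fun x => by rw [hu, sref_neg_vec]⟩

end Stmt5Aux

namespace Stmt5Aux

set_option linter.unusedSectionVars false
set_option maxHeartbeats 1000000

open RootSystemData Finset

variable {V : Type*} [NormedAddCommGroup V] [InnerProductSpace ℝ V] [FiniteDimensional ℝ V]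
  {I : Type*} [Fintype I]

variable {R : RootSystemData V I}

/-! ### The Schur orthogonality identity -/

noncomputable def schurT (R : RootSystemData V I) : V →ₗ[ℝ] V where
  toFun := fun x => ∑ α ∈ R.roots, ⟪α, x⟫_ℝ • α
  map_add' := fun x y => by
    rw [← Finset.sum_add_distrib]
    exact Finset.sum_congr rfl fun α _ => by rw [inner_add_right, add_smul]
  map_smul' := fun r x => by
    rw [Finset.smul_sum]
    exact Finset.sum_congr rfl fun α _ => by
      rw [inner_smul_right, RingHom.id_apply, smul_smul]

lemma schurT_apply (R : RootSystemData V I) (x : V) :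
    schurT R x = ∑ α ∈ R.roots, ⟪α, x⟫_ℝ • α := rfl

lemma schurT_inner (R : RootSystemData V I) (x y : V) :
    ⟪schurT R x, y⟫_ℝ = ∑ α ∈ R.roots, ⟪α, x⟫_ℝ * ⟪α, y⟫_ℝ := by
  rw [schurT_apply, sum_inner]
  exact Finset.sum_congr rfl fun α _ => by rw [real_inner_smul_left]

lemma schurT_symm (R : RootSystemData V I) : (schurT R).IsSymmetric := by
  intro x y
  rw [schurT_inner]
  have : ⟪x, schurT R y⟫_ℝ = ∑ α ∈ R.roots, ⟪α, y⟫_ℝ * ⟪x, α⟫_ℝ := by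
    rw [schurT_apply, inner_sum]
    exact Finset.sum_congr rfl fun α _ => by rw [real_inner_smul_right]
  rw [this]
  exact Finset.sum_congr rfl fun α _ => by rw [real_inner_comm x α]; ring

lemma schurT_comm_weyl (hSL : R.IsSimplyLaced) {g : V ≃ₗᵢ[ℝ] V} (hg : g ∈ R.weylGroup) (x : V) :
    schurT R (g x) = g (schurT R x) := by
  have hginv : g⁻¹ ∈ R.weylGroup := Subgroup.inv_mem _ hg
  rw [schurT_apply, schurT_apply, map_sum]
  have hmap : ∀ α ∈ R.roots, g (⟪α, x⟫_ℝ • α) = ⟪α, x⟫_ℝ • g α := fun α _ => map_smul g _ _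
  rw [Finset.sum_congr rfl hmap]
  refine Finset.sum_nbij' (fun α => g⁻¹ α) (fun α => g α) ?_ ?_ ?_ ?_ ?_
  · intro α hα; exact weyl_root hSL hginv hα
  · intro α hα; exact weyl_root hSL hg hα
  · intro α _; show g (g⁻¹ α) = α; simp
  · intro α _; show g⁻¹ (g α) = α; simp
  · intro α hα
    have h1 : ⟪α, g x⟫_ℝ = ⟪g⁻¹ α, x⟫_ℝ := by
      conv_lhs => rw [show α = g (g⁻¹ α) from by simp]
      rw [LinearIsometryEquiv.inner_map_map]
    rw [h1]
    congr 1
    show α = g (g⁻¹ α); simp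

lemma nontrivial_of_idx (R : RootSystemData V I) (i : I) : Nontrivial V :=
  ⟨⟨R.simple i, 0, root_ne_zero R (R.simple_mem i)⟩⟩

/-- The Schur identity. -/
lemma schur (hSL : R.IsSimplyLaced) (hirr : R.IsIrreducible) {h : ℕ}
    (hcox : R.HasCoxeterNumber h) (i₀ : I) (x y : V) :
    ∑ α ∈ R.roots, ⟪α, x⟫_ℝ * ⟪α, y⟫_ℝ = (2 * h) * ⟪x, y⟫_ℝ := by
  classical
  have : Nontrivial V := nontrivial_of_idx R i₀
  have : Nonempty I := ⟨i₀⟩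
  obtain ⟨μ, hμ⟩ : ∃ μ : ℝ, Module.End.HasEigenvalue (schurT R) μ :=
    ⟨_, (schurT_symm R).hasEigenvalue_iSup_of_finiteDimensional⟩
  set E := Module.End.eigenspace (schurT R) μ with hE
  have hEne : E ≠ ⊥ := hμ
  -- E is invariant under simple reflections
  have hinv : ∀ (i : I), ∀ v ∈ E, R.refl i v ∈ E := by
    intro i v hv
    rw [hE, Module.End.mem_eigenspace_iff] at hv ⊢
    have := schurT_comm_weyl hSL (Subgroup.subset_closure ⟨i, rfl⟩ : R.refl i ∈ R.weylGroup) v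
    rw [this, hv, map_smul]
  -- dichotomy
  have hdich : ∀ i : I, (R.simple i ∈ E) ∨ (∀ v ∈ E, ⟪v, R.simple i⟫_ℝ = 0) := by
    intro i
    by_cases hc : ∀ v ∈ E, ⟪v, R.simple i⟫_ℝ = 0
    · exact Or.inr hc
    · push_neg at hc
      obtain ⟨v, hv, hvne⟩ := hc
      left
      have h1 : v - R.refl i v ∈ E := Submodule.sub_mem _ hv (hinv i v hv)
      have h2 : v - R.refl i v = ⟪v, R.simple i⟫_ℝ • R.simple i := by
        rw [refl_eq_sref hSL, sref_apply]; abel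
      rw [h2] at h1
      have h3 := Submodule.smul_mem E (⟪v, R.simple i⟫_ℝ)⁻¹ h1
      rwa [smul_smul, inv_mul_cancel₀ hvne, one_smul] at h3
  -- E = ⊤ via irreducibility
  have hET : ∀ j : I, R.simple j ∈ E := by
    set S : Set I := {i | R.simple i ∈ E} with hS
    have hcross : ∀ i ∈ S, ∀ j ∉ S, ⟪R.simple i, R.simple j⟫_ℝ = 0 := by
      intro i hi j hj
      rcases hdich j with hje | hjo
      · exact absurd hje hj
      · exact hjo (R.simple i) hi
    rcases hirr S hcross with hS0 | hSuniv
    · exfalso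
      apply hEne
      rw [Submodule.eq_bot_iff]
      intro v hv
      have hperp : ∀ i : I, ⟪v, R.simple i⟫_ℝ = 0 := by
        intro i
        rcases hdich i with hie | hio
        · exact absurd (by rw [hS0] at hS; exact hS ▸ hie : i ∈ (∅ : Set I)) (by simp)
        · exact hio v hv
      have hvv : ⟪v, v⟫_ℝ = 0 := by
        nth_rewrite 2 [eq_sum_co R v]
        rw [inner_sum]
        rw [Finset.sum_congr rfl fun k (_ : k ∈ Finset.univ) => by
          rw [real_inner_smul_right, hperp k, mul_zero]]
        simp
      exact inner_self_eq_zero.mp hvv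
    · intro j
      have : j ∈ S := by rw [hSuniv]; trivial
      exact this
  have hall : ∀ x : V, schurT R x = μ • x := by
    intro x
    have hx : x ∈ E := by
      rw [eq_sum_co R x]
      exact Submodule.sum_mem _ fun k _ => Submodule.smul_mem _ _ (hET k)
    rwa [Module.End.mem_eigenspace_iff] at hx
  -- compute μ = 2h via the trace over an orthonormal basis
  have hfr : Module.finrank ℝ V = Fintype.card I := Module.finrank_eq_card_basis (rb R)
  set e := stdOrthonormalBasis ℝ V with he
  have htr1 : ∑ k, ⟪schurT R (e k), e k⟫_ℝ = μ * (Module.finrank ℝ V) := by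
    have h1 : ∀ k, ⟪schurT R (e k), e k⟫_ℝ = μ := by
      intro k
      rw [hall (e k), real_inner_smul_left]
      have h2 : ⟪(e k : V), e k⟫_ℝ = 1 := by
        rw [real_inner_self_eq_norm_sq, e.orthonormal.1 k]; norm_num
      rw [h2, mul_one]
    rw [Finset.sum_congr rfl fun k _ => h1 k, Finset.sum_const, Finset.card_univ,
      Fintype.card_fin, nsmul_eq_mul, mul_comm]
  have htr2 : ∑ k, ⟪schurT R (e k), e k⟫_ℝ = 2 * R.roots.card := by
    have h1 : ∀ k, ⟪schurT R (e k), e k⟫_ℝ = ∑ α ∈ R.roots, ⟪α, e k⟫_ℝ * ⟪α, e k⟫_ℝ :=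
      fun k => schurT_inner R (e k) (e k)
    rw [Finset.sum_congr rfl fun k _ => h1 k, Finset.sum_comm]
    have h2 : ∀ α ∈ R.roots, (∑ k, ⟪α, e k⟫_ℝ * ⟪α, e k⟫_ℝ) = 2 := by
      intro α hα
      have hp : (∑ k, ⟪α, e k⟫_ℝ * ⟪α, e k⟫_ℝ) = ⟪α, α⟫_ℝ := by
        rw [← OrthonormalBasis.sum_inner_mul_inner e α α]
        exact Finset.sum_congr rfl fun k _ => by rw [real_inner_comm (e k) α]
      rw [hp, root_norm hSL hα]
    rw [Finset.sum_congr rfl h2, Finset.sum_const, nsmul_eq_mul]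
    ring
  have hμval : μ = 2 * h := by
    have hcard : (R.roots.card : ℝ) = h * Fintype.card I := by
      rw [hcox]; push_cast; ring
    have hn0 : (0:ℝ) < Fintype.card I := by
      have : 0 < Fintype.card I := Fintype.card_pos_iff.mpr ⟨i₀⟩
      exact_mod_cast this
    have heq := htr1.symm.trans htr2
    rw [hcard, hfr] at heq
    have h2 : μ * (Fintype.card I : ℝ) = (2 * h) * (Fintype.card I : ℝ) := by
      rw [heq]; ring
    exact mul_right_cancel₀ (ne_of_gt hn0) h2
  rw [← schurT_inner, hall x, real_inner_smul_left, hμval]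

end Stmt5Aux

namespace Stmt5Aux

set_option linter.unusedSectionVars false
set_option maxHeartbeats 1000000

open Finset

/-- parity of a finite set with involution: card ≡ number of fixed points mod 2 -/
lemma invol_card_aux {β : Type*} [DecidableEq β] :
    ∀ (n : ℕ) (X : Finset β) (f : β → β), X.card ≤ n →
    (∀ a ∈ X, f a ∈ X) → (∀ a ∈ X, f (f a) = a) →
    X.card ≡ (X.filter fun a => f a = a).card [MOD 2] := by
  intro n
  induction n with
  | zero =>
    intro X f hX _ _
    have : X = ∅ := Finset.card_eq_zero.mp (Nat.le_zero.mp hX)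
    subst this; simp [Nat.ModEq]
  | succ n ih =>
    intro X f hX hfX hff
    by_cases hall : ∀ a ∈ X, f a = a
    · have : X.filter (fun a => f a = a) = X := Finset.filter_eq_self.mpr hall
      rw [this]
    · push_neg at hall
      obtain ⟨a, ha, hane⟩ := hall
      have hfa : f a ∈ X := hfX a ha
      have hfane : f a ≠ a := hane
      set X' := (X.erase a).erase (f a) with hX'
      have hfa_mem : f a ∈ X.erase a := Finset.mem_erase.mpr ⟨hfane, hfa⟩
      have hcard : X.card = X'.card + 2 := by
        rw [hX', Finset.card_erase_of_mem hfa_mem, Finset.card_erase_of_mem ha]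
        have h1 : 1 ≤ X.card := Finset.card_pos.mpr ⟨a, ha⟩
        have h2 : 2 ≤ X.card := by
          have : ({a, f a} : Finset β) ⊆ X := by
            intro x hx
            rcases Finset.mem_insert.mp hx with rfl | hx
            · exact ha
            · rw [Finset.mem_singleton.mp hx]; exact hfa
          have hc2 : ({a, f a} : Finset β).card = 2 := by
            rw [Finset.card_insert_of_notMem (by simp [Ne.symm hfane]), Finset.card_singleton]
          calc 2 = ({a, f a} : Finset β).card := hc2.symm
            _ ≤ X.card := Finset.card_le_card this
        omega
      have hmemX' : ∀ b, b ∈ X' ↔ (b ∈ X ∧ b ≠ a ∧ b ≠ f a) := by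
        intro b
        rw [hX']
        simp only [Finset.mem_erase]
        tauto
      have hfX' : ∀ b ∈ X', f b ∈ X' := by
        intro b hb
        rw [hmemX'] at hb ⊢
        obtain ⟨hbX, hba, hbfa⟩ := hb
        refine ⟨hfX b hbX, ?_, ?_⟩
        · intro hcon
          apply hbfa
          have h1 : f a = b := by rw [← hcon, hff b hbX]
          exact h1.symm
        · intro hcon
          apply hba
          have := congrArg f hcon
          rw [hff b hbX, hff a ha] at this
          exact this
      have hff' : ∀ b ∈ X', f (f b) = b := fun b hb => hff b ((hmemX' b).mp hb).1
      have hfilter : X.filter (fun a => f a = a) = X'.filter (fun a => f a = a) := by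
        apply Finset.ext
        intro b
        simp only [Finset.mem_filter]
        constructor
        · rintro ⟨hbX, hbfix⟩
          refine ⟨(hmemX' b).mpr ⟨hbX, ?_, ?_⟩, hbfix⟩
          · rintro rfl; exact hane hbfix
          · rintro rfl; rw [hff a ha] at hbfix; exact hane hbfix.symm
        · rintro ⟨hbX', hbfix⟩
          exact ⟨((hmemX' b).mp hbX').1, hbfix⟩
      have hX'le : X'.card ≤ n := by omega
      have := ih X' f hX'le hfX' hff'
      rw [hcard, hfilter]
      calc X'.card + 2 ≡ X'.card [MOD 2] := by
            unfold Nat.ModEq; omega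
        _ ≡ (X'.filter fun a => f a = a).card [MOD 2] := this

lemma invol_card {β : Type*} [DecidableEq β] (X : Finset β) (f : β → β)
    (hfX : ∀ a ∈ X, f a ∈ X) (hff : ∀ a ∈ X, f (f a) = a) :
    X.card ≡ (X.filter fun a => f a = a).card [MOD 2] :=
  invol_card_aux X.card X f le_rfl hfX hff

/-- Klein four group action: if f is fixed-point-free, commutes with g, and f ≠ g pointwise,
then card ≡ number of g-fixed points mod 4 -/
lemma klein_card_aux {β : Type*} [DecidableEq β] :
    ∀ (n : ℕ) (X : Finset β) (f g : β → β), X.card ≤ n →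
    (∀ a ∈ X, f a ∈ X) → (∀ a ∈ X, g a ∈ X) →
    (∀ a ∈ X, f (f a) = a) → (∀ a ∈ X, g (g a) = a) →
    (∀ a ∈ X, f (g a) = g (f a)) →
    (∀ a ∈ X, f a ≠ a) → (∀ a ∈ X, f a ≠ g a) →
    X.card ≡ (X.filter fun a => g a = a).card [MOD 4] := by
  intro n
  induction n with
  | zero =>
    intro X f g hX _ _ _ _ _ _ _
    have : X = ∅ := Finset.card_eq_zero.mp (Nat.le_zero.mp hX)
    subst this; simp [Nat.ModEq]
  | succ n ih =>
    intro X f g hX hfX hgX hff hgg hcomm hfne hfg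
    by_cases hall : ∀ a ∈ X, g a = a
    · have : X.filter (fun a => g a = a) = X := Finset.filter_eq_self.mpr hall
      rw [this]
    · push_neg at hall
      obtain ⟨a, ha, hga⟩ := hall
      -- the four orbit elements
      have hfaX : f a ∈ X := hfX a ha
      have hgaX : g a ∈ X := hgX a ha
      have hfgaX : f (g a) ∈ X := hfX _ hgaX
      have hinj : ∀ b ∈ X, ∀ c ∈ X, f b = f c → b = c := by
        intro b hb c hc hbc
        rw [← hff b hb, hbc, hff c hc]
      have h12 : a ≠ f a := fun hcon => hfne a ha hcon.symm
      have h13 : a ≠ g a := fun hcon => hga hcon.symm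
      have h14 : a ≠ f (g a) := by
        intro hcon
        apply hfg a ha
        have h1 := congrArg f hcon
        rw [hff _ hgaX] at h1
        exact h1
      have h23 : f a ≠ g a := hfg a ha
      have h24 : f a ≠ f (g a) := fun hcon => h13 (hinj a ha (g a) hgaX hcon)
      have h34 : g a ≠ f (g a) := fun hcon => hfne (g a) hgaX hcon.symm
      set O : Finset β := {a, f a, g a, f (g a)} with hO
      have hOX : O ⊆ X := by
        intro x hx
        rw [hO] at hx
        simp only [Finset.mem_insert, Finset.mem_singleton] at hx
        rcases hx with rfl | rfl | rfl | rfl <;> assumption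
      have hOcard : O.card = 4 := by
        rw [hO]
        rw [Finset.card_insert_of_notMem (by simp [h12, h13, h14]),
          Finset.card_insert_of_notMem (by simp [h23, h24]),
          Finset.card_insert_of_notMem (by simp [h34]), Finset.card_singleton]
      set X' := X \ O with hX'
      have hmemX' : ∀ b, b ∈ X' ↔ b ∈ X ∧ b ≠ a ∧ b ≠ f a ∧ b ≠ g a ∧ b ≠ f (g a) := by
        intro b
        rw [hX', Finset.mem_sdiff, hO]
        simp only [Finset.mem_insert, Finset.mem_singleton]
        tauto
      have hcard : X.card = X'.card + 4 := by
        rw [hX', Finset.card_sdiff_of_subset hOX, hOcard]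
        have := Finset.card_le_card hOX
        omega
      -- X' is closed under f and g
      have hfX' : ∀ b ∈ X', f b ∈ X' := by
        intro b hb
        rw [hmemX'] at hb ⊢
        obtain ⟨hbX, hb1, hb2, hb3, hb4⟩ := hb
        refine ⟨hfX b hbX, ?_, ?_, ?_, ?_⟩
        · intro hcon
          apply hb2
          have h1 : f a = b := by rw [← hcon, hff b hbX]
          exact h1.symm
        · intro hcon; exact hb1 (hinj b hbX a ha hcon)
        · intro hcon
          apply hb4
          have h1 : f (g a) = b := by rw [← hcon, hff b hbX]
          exact h1.symm
        · intro hcon; exact hb3 (hinj b hbX (g a) hgaX hcon)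
      have hgX' : ∀ b ∈ X', g b ∈ X' := by
        intro b hb
        rw [hmemX'] at hb ⊢
        obtain ⟨hbX, hb1, hb2, hb3, hb4⟩ := hb
        have hginj : ∀ c ∈ X, ∀ d ∈ X, g c = g d → c = d := by
          intro c hc d hd hcd
          rw [← hgg c hc, hcd, hgg d hd]
        refine ⟨hgX b hbX, ?_, ?_, ?_, ?_⟩
        · intro hcon
          apply hb3
          have h1 : g a = b := by rw [← hcon, hgg b hbX]
          exact h1.symm
        · intro hcon
          apply hb4
          have h1 : g (f a) = b := by rw [← hcon, hgg b hbX]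
          rw [← h1, ← hcomm a ha]
        · intro hcon; exact hb1 (hginj b hbX a ha hcon)
        · intro hcon
          apply hb2
          have h1 : g (f (g a)) = b := by rw [← hcon, hgg b hbX]
          rw [← h1, ← hcomm (g a) hgaX, hgg a ha]
      -- no g-fixed points in O
      have hOnofix : ∀ b ∈ O, g b ≠ b := by
        intro b hb
        rw [hO] at hb
        simp only [Finset.mem_insert, Finset.mem_singleton] at hb
        rcases hb with rfl | rfl | rfl | rfl
        · exact hga
        · intro hcon
          rw [← hcomm a ha] at hcon
          exact hga (hinj (g a) hgaX a ha hcon)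
        · intro hcon; rw [hgg a ha] at hcon; exact h13 hcon
        · intro hcon
          rw [← hcomm (g a) hgaX, hgg a ha] at hcon
          exact h24 hcon
      have hfilter : X.filter (fun b => g b = b) = X'.filter (fun b => g b = b) := by
        apply Finset.ext
        intro b
        simp only [Finset.mem_filter]
        constructor
        · rintro ⟨hbX, hfix⟩
          refine ⟨?_, hfix⟩
          rw [hmemX']
          refine ⟨hbX, ?_, ?_, ?_, ?_⟩ <;> intro hcon <;>
            exact hOnofix b (by rw [hO, hcon]; simp) hfix
        · rintro ⟨hbX', hfix⟩
          exact ⟨((hmemX' b).mp hbX').1, hfix⟩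
      have hX'le : X'.card ≤ n := by omega
      have hrec := ih X' f g hX'le hfX' hgX'
        (fun b hb => hff b ((hmemX' b).mp hb).1)
        (fun b hb => hgg b ((hmemX' b).mp hb).1)
        (fun b hb => hcomm b ((hmemX' b).mp hb).1)
        (fun b hb => hfne b ((hmemX' b).mp hb).1)
        (fun b hb => hfg b ((hmemX' b).mp hb).1)
      rw [hcard, hfilter]
      calc X'.card + 4 ≡ X'.card [MOD 4] := by unfold Nat.ModEq; omega
        _ ≡ (X'.filter fun b => g b = b).card [MOD 4] := hrec

lemma klein_card {β : Type*} [DecidableEq β] (X : Finset β) (f g : β → β)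
    (hfX : ∀ a ∈ X, f a ∈ X) (hgX : ∀ a ∈ X, g a ∈ X)
    (hff : ∀ a ∈ X, f (f a) = a) (hgg : ∀ a ∈ X, g (g a) = a)
    (hcomm : ∀ a ∈ X, f (g a) = g (f a))
    (hfne : ∀ a ∈ X, f a ≠ a) (hfg : ∀ a ∈ X, f a ≠ g a) :
    X.card ≡ (X.filter fun a => g a = a).card [MOD 4] :=
  klein_card_aux X.card X f g le_rfl hfX hgX hff hgg hcomm hfne hfg

end Stmt5Aux

namespace Stmt5Aux

set_option linter.unusedSectionVars false
set_option maxHeartbeats 1000000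

open RootSystemData Finset

variable {V : Type*} [NormedAddCommGroup V] [InnerProductSpace ℝ V] [FiniteDimensional ℝ V]
  {I : Type*} [Fintype I]

variable {R : RootSystemData V I}

noncomputable def Aset (R : RootSystemData V I) (β : V) : Finset V :=
  R.posRoots.filter fun α => ⟪α, β⟫_ℝ = 1

noncomputable def Tset (R : RootSystemData V I) (β : V) : Finset V :=
  R.posRoots.filter fun α => ⟪α, β⟫_ℝ = 1 ∨ ⟪α, β⟫_ℝ = -1

lemma root_ne_neg_self (R : RootSystemData V I) {α : V} (h : α ∈ R.roots) : α ≠ -α := by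
  intro hcon
  have h0 : (2:ℝ) • α = 0 := by
    rw [two_smul]
    nth_rewrite 2 [hcon]
    simp
  rcases smul_eq_zero.mp h0 with h' | h'
  · norm_num at h'
  · exact root_ne_zero R h h'

lemma Tall_card (hSL : R.IsSimplyLaced) (hirr : R.IsIrreducible) {h : ℕ}
    (hcox : R.HasCoxeterNumber h) (i : I) :
    ((R.roots.filter fun α => ⟪α, R.simple i⟫_ℝ = 1 ∨ ⟪α, R.simple i⟫_ℝ = -1).card : ℝ) + 8
      = 4 * h := by
  classical
  set s := R.simple i with hs
  have hsroot : s ∈ R.roots := R.simple_mem i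
  have hnegs : -s ∈ R.roots := R.neg_mem _ hsroot
  have hschur := schur hSL hirr hcox i s s
  rw [root_norm hSL hsroot] at hschur
  have hsne : s ≠ -s := root_ne_neg_self R hsroot
  have hsub : ({s, -s} : Finset V) ⊆ R.roots := by
    intro x hx
    rcases Finset.mem_insert.mp hx with rfl | hx
    · exact hsroot
    · rw [Finset.mem_singleton.mp hx]; exact hnegs
  rw [← Finset.sum_sdiff hsub] at hschur
  have hpair_sum : ∑ α ∈ ({s, -s} : Finset V), ⟪α, s⟫_ℝ * ⟪α, s⟫_ℝ = 8 := by
    rw [Finset.sum_insert (by simp [hsne]), Finset.sum_singleton, inner_neg_left,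
      root_norm hSL hsroot]
    ring
  rw [hpair_sum] at hschur
  have hrest : ∑ α ∈ R.roots \ {s, -s}, ⟪α, s⟫_ℝ * ⟪α, s⟫_ℝ
      = ∑ α ∈ R.roots \ {s, -s}, (if (⟪α, s⟫_ℝ = 1 ∨ ⟪α, s⟫_ℝ = -1) then (1:ℝ) else 0) := by
    apply Finset.sum_congr rfl
    intro α hα
    obtain ⟨hαr, hαns⟩ := Finset.mem_sdiff.mp hα
    have hne1 : α ≠ s := by intro hcon; apply hαns; simp [hcon]
    have hne2 : α ≠ -s := by intro hcon; apply hαns; simp [hcon]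
    rcases pair_cases hSL hαr hsroot hne1 hne2 with h' | h' | h' <;>
      rw [h'] <;> norm_num
  rw [hrest, Finset.sum_boole] at hschur
  have hfiltereq : (R.roots \ {s, -s}).filter (fun α => ⟪α, s⟫_ℝ = 1 ∨ ⟪α, s⟫_ℝ = -1)
      = R.roots.filter (fun α => ⟪α, s⟫_ℝ = 1 ∨ ⟪α, s⟫_ℝ = -1) := by
    apply Finset.ext
    intro α
    simp only [Finset.mem_filter, Finset.mem_sdiff, Finset.mem_insert, Finset.mem_singleton]
    constructor
    · rintro ⟨⟨h1, _⟩, h3⟩; exact ⟨h1, h3⟩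
    · rintro ⟨h1, h3⟩
      refine ⟨⟨h1, ?_⟩, h3⟩
      rintro (rfl | rfl)
      · rw [root_norm hSL hsroot] at h3; rcases h3 with h3 | h3 <;> norm_num at h3
      · rw [inner_neg_left, root_norm hSL hsroot] at h3
        rcases h3 with h3 | h3 <;> norm_num at h3
  rw [hfiltereq] at hschur
  linarith [hschur]

/-- `#Tset = 2h - 4` for a simple root -/
lemma Tset_card (hSL : R.IsSimplyLaced) (hirr : R.IsIrreducible) {h : ℕ}
    (hcox : R.HasCoxeterNumber h) (i : I) :
    ((Tset R (R.simple i)).card : ℝ) + 4 = 2 * h := by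
  classical
  set s := R.simple i with hs
  set P : V → Prop := fun α => ⟪α, s⟫_ℝ = 1 ∨ ⟪α, s⟫_ℝ = -1 with hP
  have hTall := Tall_card hSL hirr hcox i
  have hdisj : Disjoint (R.posRoots.filter fun α => P α) (R.negRoots.filter fun α => P α) :=
    Finset.disjoint_left.mpr fun {α} h1 h2 =>
      not_pos_and_neg R (posRoots_sub_roots R (Finset.mem_filter.mp h1).1)
        ⟨(Finset.mem_filter.mp h1).1, (Finset.mem_filter.mp h2).1⟩
  have hsplit : (R.roots.filter fun α => P α).card
      = (R.posRoots.filter fun α => P α).card + (R.negRoots.filter fun α => P α).card := by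
    have hun : R.roots.filter (fun α => P α)
        = (R.posRoots.filter fun α => P α) ∪ (R.negRoots.filter fun α => P α) := by
      apply Finset.ext
      intro α
      simp only [Finset.mem_filter, Finset.mem_union]
      constructor
      · rintro ⟨h1, h2⟩
        rcases root_pos_or_neg R h1 with hp | hn
        · exact Or.inl ⟨hp, h2⟩
        · exact Or.inr ⟨hn, h2⟩
      · rintro (⟨h1, h2⟩ | ⟨h1, h2⟩)
        · exact ⟨posRoots_sub_roots R h1, h2⟩
        · exact ⟨negRoots_sub_roots R h1, h2⟩
    rw [hun, Finset.card_union_of_disjoint hdisj]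
  have hbij : (R.negRoots.filter fun α => P α).card = (R.posRoots.filter fun α => P α).card := by
    apply Finset.card_bij (fun α _ => -α)
    · intro α hα
      obtain ⟨h1, h2⟩ := Finset.mem_filter.mp hα
      refine Finset.mem_filter.mpr ⟨(mem_negRoots R).mp h1, ?_⟩
      show ⟪-α, s⟫_ℝ = 1 ∨ ⟪-α, s⟫_ℝ = -1
      rw [inner_neg_left]
      rcases h2 with h2 | h2 <;> rw [show ⟪α, s⟫_ℝ = _ from h2] <;> norm_num
    · intro α hα β hβ hab
      have := congrArg (fun x : V => -x) hab
      simpa using this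
    · intro β hβ
      obtain ⟨h1, h2⟩ := Finset.mem_filter.mp hβ
      refine ⟨-β, Finset.mem_filter.mpr ⟨?_, ?_⟩, by simp⟩
      · rw [mem_negRoots, neg_neg]; exact h1
      · show ⟪-β, s⟫_ℝ = 1 ∨ ⟪-β, s⟫_ℝ = -1
        rw [inner_neg_left]
        rcases h2 with h2 | h2 <;> rw [show ⟪β, s⟫_ℝ = _ from h2] <;> norm_num
  have heq : (Tset R s) = R.posRoots.filter fun α => P α := rfl
  rw [heq]
  rw [hsplit, hbij] at hTall
  push_cast at hTall ⊢
  linarith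

/-- `#Aset = h - 2` for a simple root -/
lemma Aset_card (hSL : R.IsSimplyLaced) (hirr : R.IsIrreducible) {h : ℕ}
    (hcox : R.HasCoxeterNumber h) (i : I) :
    ((Aset R (R.simple i)).card : ℝ) + 2 = h := by
  classical
  set s := R.simple i with hs
  have hsroot : s ∈ R.roots := R.simple_mem i
  set Bset : Finset V := R.posRoots.filter (fun α => ⟪α, s⟫_ℝ = -1) with hB
  have hdisj : Disjoint (Aset R s) Bset := Finset.disjoint_left.mpr fun {α} h1 h2 => by
    have e1 := (Finset.mem_filter.mp h1).2
    have e2 := (Finset.mem_filter.mp h2).2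
    norm_num [e1] at e2
  have hsplit : (Tset R s).card = (Aset R s).card + Bset.card := by
    have hun : Tset R s = Aset R s ∪ Bset := by
      apply Finset.ext
      intro α
      simp only [Tset, Aset, hB, Finset.mem_filter, Finset.mem_union]
      tauto
    rw [hun, Finset.card_union_of_disjoint hdisj]
  have hbij : Bset.card = (Aset R s).card := by
    apply Finset.card_bij (fun α _ => sref s α)
    · intro α hα
      obtain ⟨h1, h2⟩ := Finset.mem_filter.mp hα
      have hne : α ≠ s := by
        intro hcon; rw [hcon, root_norm hSL hsroot] at h2; norm_num at h2
      refine Finset.mem_filter.mpr ⟨sref_pos hSL h1 i hne, ?_⟩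
      show ⟪sref s α, s⟫_ℝ = 1
      rw [sref_apply, inner_sub_left, real_inner_smul_left, root_norm hSL hsroot, h2]
      ring
    · intro α hα β hβ hab
      have h2 : ⟪s, s⟫_ℝ = 2 := root_norm hSL hsroot
      have := congrArg (sref s) hab
      rwa [sref_sref _ h2, sref_sref _ h2] at this
    · intro β hβ
      obtain ⟨h1, h2⟩ := Finset.mem_filter.mp hβ
      have hne : β ≠ s := by
        intro hcon; rw [hcon, root_norm hSL hsroot] at h2; norm_num at h2
      refine ⟨sref s β, Finset.mem_filter.mpr ⟨sref_pos hSL h1 i hne, ?_⟩,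
        sref_sref _ (root_norm hSL hsroot) β⟩
      show ⟪sref s β, s⟫_ℝ = -1
      rw [sref_apply, inner_sub_left, real_inner_smul_left, root_norm hSL hsroot, h2]
      ring
  have hT := Tset_card hSL hirr hcox i
  rw [hsplit, hbij] at hT
  push_cast at hT ⊢
  linarith

end Stmt5Aux

namespace Stmt5Aux

set_option linter.unusedSectionVars false
set_option maxHeartbeats 1000000

open RootSystemData Finset

variable {V : Type*} [NormedAddCommGroup V] [InnerProductSpace ℝ V] [FiniteDimensional ℝ V]
  {I : Type*} [Fintype I]

variable {R : RootSystemData V I}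

section LongElement

variable (hSL : R.IsSimplyLaced) {w : V ≃ₗᵢ[ℝ] V} (hwW : w ∈ R.weylGroup)
  (hlong : ∀ α ∈ R.posRoots, w α ∈ R.negRoots)
  {bar : I → I} (hbar : ∀ i, w (R.simple i) = -(R.simple (bar i)))

include hSL hwW hbar

lemma w_invol : w * w = 1 := by
  apply weyl_eq_one hSL (Subgroup.mul_mem _ hwW hwW)
  intro i
  have : (w * w) (R.simple i) = R.simple (bar (bar i)) := by
    rw [mul_apply, hbar i, map_neg, hbar (bar i), neg_neg]
  rw [this]
  exact simple_mem_pos R (bar (bar i))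

lemma w_w (x : V) : w (w x) = x := by
  rw [← mul_apply, w_invol hSL hwW hbar, one_apply]

lemma bar_invol (i : I) : bar (bar i) = i := by
  have h1 : (w * w) (R.simple i) = R.simple (bar (bar i)) := by
    rw [mul_apply, hbar i, map_neg, hbar (bar i), neg_neg]
  rw [w_invol hSL hwW hbar, one_apply] at h1
  exact (simple_injective R h1.symm)

lemma w_adj (x y : V) : ⟪w x, y⟫_ℝ = ⟪x, w y⟫_ℝ := by
  conv_lhs => rw [show y = w (w y) from (w_w hSL hwW hbar y).symm]
  rw [LinearIsometryEquiv.inner_map_map]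

lemma iota_iota (x : V) : -(w (-(w x))) = x := by
  rw [map_neg, neg_neg, w_w hSL hwW hbar]

/-- pairing transform under `ι` -/
lemma iota_pair (α : V) (i : I) : ⟪-(w α), R.simple i⟫_ℝ = ⟪α, R.simple (bar i)⟫_ℝ := by
  rw [inner_neg_left, w_adj hSL hwW hbar, hbar i, inner_neg_right, neg_neg]

/-- coefficients transform under `ι` -/
lemma iota_co (α : V) (j : I) : co R (-(w α)) j = co R α (bar j) := by
  have h1 : -(w α) = ∑ k, co R α k • R.simple (bar k) := by
    conv_lhs => rw [show α = ∑ k, co R α k • R.simple k from eq_sum_co R α]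
    rw [map_sum, ← Finset.sum_neg_distrib]
    apply Finset.sum_congr rfl
    intro k _
    rw [map_smul, hbar k, smul_neg, neg_neg]
  have h2 : -(w α) = ∑ m, co R α (bar m) • R.simple m := by
    rw [h1]
    apply Finset.sum_nbij' (fun k => bar k) (fun m => bar m)
    · intro k _; exact Finset.mem_univ _
    · intro k _; exact Finset.mem_univ _
    · intro k _; exact bar_invol hSL hwW hbar k
    · intro k _; exact bar_invol hSL hwW hbar k
    · intro k _
      rw [bar_invol hSL hwW hbar k]
  rw [h2, co_sum]

include hlong

/-- the map `α ↦ -w α` preserves positive roots -/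
lemma iota_pos {α : V} (hα : α ∈ R.posRoots) : -(w α) ∈ R.posRoots := by
  have := hlong α hα
  rwa [mem_negRoots] at this

end LongElement

/-! ### q is constant -/

lemma q_const (hSL : R.IsSimplyLaced) (hirr : R.IsIrreducible) {w : V ≃ₗᵢ[ℝ] V}
    (hwW : w ∈ R.weylGroup) {bar : I → I} (hbar : ∀ i, w (R.simple i) = -(R.simple (bar i)))
    (o : I → ℤ) (ho : ∀ i, o i = 1 ∨ o i = -1)
    (hsign : ∀ i j, ⟪R.simple i, R.simple j⟫_ℝ < 0 → o i * o j = -1) :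
    ∀ i j, o i * o (bar i) = o j * o (bar j) := by
  have hbar_inj : Function.Injective bar := by
    intro i j hij
    have := congrArg R.simple hij
    rw [← neg_neg (R.simple (bar i)), ← hbar i, ← neg_neg (R.simple (bar j)), ← hbar j] at this
    exact simple_injective R (w.injective (by
      have := congrArg (fun x : V => -x) this
      simpa using this))
  set S : Set I := {i | o i * o (bar i) = 1} with hS
  have hcross : ∀ i ∈ S, ∀ j ∉ S, ⟪R.simple i, R.simple j⟫_ℝ = 0 := by
    intro i hi j hj
    have hne : i ≠ j := by rintro rfl; exact hj hi
    rcases simple_pair hSL hne with h0 | hm1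
    · exact h0
    · exfalso
      apply hj
      have h1 : o i * o j = -1 := hsign i j (by rw [hm1]; norm_num)
      have hbarpair : ⟪R.simple (bar i), R.simple (bar j)⟫_ℝ = -1 := by
        have : ⟪w (R.simple i), w (R.simple j)⟫_ℝ = ⟪R.simple i, R.simple j⟫_ℝ :=
          LinearIsometryEquiv.inner_map_map w _ _
        rw [hbar i, hbar j, inner_neg_left, inner_neg_right, neg_neg, hm1] at this
        rw [this]
    -- o (bar i) * o (bar j) = -1
      have h2 : o (bar i) * o (bar j) = -1 := hsign (bar i) (bar j)
        (by rw [hbarpair]; norm_num)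
      have hSi : o i * o (bar i) = 1 := hi
      show o j * o (bar j) = 1
      -- from h1, h2, hSi, and o values ±1
      rcases ho i with hoi | hoi <;> rcases ho j with hoj | hoj <;>
        rcases ho (bar i) with hobi | hobi <;> rcases ho (bar j) with hobj | hobj <;>
        rw [hoi, hoj] at h1 <;> rw [hobi, hobj] at h2 <;>
        rw [hoi, hobi] at hSi <;> rw [hoj, hobj] <;> omega
  rcases hirr S hcross with hS0 | hSuniv
  · -- all products are -1
    intro i j
    have hval : ∀ k, o k * o (bar k) = -1 := by
      intro k
      have hk : k ∉ S := by rw [hS0]; simp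
      rcases ho k with hok | hok <;> rcases ho (bar k) with hobk | hobk <;>
        rw [hok, hobk] <;> simp only [hS, Set.mem_setOf_eq, hok, hobk] at hk <;> omega
    rw [hval i, hval j]
  · intro i j
    have hi : i ∈ S := by rw [hSuniv]; trivial
    have hj : j ∈ S := by rw [hSuniv]; trivial
    rw [hi, hj]

end Stmt5Aux

namespace Stmt5Aux

set_option linter.unusedSectionVars false
set_option maxHeartbeats 1000000

open RootSystemData Finset

variable {V : Type*} [NormedAddCommGroup V] [InnerProductSpace ℝ V] [FiniteDimensional ℝ V]
  {I : Type*} [Fintype I]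

variable {R : RootSystemData V I}

lemma co_subset_sum (R : RootSystemData V I) (S : Finset I) (m : I) :
    co R (∑ k ∈ S, R.simple k) m = if m ∈ S then 1 else 0 := by
  classical
  have h1 : (∑ k ∈ S, R.simple k) = ∑ k, (if k ∈ S then (1:ℝ) else 0) • R.simple k := by
    symm
    calc ∑ k, (if k ∈ S then (1:ℝ) else 0) • R.simple k
        = ∑ k, (if k ∈ S then R.simple k else 0) := by
          apply Finset.sum_congr rfl; intro k _
          by_cases hk : k ∈ S <;> simp [hk]
      _ = ∑ k ∈ Finset.univ ∩ S, R.simple k := Finset.sum_ite_mem _ _ _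
      _ = ∑ k ∈ S, R.simple k := by rw [Finset.univ_inter]
  rw [h1, co_sum]

/-- the sum of all simple roots is a root -/
lemma sigma_root (hSL : R.IsSimplyLaced) (hirr : R.IsIrreducible) (i₀ : I) :
    (∑ k, R.simple k) ∈ R.roots := by
  classical
  -- family of "connected" subsets
  set Fam : Finset (Finset I) :=
    Finset.univ.powerset.filter (fun S => S.Nonempty ∧ (∑ k ∈ S, R.simple k) ∈ R.roots)
    with hFam
  have hFamNe : Fam.Nonempty := by
    refine ⟨{i₀}, ?_⟩
    rw [hFam, Finset.mem_filter]
    refine ⟨Finset.mem_powerset.mpr (Finset.subset_univ _), ⟨i₀, Finset.mem_singleton_self i₀⟩, ?_⟩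
    rw [Finset.sum_singleton]
    exact R.simple_mem i₀
  obtain ⟨S, hSFam, hSmax⟩ := Fam.exists_max_image (fun S => S.card) hFamNe
  rw [hFam, Finset.mem_filter] at hSFam
  obtain ⟨-, hSne, hSroot⟩ := hSFam
  by_cases hSuniv : S = Finset.univ
  · rwa [hSuniv] at hSroot
  · exfalso
    -- use irreducibility to find an adjacent vertex outside S
    have hnotall : ¬(∀ k ∈ (↑S : Set I), ∀ j ∉ (↑S : Set I), ⟪R.simple k, R.simple j⟫_ℝ = 0) := by
      intro hcon
      rcases hirr (↑S) hcon with h0 | huniv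
      · obtain ⟨x, hx⟩ := hSne
        have : x ∈ (↑S : Set I) := hx
        rw [h0] at this
        exact this
      · apply hSuniv
        apply Finset.coe_injective
        rw [huniv, Finset.coe_univ]
    push_neg at hnotall
    obtain ⟨k, hkS, j, hjS, hkj⟩ := hnotall
    have hkS' : k ∈ S := hkS
    have hjS' : j ∉ S := hjS
    set β := ∑ m ∈ S, R.simple m with hβ
    -- pairing of β with simple j is negative
    have hpairneg : ⟪β, R.simple j⟫_ℝ < 0 := by
      rw [hβ, sum_inner]
      have hterms : ∀ m ∈ S, ⟪R.simple m, R.simple j⟫_ℝ ≤ 0 := by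
        intro m hm
        have hmj : m ≠ j := by rintro rfl; exact hjS' hm
        rcases simple_pair hSL hmj with h' | h' <;> rw [h'] <;> norm_num
      have hk0 : ⟪R.simple k, R.simple j⟫_ℝ < 0 := by
        have hkjne : k ≠ j := by rintro rfl; exact hjS' hkS'
        rcases simple_pair hSL hkjne with h' | h'
        · exact absurd h' hkj
        · rw [h']; norm_num
      calc ∑ m ∈ S, ⟪R.simple m, R.simple j⟫_ℝ
          = ⟪R.simple k, R.simple j⟫_ℝ + ∑ m ∈ S.erase k, ⟪R.simple m, R.simple j⟫_ℝ :=
            (Finset.add_sum_erase S _ hkS').symm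
        _ < 0 := by
            have : ∑ m ∈ S.erase k, ⟪R.simple m, R.simple j⟫_ℝ ≤ 0 :=
              Finset.sum_nonpos fun m hm => hterms m (Finset.mem_of_mem_erase hm)
            linarith
    -- β is a positive root, not ±simple j
    have hβpos : β ∈ R.posRoots := by
      apply pos_of_root_co_nonneg R hSroot
      intro m
      rw [hβ, co_subset_sum]
      by_cases hm : m ∈ S <;> simp [hm]
    have hβne : β ≠ R.simple j := by
      intro hcon
      have := co_subset_sum R S k
      rw [← hβ, hcon, co_simple, if_neg (fun hc : j = k => hjS' (hc ▸ hkS')), if_pos hkS'] at this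
      norm_num at this
    have hβnen : β ≠ -R.simple j := pos_ne_neg_simple R hβpos j
    have hpairm1 : ⟪β, R.simple j⟫_ℝ = -1 := by
      rcases pair_cases hSL hSroot (R.simple_mem j) hβne hβnen with h' | h' | h'
      · exact h'
      · rw [h'] at hpairneg; norm_num at hpairneg
      · rw [h'] at hpairneg; norm_num at hpairneg
    -- then β + simple j is a root, contradicting maximality
    have hnew : (∑ m ∈ insert j S, R.simple m) ∈ R.roots := by
      rw [Finset.sum_insert hjS']
      have := sref_root hSL (R.simple_mem j) hSroot
      rw [sref_apply, hpairm1] at this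
      have heq : β - (-1 : ℝ) • R.simple j = R.simple j + β := by
        rw [neg_one_smul]; abel
      rw [← heq]
      exact this
    have hmem : insert j S ∈ Fam := by
      rw [hFam, Finset.mem_filter]
      exact ⟨Finset.mem_powerset.mpr (Finset.subset_univ _),
        ⟨j, Finset.mem_insert_self j S⟩, hnew⟩
    have := hSmax _ hmem
    rw [Finset.card_insert_of_notMem hjS'] at this
    omega

end Stmt5Aux

namespace Stmt5Aux

set_option linter.unusedSectionVars false
set_option maxHeartbeats 1000000

open RootSystemData Finset

variable {V : Type*} [NormedAddCommGroup V] [InnerProductSpace ℝ V] [FiniteDimensional ℝ V]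
  {I : Type*} [Fintype I]

variable {R : RootSystemData V I}

lemma pivot (hSL : R.IsSimplyLaced) (hirr : R.IsIrreducible) {w : V ≃ₗᵢ[ℝ] V}
    (hwW : w ∈ R.weylGroup) (hlong : ∀ α ∈ R.posRoots, w α ∈ R.negRoots)
    {bar : I → I} (hbar : ∀ i, w (R.simple i) = -(R.simple (bar i))) (i₀ : I) :
    (∃ i, bar i = i) ∨ (∃ i, ¬(bar i = i) ∧ ⟪R.simple i, R.simple (bar i)⟫_ℝ = -1) := by
  classical
  set σ : V := ∑ k, R.simple k with hσ
  have hσroot : σ ∈ R.roots := sigma_root hSL hirr i₀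
  have hσpos : σ ∈ R.posRoots := by
    apply pos_of_root_co_nonneg R hσroot
    intro m
    rw [hσ, show (∑ k, R.simple k) = ∑ k ∈ Finset.univ, R.simple k from rfl, co_subset_sum]
    simp
  have hσF : w σ = -σ := by
    have h1 : w σ = ∑ k, -R.simple (bar k) := by
      rw [hσ, map_sum]
      exact Finset.sum_congr rfl fun k _ => hbar k
    have h2 : (∑ k, -R.simple (bar k)) = ∑ k, -R.simple k := by
      apply Finset.sum_nbij' (fun k => bar k) (fun k => bar k)
      · intro k _; exact Finset.mem_univ _
      · intro k _; exact Finset.mem_univ _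
      · intro k _; exact bar_invol hSL hwW hbar k
      · intro k _; exact bar_invol hSL hwW hbar k
      · intro k _; rfl
    rw [h1, h2, hσ, Finset.sum_neg_distrib]
  set Fpos : Finset V := R.posRoots.filter (fun α => w α = -α) with hFpos
  have hFne : Fpos.Nonempty := ⟨σ, Finset.mem_filter.mpr ⟨hσpos, hσF⟩⟩
  obtain ⟨αm, hαmF, hαmin⟩ := Fpos.exists_min_image (fun α => ∑ i, co R α i) hFne
  obtain ⟨hαpos, hαF⟩ := Finset.mem_filter.mp hαmF
  obtain ⟨k, hk1, hk2⟩ := pos_descent hSL hαpos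
  by_cases hbk : bar k = k
  · exact Or.inl ⟨k, hbk⟩
  have hαroot : αm ∈ R.roots := posRoots_sub_roots R hαpos
  have hαne : αm ≠ R.simple k := by
    intro hcon
    apply hbk
    have h1 : w (R.simple k) = -(R.simple k) := by rw [← hcon]; exact hαF
    rw [hbar k] at h1
    have h2 : R.simple (bar k) = R.simple k := by
      have := congrArg (fun x : V => -x) h1
      simpa using this
    exact simple_injective R h2
  have hpair1 : ⟪αm, R.simple k⟫_ℝ = 1 := by
    rcases pair_cases hSL hαroot (R.simple_mem k) hαne (pos_ne_neg_simple R hαpos k)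
      with h' | h' | h'
    · rw [h'] at hk2; norm_num at hk2
    · rw [h'] at hk2; norm_num at hk2
    · exact h'
  have hiota_fix : -(w αm) = αm := by rw [hαF, neg_neg]
  have hpairbar : ⟪αm, R.simple (bar k)⟫_ℝ = 1 := by
    have h1 := iota_pair hSL hwW hbar αm k
    rw [hiota_fix] at h1
    rw [← h1]
    exact hpair1
  have hkne : k ≠ bar k := fun h => hbk h.symm
  rcases simple_pair hSL hkne with h0 | hm1
  · -- orthogonal case: build a smaller element of Fpos, contradiction
    exfalso
    set β := αm - R.simple k - R.simple (bar k) with hβ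
    have hβroot : β ∈ R.roots := by
      have h1 : sref (R.simple k) αm = αm - R.simple k := by
        rw [sref_apply, hpair1, one_smul]
      have h2 := sref_root hSL (R.simple_mem k) hαroot
      rw [h1] at h2
      have h3 : ⟪αm - R.simple k, R.simple (bar k)⟫_ℝ = 1 := by
        rw [inner_sub_left, hpairbar, h0]
        ring
      have h4 := sref_root hSL (R.simple_mem (bar k)) h2
      rw [sref_apply, h3, one_smul] at h4
      rw [hβ]
      exact h4
    have hβF : w β = -β := by
      rw [hβ, map_sub, map_sub, hαF, hbar k, hbar (bar k), bar_invol hSL hwW hbar k]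
      abel
    have hβpos : β ∈ R.posRoots := by
      rcases root_pos_or_neg R hβroot with hp | hn
      · exact hp
      · exfalso
        have hco : ∀ m, co R β m ≤ 0 := by
          intro m
          have := pos_co_nonneg R ((mem_negRoots R).mp hn) m
          rw [co_neg] at this
          linarith
        have hcoβ : ∀ m, co R β m
            = co R αm m - (if k = m then 1 else 0) - (if bar k = m then 1 else 0) := by
          intro m
          rw [hβ, co_sub, co_sub, co_simple, co_simple]
        -- coefficients of αm vanish off {k, bar k}
        have hvanish : ∀ m, m ≠ k → m ≠ bar k → co R αm m = 0 := by
          intro m hm1 hm2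
          have h1 := hco m
          rw [hcoβ m, if_neg (fun h : k = m => hm1 h.symm),
            if_neg (fun h : bar k = m => hm2 h.symm)] at h1
          have h2 := pos_co_nonneg R hαpos m
          linarith
        -- co at bar k equals co at k
        have hcobar : co R αm (bar k) = co R αm k := by
          have := iota_co hSL hwW hbar αm k
          rw [hiota_fix] at this
          exact this.symm
        -- co at k is 1
        have hcok : co R αm k = 1 := by
          have h1 := hco k
          rw [hcoβ k, if_pos rfl, if_neg (fun h : bar k = k => hbk h)] at h1
          obtain ⟨n, hn⟩ := pos_co_int R hαpos k
          rw [hn] at hk1 h1 ⊢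
          have hn1 : n ≤ 1 := by exact_mod_cast (by linarith : (n:ℝ) ≤ 1)
          have hn0 : 1 ≤ n := by
            have : 0 < n := by exact_mod_cast hk1
            omega
          have : n = 1 := le_antisymm hn1 hn0
          rw [this]; norm_num
        -- αm = simple k + simple (bar k)
        have hαm_eq : αm = R.simple k + R.simple (bar k) := by
          rw [co_eq_iff R αm (R.simple k + R.simple (bar k))]
          intro m
          have hco_add : co R (R.simple k + R.simple (bar k)) m
              = (if k = m then 1 else 0) + (if bar k = m then 1 else 0) := by
            have : R.simple k + R.simple (bar k)
                = R.simple k - (-(R.simple (bar k))) := by abel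
            rw [this, co_sub, co_neg, co_simple, co_simple]
            ring
          rw [hco_add]
          by_cases hm1 : m = k
          · subst hm1
            rw [hcok, if_pos rfl, if_neg (fun h : bar m = m => hbk h)]
            norm_num
          · by_cases hm2 : m = bar k
            · subst hm2
              rw [hcobar, hcok, if_neg (fun h : k = bar k => hkne h), if_pos rfl]
              norm_num
            · rw [hvanish m hm1 hm2, if_neg (fun h : k = m => hm1 h.symm),
                if_neg (fun h : bar k = m => hm2 h.symm)]
              norm_num
        -- contradiction with hpair1
        rw [hαm_eq, inner_add_left, root_norm hSL (R.simple_mem k), real_inner_comm, h0]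
          at hpair1
        norm_num at hpair1
    -- β is in Fpos with smaller height
    have hβmem : β ∈ Fpos := Finset.mem_filter.mpr ⟨hβpos, hβF⟩
    have hht : (∑ i, co R β i) = (∑ i, co R αm i) - 2 := by
      rw [Finset.sum_congr rfl fun m (_ : m ∈ Finset.univ) => by
        rw [hβ, co_sub, co_sub, co_simple, co_simple]]
      rw [Finset.sum_sub_distrib, Finset.sum_sub_distrib]
      simp
      ring
    have := hαmin β hβmem
    rw [hht] at this
    linarith
  · exact Or.inr ⟨k, hbk, hm1⟩

end Stmt5Aux

namespace Stmt5Aux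

set_option linter.unusedSectionVars false
set_option maxHeartbeats 1000000

open RootSystemData Finset

variable {V : Type*} [NormedAddCommGroup V] [InnerProductSpace ℝ V] [FiniteDimensional ℝ V]
  {I : Type*} [Fintype I]

variable {R : RootSystemData V I}

lemma case_edge (hSL : R.IsSimplyLaced) {w : V ≃ₗᵢ[ℝ] V}
    (hwW : w ∈ R.weylGroup) (hlong : ∀ α ∈ R.posRoots, w α ∈ R.negRoots)
    {bar : I → I} (hbar : ∀ i, w (R.simple i) = -(R.simple (bar i)))
    {i : I} (hne : ¬ bar i = i)
    (hpair : ⟪R.simple i, R.simple (bar i)⟫_ℝ = -1) :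
    ∃ m : ℕ, (Aset R (R.simple i)).card = 2 * m + 1 := by
  classical
  set si := R.simple i with hsi
  set sj := R.simple (bar i) with hsj
  have hsiroot : si ∈ R.roots := R.simple_mem i
  have hsjroot : sj ∈ R.roots := R.simple_mem (bar i)
  have hpair' : ⟪sj, si⟫_ℝ = -1 := by rw [real_inner_comm]; exact hpair
  set S11 := R.posRoots.filter (fun α => ⟪α, si⟫_ℝ = 1 ∧ ⟪α, sj⟫_ℝ = 1) with hS11def
  set S10 := R.posRoots.filter (fun α => ⟪α, si⟫_ℝ = 1 ∧ ⟪α, sj⟫_ℝ = 0) with hS10def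
  set S1m := R.posRoots.filter (fun α => ⟪α, si⟫_ℝ = 1 ∧ ⟪α, sj⟫_ℝ = -1) with hS1mdef
  set Sm1 := R.posRoots.filter (fun α => ⟪α, si⟫_ℝ = -1 ∧ ⟪α, sj⟫_ℝ = 1) with hSm1def
  -- decomposition of Aset
  have hA : Aset R si = (S11 ∪ S10) ∪ S1m := by
    apply Finset.ext
    intro α
    simp only [Aset, hS11def, hS10def, hS1mdef, Finset.mem_filter, Finset.mem_union]
    constructor
    · rintro ⟨hp, h1⟩
      have hαroot : α ∈ R.roots := posRoots_sub_roots R hp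
      have hne1 : α ≠ sj := by
        intro hcon; rw [hcon, hpair'] at h1; norm_num at h1
      have hne2 : α ≠ -sj := pos_ne_neg_simple R hp (bar i)
      rcases pair_cases hSL hαroot hsjroot hne1 hne2 with h' | h' | h'
      · exact Or.inr ⟨hp, h1, h'⟩
      · exact Or.inl (Or.inr ⟨hp, h1, h'⟩)
      · exact Or.inl (Or.inl ⟨hp, h1, h'⟩)
    · rintro ((⟨hp, h1, _⟩ | ⟨hp, h1, _⟩) | ⟨hp, h1, _⟩) <;> exact ⟨hp, h1⟩
  have hd1 : Disjoint (S11 ∪ S10) S1m := by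
    rw [Finset.disjoint_left]
    intro α hα hα'
    have h2 := (Finset.mem_filter.mp hα').2.2
    rcases Finset.mem_union.mp hα with h | h <;>
      · have h1 := (Finset.mem_filter.mp h).2.2
        rw [h1] at h2; norm_num at h2
  have hd2 : Disjoint S11 S10 := by
    rw [Finset.disjoint_left]
    intro α hα hα'
    have h1 := (Finset.mem_filter.mp hα).2.2
    have h2 := (Finset.mem_filter.mp hα').2.2
    rw [h1] at h2; norm_num at h2
  have hcards : (Aset R si).card = S11.card + S10.card + S1m.card := by
    rw [hA, Finset.card_union_of_disjoint hd1, Finset.card_union_of_disjoint hd2]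
  -- bijection S10 ≃ Sm1 via sref si
  have hb1 : S10.card = Sm1.card := by
    apply Finset.card_bij (fun α _ => sref si α)
    · intro α hα
      obtain ⟨hp, h1, h2⟩ := Finset.mem_filter.mp hα
      have hne' : α ≠ si := by
        intro hcon
        rw [hcon] at h2
        rw [show ⟪si, sj⟫_ℝ = -1 from hpair] at h2
        norm_num at h2
      refine Finset.mem_filter.mpr ⟨sref_pos hSL hp i hne', ?_, ?_⟩
      · show ⟪sref si α, si⟫_ℝ = -1
        rw [sref_apply, inner_sub_left, real_inner_smul_left, root_norm hSL hsiroot, h1]; ring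
      · show ⟪sref si α, sj⟫_ℝ = 1
        rw [sref_apply, inner_sub_left, real_inner_smul_left, h1, hpair, h2]; ring
    · intro α hα β hβ hab
      have h2 : ⟪si, si⟫_ℝ = 2 := root_norm hSL hsiroot
      have := congrArg (sref si) hab
      rwa [sref_sref _ h2, sref_sref _ h2] at this
    · intro β hβ
      obtain ⟨hp, h1, h2⟩ := Finset.mem_filter.mp hβ
      have hne' : β ≠ si := by
        intro hcon; rw [hcon, root_norm hSL hsiroot] at h1; norm_num at h1
      refine ⟨sref si β, Finset.mem_filter.mpr ⟨sref_pos hSL hp i hne', ?_, ?_⟩,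
        sref_sref _ (root_norm hSL hsiroot) β⟩
      · show ⟪sref si β, si⟫_ℝ = 1
        rw [sref_apply, inner_sub_left, real_inner_smul_left, root_norm hSL hsiroot, h1]; ring
      · show ⟪sref si β, sj⟫_ℝ = 0
        rw [sref_apply, inner_sub_left, real_inner_smul_left, h1, hpair, h2]; ring
  -- bijection Sm1 ≃ S1m via α ↦ -(w α)
  have hbarbar : bar (bar i) = i := bar_invol hSL hwW hbar i
  have hb2 : Sm1.card = S1m.card := by
    apply Finset.card_bij (fun α _ => -(w α))
    · intro α hα
      obtain ⟨hp, h1, h2⟩ := Finset.mem_filter.mp hα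
      refine Finset.mem_filter.mpr ⟨iota_pos hSL hwW hlong hbar hp, ?_, ?_⟩
      · show ⟪-(w α), si⟫_ℝ = 1
        rw [hsi, iota_pair hSL hwW hbar, ← hsj, h2]
      · show ⟪-(w α), sj⟫_ℝ = -1
        rw [hsj, iota_pair hSL hwW hbar, hbarbar, ← hsi, h1]
    · intro α hα β hβ hab
      have := congrArg (fun x : V => -(w x)) hab
      rwa [map_neg, map_neg, w_w hSL hwW hbar, w_w hSL hwW hbar, neg_neg, neg_neg] at this
    · intro β hβ
      obtain ⟨hp, h1, h2⟩ := Finset.mem_filter.mp hβ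
      refine ⟨-(w β), Finset.mem_filter.mpr ⟨iota_pos hSL hwW hlong hbar hp, ?_, ?_⟩, ?_⟩
      · show ⟪-(w β), si⟫_ℝ = -1
        rw [hsi, iota_pair hSL hwW hbar, ← hsj, h2]
      · show ⟪-(w β), sj⟫_ℝ = 1
        rw [hsj, iota_pair hSL hwW hbar, hbarbar, ← hsi, h1]
      · rw [map_neg, w_w hSL hwW hbar, neg_neg]
  -- S11 is the singleton {si + sj}
  have hsum_root : si + sj ∈ R.roots := by
    have := sref_root hSL hsjroot hsiroot
    rw [sref_apply, hpair, neg_one_smul] at this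
    rw [show si + sj = si - -sj from by abel]
    exact this
  have hsum_pos : si + sj ∈ R.posRoots := by
    apply pos_of_root_co_nonneg R hsum_root
    intro m
    have : si + sj = si - (-sj) := by abel
    rw [this, co_sub, co_neg, hsi, hsj, co_simple, co_simple]
    split_ifs <;> norm_num
  have hnorm_sum : ⟪si + sj, si + sj⟫_ℝ = 2 := by
    rw [real_inner_add_add_self, root_norm hSL hsiroot, root_norm hSL hsjroot, hpair]
    ring
  have hS11 : S11 = {si + sj} := by
    apply Finset.ext
    intro α
    rw [Finset.mem_singleton]
    simp only [hS11def, Finset.mem_filter]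
    constructor
    · rintro ⟨hp, h1, h2⟩
      -- pairing of α with si + sj is 2
      have hpairsum : ⟪α, si + sj⟫_ℝ = 2 := by
        rw [inner_add_right, h1, h2]; norm_num
      -- conclude α = si + sj by norm considerations
      have hαroot : α ∈ R.roots := posRoots_sub_roots R hp
      have h0 : ⟪α - (si + sj), α - (si + sj)⟫_ℝ = 0 := by
        rw [real_inner_sub_sub_self, root_norm hSL hαroot, hnorm_sum, hpairsum]; ring
      have := inner_self_eq_zero.mp h0
      exact sub_eq_zero.mp this
    · rintro rfl
      refine ⟨hsum_pos, ?_, ?_⟩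
      · rw [inner_add_left, root_norm hSL hsiroot, hpair']; ring
      · rw [inner_add_left, hpair, root_norm hSL hsjroot]; ring
  refine ⟨S10.card, ?_⟩
  have h1 : S1m.card = S10.card := by rw [← hb2, ← hb1]
  rw [hcards, hS11, Finset.card_singleton, h1]
  omega

end Stmt5Aux

namespace Stmt5Aux

set_option linter.unusedSectionVars false
set_option maxHeartbeats 1000000

open RootSystemData Finset

variable {V : Type*} [NormedAddCommGroup V] [InnerProductSpace ℝ V] [FiniteDimensional ℝ V]
  {I : Type*} [Fintype I]

variable {R : RootSystemData V I}

/-- fold of reflections along a list -/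
noncomputable def fol (L : List V) (x : V) : V := L.foldr sref x

lemma fol_nil (x : V) : fol ([] : List V) x = x := rfl

lemma fol_cons (γ : V) (L : List V) (x : V) : fol (γ :: L) x = sref γ (fol L x) := rfl

lemma fol_exists_weyl (hSL : R.IsSimplyLaced) :
    ∀ (L : List V), (∀ γ ∈ L, γ ∈ R.roots) →
    ∃ u ∈ R.weylGroup, ∀ x, u x = fol L x := by
  intro L
  induction L with
  | nil => exact fun _ => ⟨1, Subgroup.one_mem _, fun x => rfl⟩
  | cons γ L' ih =>
    intro hmem
    obtain ⟨u', hu'W, hu'⟩ := ih (fun δ hδ => hmem δ (List.mem_cons_of_mem γ hδ))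
    obtain ⟨uγ, huγW, huγ⟩ := sref_mem_weyl hSL (hmem γ (List.mem_cons_self))
    refine ⟨uγ * u', Subgroup.mul_mem _ huγW hu'W, fun x => ?_⟩
    rw [mul_apply, hu', huγ, fol_cons]

lemma fol_comm_sref (L : List V) (γ : V) (h : ∀ δ ∈ L, ⟪γ, δ⟫_ℝ = 0) (x : V) :
    fol L (sref γ x) = sref γ (fol L x) := by
  induction L with
  | nil => rfl
  | cons δ L' ih =>
    rw [fol_cons, fol_cons, ih (fun ε hε => h ε (List.mem_cons_of_mem δ hε)),
      sref_comm δ γ (by rw [real_inner_comm]; exact h δ (List.mem_cons_self))]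

lemma fol_fol (L : List V) (hnorm : ∀ γ ∈ L, ⟪γ, γ⟫_ℝ = 2)
    (hpair : L.Pairwise (fun a b => ⟪a, b⟫_ℝ = 0)) (x : V) :
    fol L (fol L x) = x := by
  induction L with
  | nil => rfl
  | cons γ L' ih =>
    rw [fol_cons, fol_cons]
    rw [fol_comm_sref L' γ (fun δ hδ => (List.pairwise_cons.mp hpair).1 δ hδ)]
    rw [sref_sref _ (hnorm γ (List.mem_cons_self))]
    exact ih (fun δ hδ => hnorm δ (List.mem_cons_of_mem γ hδ)) (List.pairwise_cons.mp hpair).2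

lemma fol_orth (L : List V) (x : V) (h : ∀ γ ∈ L, ⟪x, γ⟫_ℝ = 0) : fol L x = x := by
  induction L with
  | nil => rfl
  | cons γ L' ih =>
    rw [fol_cons, ih (fun δ hδ => h δ (List.mem_cons_of_mem γ hδ)),
      sref_orth γ x (h γ (List.mem_cons_self))]

lemma fol_mem_neg (L : List V) (hnorm : ∀ γ ∈ L, ⟪γ, γ⟫_ℝ = 2)
    (hpair : L.Pairwise (fun a b => ⟪a, b⟫_ℝ = 0)) {γ₀ : V} (hmem : γ₀ ∈ L) :
    fol L γ₀ = -γ₀ := by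
  induction L with
  | nil => exact absurd hmem List.not_mem_nil
  | cons γ L' ih =>
    rw [fol_cons]
    rcases List.mem_cons.mp hmem with rfl | hmem'
    · rw [fol_orth L' γ₀ (fun δ hδ => (List.pairwise_cons.mp hpair).1 δ hδ),
        sref_self _ (hnorm γ₀ (List.mem_cons_self))]
    · rw [ih (fun δ hδ => hnorm δ (List.mem_cons_of_mem γ hδ))
        (List.pairwise_cons.mp hpair).2 hmem', sref_neg]
      congr 1
      apply sref_orth
      rw [real_inner_comm]
      exact (List.pairwise_cons.mp hpair).1 γ₀ hmem'

lemma w_comm_fol {w : V ≃ₗᵢ[ℝ] V} (L : List V) (hw : ∀ γ ∈ L, w γ = -γ) (x : V) :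
    w (fol L x) = fol L (w x) := by
  induction L with
  | nil => rfl
  | cons γ L' ih =>
    rw [fol_cons, fol_cons, isom_conj_sref, hw γ (List.mem_cons_self), sref_neg_vec,
      ih (fun δ hδ => hw δ (List.mem_cons_of_mem γ hδ))]

end Stmt5Aux

namespace Stmt5Aux

set_option linter.unusedSectionVars false
set_option maxHeartbeats 4000000

open RootSystemData Finset

variable {V : Type*} [NormedAddCommGroup V] [InnerProductSpace ℝ V] [FiniteDimensional ℝ V]
  {I : Type*} [Fintype I]

variable {R : RootSystemData V I}

lemma neg_not_pos (R : RootSystemData V I) {α : V} (h : α ∈ R.posRoots) :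
    -α ∉ R.posRoots := by
  intro hcon
  have h1 : α ∈ R.negRoots := by rw [mem_negRoots]; exact hcon
  exact not_pos_and_neg R (posRoots_sub_roots R h) ⟨h, h1⟩

/-- sign preservation of sref si on roots not proportional to si -/
lemma sref_pres (hSL : R.IsSimplyLaced) {i : I} {β : V} (hβ : β ∈ R.roots)
    (hpm : ⟪β, R.simple i⟫_ℝ = 1 ∨ ⟪β, R.simple i⟫_ℝ = -1) :
    (sref (R.simple i) β ∈ R.posRoots ↔ β ∈ R.posRoots) := by
  have hsiroot := R.simple_mem i
  have hβne : β ≠ R.simple i := by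
    rintro rfl
    rw [root_norm hSL hsiroot] at hpm
    rcases hpm with h | h <;> norm_num at h
  constructor
  · intro hpos
    rcases root_pos_or_neg R hβ with hp | hn
    · exact hp
    · exfalso
      have hmβ : -β ∈ R.posRoots := (mem_negRoots R).mp hn
      have hmβne : -β ≠ R.simple i := by
        intro hcon
        rw [← hcon, inner_neg_right, root_norm hSL hβ] at hpm
        rcases hpm with h | h <;> norm_num at h
      have := sref_pos hSL hmβ i hmβne
      rw [sref_neg] at this
      exact neg_not_pos R hpos this
  · intro hpos
    exact sref_pos hSL hpos i hβne

lemma case_fixed (hSL : R.IsSimplyLaced) {w : V ≃ₗᵢ[ℝ] V}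
    (hwW : w ∈ R.weylGroup) (hlong : ∀ α ∈ R.posRoots, w α ∈ R.negRoots)
    {bar : I → I} (hbar : ∀ i, w (R.simple i) = -(R.simple (bar i)))
    {i : I} (hfix : bar i = i) :
    ∃ m : ℕ, (Aset R (R.simple i)).card = 2 * m := by
  classical
  set si := R.simple i with hsi
  have hsiroot : si ∈ R.roots := R.simple_mem i
  have hsinorm : ⟪si, si⟫_ℝ = 2 := root_norm hSL hsiroot
  have hwsi : w si = -si := by rw [hsi, hbar i, hfix]
  have hww : ∀ x, w (w x) = x := w_w hSL hwW hbar
  have hsine : si ≠ 0 := root_ne_zero R hsiroot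
  set iot : V → V := fun α => -(w α) with hiot
  have hiotw : ∀ α, iot α = α ↔ w α = -α := by
    intro α
    constructor
    · intro h
      have h2 : w α = -(iot α) := (neg_neg (w α)).symm
      rw [h2, h]
    · intro h; show -(w α) = α; rw [h, neg_neg]
  -- parity reduction to the ι-fixed part
  have hiotA : ∀ α ∈ Aset R si, iot α ∈ Aset R si := by
    intro α hα
    obtain ⟨hp, h1⟩ := Finset.mem_filter.mp hα
    refine Finset.mem_filter.mpr ⟨iota_pos hSL hwW hlong hbar hp, ?_⟩
    show ⟪-(w α), si⟫_ℝ = 1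
    rw [hsi, iota_pair hSL hwW hbar, hfix, ← hsi, h1]
  have hiotinv : ∀ α ∈ Aset R si, iot (iot α) = α := fun α _ => by
    show -(w (-(w α))) = α
    rw [map_neg, hww, neg_neg]
  have hpar1 := invol_card (Aset R si) iot hiotA hiotinv
  set FA := (Aset R si).filter (fun α => iot α = α) with hFA
  suffices hFAeven : ∃ m, FA.card = 2 * m by
    obtain ⟨m, hm⟩ := hFAeven
    have h2 := hpar1
    unfold Nat.ModEq at h2
    rw [hm] at h2
    refine ⟨(Aset R si).card / 2, ?_⟩
    omega
  -- the ι-fixed part of Tset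
  set FT := (Tset R si).filter (fun α => iot α = α) with hFT
  have hFTmem : ∀ α, α ∈ FT ↔
      α ∈ R.posRoots ∧ (⟪α, si⟫_ℝ = 1 ∨ ⟪α, si⟫_ℝ = -1) ∧ w α = -α := by
    intro α
    rw [hFT, Finset.mem_filter]
    constructor
    · rintro ⟨h1, h2⟩
      obtain ⟨h3, h4⟩ := Finset.mem_filter.mp h1
      exact ⟨h3, h4, (hiotw α).mp h2⟩
    · rintro ⟨h1, h2, h3⟩
      exact ⟨Finset.mem_filter.mpr ⟨h1, h2⟩, (hiotw α).mpr h3⟩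
  -- FT.card = 2 * FA.card
  set FB := (R.posRoots.filter (fun α => ⟪α, si⟫_ℝ = -1)).filter (fun α => iot α = α) with hFB
  have hFsplit : FT.card = FA.card + FB.card := by
    have hun : FT = FA ∪ FB := by
      apply Finset.ext
      intro α
      rw [hFT, hFA, hFB]
      simp only [Tset, Aset, Finset.mem_filter, Finset.mem_union]
      tauto
    rw [hun, Finset.card_union_of_disjoint]
    rw [Finset.disjoint_left]
    intro α h1 h2
    have e1 := (Finset.mem_filter.mp ((Finset.mem_filter.mp h1).1)).2
    have e2 := (Finset.mem_filter.mp ((Finset.mem_filter.mp h2).1)).2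
    rw [e1] at e2
    norm_num at e2
  have hFstab : ∀ α, w α = -α → w (sref si α) = -(sref si α) := by
    intro α hα
    rw [isom_conj_sref, hwsi, sref_neg_vec, hα, sref_neg]
  have hFbij : FB.card = FA.card := by
    apply Finset.card_bij (fun α _ => sref si α)
    · intro α hα
      obtain ⟨h1, h2⟩ := Finset.mem_filter.mp hα
      obtain ⟨h3, h4⟩ := Finset.mem_filter.mp h1
      have hne : α ≠ si := by
        intro hcon; rw [hcon, hsinorm] at h4; norm_num at h4
      refine Finset.mem_filter.mpr ⟨Finset.mem_filter.mpr ⟨sref_pos hSL h3 i hne, ?_⟩, ?_⟩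
      · show ⟪sref si α, si⟫_ℝ = 1
        rw [sref_apply, inner_sub_left, real_inner_smul_left, hsinorm, h4]; ring
      · show iot (sref si α) = sref si α
        rw [hiotw]
        exact hFstab α ((hiotw α).mp h2)
    · intro α hα β hβ hab
      have := congrArg (sref si) hab
      rwa [sref_sref _ hsinorm, sref_sref _ hsinorm] at this
    · intro β hβ
      obtain ⟨h1, h2⟩ := Finset.mem_filter.mp hβ
      obtain ⟨h3, h4⟩ := Finset.mem_filter.mp h1
      have hne : β ≠ si := by
        intro hcon; rw [hcon, hsinorm] at h4; norm_num at h4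
      refine ⟨sref si β, Finset.mem_filter.mpr ⟨Finset.mem_filter.mpr
        ⟨sref_pos hSL h3 i hne, ?_⟩, ?_⟩, sref_sref _ hsinorm β⟩
      · show ⟪sref si β, si⟫_ℝ = -1
        rw [sref_apply, inner_sub_left, real_inner_smul_left, hsinorm, h4]; ring
      · show iot (sref si β) = sref si β
        rw [hiotw]
        exact hFstab β ((hiotw β).mp h2)
  -- maximal orthogonal family
  set Fams : Finset (Finset V) := R.posRoots.powerset.filter
    (fun G => (∀ γ ∈ G, w γ = -γ ∧ ⟪γ, si⟫_ℝ = 0) ∧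
              (∀ γ ∈ G, ∀ γ' ∈ G, γ ≠ γ' → ⟪γ, γ'⟫_ℝ = 0)) with hFams
  have hFamsNe : Fams.Nonempty := by
    refine ⟨∅, ?_⟩
    rw [hFams, Finset.mem_filter]
    refine ⟨Finset.empty_mem_powerset _, ?_, ?_⟩ <;> intro γ hγ <;>
      exact absurd hγ (Finset.notMem_empty γ)
  obtain ⟨G, hGFams, hGmax⟩ := Fams.exists_max_image (fun S => S.card) hFamsNe
  rw [hFams, Finset.mem_filter, Finset.mem_powerset] at hGFams
  obtain ⟨hGsub, hGprop, hGorth⟩ := hGFams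
  set L := G.toList with hL
  have hLmem : ∀ γ, γ ∈ L ↔ γ ∈ G := fun γ => Finset.mem_toList
  have hLroots : ∀ γ ∈ L, γ ∈ R.roots := fun γ hγ =>
    posRoots_sub_roots R (hGsub ((hLmem γ).mp hγ))
  have hLnorm : ∀ γ ∈ L, ⟪γ, γ⟫_ℝ = 2 := fun γ hγ => root_norm hSL (hLroots γ hγ)
  have hLw : ∀ γ ∈ L, w γ = -γ := fun γ hγ => (hGprop γ ((hLmem γ).mp hγ)).1
  have hLsi : ∀ γ ∈ L, ⟪γ, si⟫_ℝ = 0 := fun γ hγ => (hGprop γ ((hLmem γ).mp hγ)).2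
  have hLpair : L.Pairwise (fun a b => ⟪a, b⟫_ℝ = 0) := by
    have hnd : L.Pairwise (fun a b => a ≠ b) := G.nodup_toList
    exact List.Pairwise.imp_of_mem
      (fun {a b} ha hb hne => hGorth a ((hLmem a).mp ha) b ((hLmem b).mp hb) hne) hnd
  -- the involution u
  obtain ⟨uL, huLW, huL⟩ := fol_exists_weyl hSL L hLroots
  set u := w * R.refl i * uL with hu
  have huW : u ∈ R.weylGroup :=
    Subgroup.mul_mem _ (Subgroup.mul_mem _ hwW (Subgroup.subset_closure ⟨i, rfl⟩)) huLW
  have huapp : ∀ x, u x = w (sref si (fol L x)) := by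
    intro x
    show w (R.refl i (uL x)) = _
    rw [huL, refl_eq_sref hSL, ← hsi]
  have hwsref : ∀ y, w (sref si y) = sref si (w y) := fun y => by
    rw [isom_conj_sref, hwsi, sref_neg_vec]
  have hfol_si : fol L si = si :=
    fol_orth L si (fun γ hγ => by rw [real_inner_comm]; exact hLsi γ hγ)
  have husi : u si = si := by
    rw [huapp, hfol_si, sref_self _ hsinorm, map_neg, hwsi, neg_neg]
  have huγ : ∀ γ ∈ G, u γ = γ := by
    intro γ hγ
    rw [huapp, fol_mem_neg L hLnorm hLpair ((hLmem γ).mpr hγ), sref_neg,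
      sref_orth si γ (hLsi γ ((hLmem γ).mpr hγ)), map_neg, hLw γ ((hLmem γ).mpr hγ), neg_neg]
  have hperp : ∀ δ ∈ L, ⟪si, δ⟫_ℝ = 0 := fun δ hδ => by
    rw [real_inner_comm]; exact hLsi δ hδ
  have huinv_pt : ∀ x, u (u x) = x := by
    intro x
    have e0 : u (u x) = w (sref si (fol L (w (sref si (fol L x))))) := by rw [huapp, huapp]
    rw [e0, ← w_comm_fol L hLw (sref si (fol L x)), fol_comm_sref L si hperp (fol L x),
      fol_fol L hLnorm hLpair, hwsref, hww, sref_sref _ hsinorm]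
  have huinv : u * u = 1 := by
    ext x
    rw [mul_apply, one_apply]
    exact huinv_pt x
  -- u is the identity by maximality of G
  have hu1 : u = 1 := by
    by_contra hne1
    obtain ⟨δ, hδroot, hδneg⟩ := negated_root_exists hSL huW huinv hne1
    have hδsi : ⟪δ, si⟫_ℝ = 0 := by
      have h1 := LinearIsometryEquiv.inner_map_map u δ si
      rw [hδneg, husi, inner_neg_left] at h1
      linarith
    have hδG : ∀ γ ∈ G, ⟪δ, γ⟫_ℝ = 0 := by
      intro γ hγ
      have h1 := LinearIsometryEquiv.inner_map_map u δ γ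
      rw [hδneg, huγ γ hγ, inner_neg_left] at h1
      linarith
    have hδw : w δ = -δ := by
      have h1 := huapp δ
      rw [fol_orth L δ (fun γ hγ => hδG γ ((hLmem γ).mp hγ)), sref_orth si δ hδsi, hδneg] at h1
      exact h1.symm
    obtain ⟨δ', hδ'pos, hδ'w, hδ'si, hδ'G⟩ :
        ∃ δ', δ' ∈ R.posRoots ∧ w δ' = -δ' ∧ ⟪δ', si⟫_ℝ = 0 ∧ ∀ γ ∈ G, ⟪δ', γ⟫_ℝ = 0 := by
      rcases root_pos_or_neg R hδroot with hp | hn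
      · exact ⟨δ, hp, hδw, hδsi, hδG⟩
      · refine ⟨-δ, (mem_negRoots R).mp hn, ?_, ?_, ?_⟩
        · rw [map_neg, hδw, neg_neg]
        · rw [inner_neg_left, hδsi]; ring
        · intro γ hγ; rw [inner_neg_left, hδG γ hγ]; ring
    have hδ'notG : δ' ∉ G := by
      intro hcon
      have h1 := hδ'G δ' hcon
      rw [root_norm hSL (posRoots_sub_roots R hδ'pos)] at h1
      norm_num at h1
    have hnew : insert δ' G ∈ Fams := by
      rw [hFams, Finset.mem_filter, Finset.mem_powerset]
      refine ⟨?_, ?_, ?_⟩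
      · intro x hx
        rcases Finset.mem_insert.mp hx with rfl | hx
        · exact hδ'pos
        · exact hGsub hx
      · intro γ hγ
        rcases Finset.mem_insert.mp hγ with rfl | hγ
        · exact ⟨hδ'w, hδ'si⟩
        · exact hGprop γ hγ
      · intro a ha b hb hne2
        rcases Finset.mem_insert.mp ha with ha' | ha'
        · rcases Finset.mem_insert.mp hb with hb' | hb'
          · exact absurd (ha'.trans hb'.symm) hne2
          · rw [ha']; exact hδ'G b hb'
        · rcases Finset.mem_insert.mp hb with hb' | hb'
          · rw [hb', real_inner_comm]; exact hδ'G a ha'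
          · exact hGorth a ha' b hb' hne2
    have h2 := hGmax _ hnew
    rw [Finset.card_insert_of_notMem hδ'notG] at h2
    omega
  -- the terminal set is empty
  have hM : FT.filter (fun α => ∀ γ ∈ L, ⟪α, γ⟫_ℝ = 0) = ∅ := by
    rw [Finset.eq_empty_iff_forall_notMem]
    intro α hα
    obtain ⟨hαT, hαG⟩ := Finset.mem_filter.mp hα
    obtain ⟨hαpos, hαval, hαw⟩ := (hFTmem α).mp hαT
    have h1 := huapp α
    rw [hu1, one_apply, fol_orth L α hαG] at h1
    -- α = w (sref si α) = -α + ⟪α,si⟫ si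
    rw [sref_apply, map_sub, map_smul, hαw, hwsi] at h1
    have h2 : (2:ℝ) • α = ⟪α, si⟫_ℝ • si := by
      linear_combination (norm := module) h1
    have h3 : ⟪(2:ℝ) • α, (2:ℝ) • α⟫_ℝ = 8 := by
      rw [real_inner_smul_left, real_inner_smul_right,
        root_norm hSL (posRoots_sub_roots R hαpos)]
      ring
    rw [h2, real_inner_smul_left, real_inner_smul_right, hsinorm] at h3
    rcases hαval with h' | h' <;> rw [h'] at h3 <;> norm_num at h3
  -- the Klein chain
  have hchain : ∀ P : List V,
      (∀ γ ∈ P, γ ∈ R.posRoots ∧ w γ = -γ ∧ ⟪γ, si⟫_ℝ = 0) →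
      P.Pairwise (fun a b => ⟪a, b⟫_ℝ = 0) →
      FT.card ≡ (FT.filter (fun α => ∀ γ ∈ P, ⟪α, γ⟫_ℝ = 0)).card [MOD 4] := by
    intro P
    induction P with
    | nil =>
      intro _ _
      have : FT.filter (fun α => ∀ γ ∈ ([] : List V), ⟪α, γ⟫_ℝ = 0) = FT :=
        Finset.filter_true_of_mem (fun α _ => fun γ hγ => absurd hγ List.not_mem_nil)
      rw [this]
    | cons γ P' ih =>
      intro hprop hpair
      have hγpos : γ ∈ R.posRoots := (hprop γ (List.mem_cons_self)).1
      have hγw : w γ = -γ := (hprop γ (List.mem_cons_self)).2.1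
      have hγsi : ⟪γ, si⟫_ℝ = 0 := (hprop γ (List.mem_cons_self)).2.2
      have hγroot : γ ∈ R.roots := posRoots_sub_roots R hγpos
      have hγnorm : ⟪γ, γ⟫_ℝ = 2 := root_norm hSL hγroot
      have hγP' : ∀ δ ∈ P', ⟪γ, δ⟫_ℝ = 0 := (List.pairwise_cons.mp hpair).1
      have hstep1 := ih (fun δ hδ => hprop δ (List.mem_cons_of_mem γ hδ))
        (List.pairwise_cons.mp hpair).2
      set X := FT.filter (fun α => ∀ δ ∈ P', ⟪α, δ⟫_ℝ = 0) with hX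
      set f : V → V := fun α => sref si α with hf
      set g : V → V := fun α => if sref γ α ∈ R.posRoots then sref γ α else -(sref γ α) with hg
      -- membership facts for X
      have hXmem : ∀ α, α ∈ X ↔ α ∈ R.posRoots ∧ (⟪α, si⟫_ℝ = 1 ∨ ⟪α, si⟫_ℝ = -1) ∧
          w α = -α ∧ ∀ δ ∈ P', ⟪α, δ⟫_ℝ = 0 := by
        intro α
        rw [hX, Finset.mem_filter, hFTmem]
        tauto
      -- f preserves X
      have hfX : ∀ α ∈ X, f α ∈ X := by
        intro α hα
        obtain ⟨h1, h2, h3, h4⟩ := (hXmem α).mp hα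
        have hne : α ≠ si := by
          intro hcon; rw [hcon, hsinorm] at h2; rcases h2 with h' | h' <;> norm_num at h'
        rw [hXmem]
        refine ⟨sref_pos hSL h1 i hne, ?_, hFstab α h3, ?_⟩
        · show ⟪sref si α, si⟫_ℝ = 1 ∨ ⟪sref si α, si⟫_ℝ = -1
          rw [sref_apply, inner_sub_left, real_inner_smul_left, hsinorm]
          rcases h2 with h' | h' <;> rw [h'] <;> [right; left] <;> ring
        · intro δ hδ
          show ⟪sref si α, δ⟫_ℝ = 0
          rw [sref_apply, inner_sub_left, real_inner_smul_left, h4 δ hδ]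
          have : ⟪si, δ⟫_ℝ = 0 := by
            rw [real_inner_comm]
            exact (hprop δ (List.mem_cons_of_mem γ hδ)).2.2
          rw [this]
          ring
      -- g preserves X
      have hgdef : ∀ β : V, g β = if sref γ β ∈ R.posRoots then sref γ β else -(sref γ β) :=
        fun β => rfl
      have hfdef : ∀ β : V, f β = sref si β := fun β => rfl
      have hgval : ∀ α : V, g α = sref γ α ∨ g α = -(sref γ α) := by
        intro α
        by_cases hc : sref γ α ∈ R.posRoots
        · left; rw [hgdef, if_pos hc]
        · right; rw [hgdef, if_neg hc]
      have hgX : ∀ α ∈ X, g α ∈ X := by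
        intro α hα
        obtain ⟨h1, h2, h3, h4⟩ := (hXmem α).mp hα
        have hroot : sref γ α ∈ R.roots := sref_root hSL hγroot (posRoots_sub_roots R h1)
        have hgpos : g α ∈ R.posRoots := by
          rw [hgdef]
          by_cases hc : sref γ α ∈ R.posRoots
          · rw [if_pos hc]; exact hc
          · rw [if_neg hc]
            rcases root_pos_or_neg R hroot with hp | hn
            · exact absurd hp hc
            · exact (mem_negRoots R).mp hn
        have hpairval : ⟪sref γ α, si⟫_ℝ = ⟪α, si⟫_ℝ := by
          rw [sref_apply, inner_sub_left, real_inner_smul_left, hγsi]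
          ring
        have hwg : w (sref γ α) = -(sref γ α) := by
          rw [isom_conj_sref, hγw, sref_neg_vec, h3, sref_neg]
        rw [hXmem]
        refine ⟨hgpos, ?_, ?_, ?_⟩
        · rcases hgval α with h' | h' <;> rw [h']
          · rw [hpairval]; exact h2
          · rw [inner_neg_left, hpairval]
            rcases h2 with h'' | h'' <;> rw [h''] <;> [right; left] <;> ring
        · rcases hgval α with h' | h' <;> rw [h']
          · exact hwg
          · rw [map_neg, hwg, neg_neg]
        · intro δ hδ
          have hορ : ⟪sref γ α, δ⟫_ℝ = 0 := by
            rw [sref_apply, inner_sub_left, real_inner_smul_left, h4 δ hδ, hγP' δ hδ]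
            ring
          rcases hgval α with h' | h' <;> rw [h']
          · exact hορ
          · rw [inner_neg_left, hορ]; ring
      -- involutivity
      have hffX : ∀ α ∈ X, f (f α) = α := fun α _ => sref_sref _ hsinorm α
      have hggX : ∀ α ∈ X, g (g α) = α := by
        intro α hα
        obtain ⟨h1, -, -, -⟩ := (hXmem α).mp hα
        by_cases hc : sref γ α ∈ R.posRoots
        · have e1 : g α = sref γ α := by rw [hgdef, if_pos hc]
          rw [hgdef (g α), e1, sref_sref _ hγnorm, if_pos h1]
        · have e1 : g α = -(sref γ α) := by rw [hgdef, if_neg hc]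
          rw [hgdef (g α), e1, sref_neg, sref_sref _ hγnorm, if_neg (neg_not_pos R h1), neg_neg]
      -- commutativity
      have hcommX : ∀ α ∈ X, f (g α) = g (f α) := by
        intro α hα
        obtain ⟨h1, h2, h3, h4⟩ := (hXmem α).mp hα
        have hroot : sref γ α ∈ R.roots := sref_root hSL hγroot (posRoots_sub_roots R h1)
        have hswap : sref γ (sref si α) = sref si (sref γ α) := sref_comm γ si hγsi α
        have hpairval : ⟪sref γ α, si⟫_ℝ = ⟪α, si⟫_ℝ := by
          rw [sref_apply, inner_sub_left, real_inner_smul_left, hγsi]; ring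
        have hpres := sref_pres hSL hroot (by rw [hpairval]; exact h2)
        rw [← hsi] at hpres
        by_cases hc : sref γ α ∈ R.posRoots
        · have e1 : g α = sref γ α := by rw [hgdef, if_pos hc]
          rw [hfdef (g α), e1, hgdef (f α), hfdef α, hswap, if_pos (hpres.mpr hc)]
        · have e1 : g α = -(sref γ α) := by rw [hgdef, if_neg hc]
          rw [hfdef (g α), e1, sref_neg, hgdef (f α), hfdef α, hswap,
            if_neg (fun hcon => hc (hpres.mp hcon))]
      -- f fixed point free
      have hfne : ∀ α ∈ X, f α ≠ α := by
        intro α hα hcon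
        obtain ⟨h1, h2, _, _⟩ := (hXmem α).mp hα
        rw [hfdef, sref_apply] at hcon
        have h5 : ⟪α, si⟫_ℝ • si = 0 := by
          linear_combination (norm := module) -hcon
        rcases smul_eq_zero.mp h5 with h' | h'
        · rcases h2 with h'' | h'' <;> rw [h''] at h' <;> norm_num at h'
        · exact hsine h'
      -- f ≠ g pointwise
      have hfg : ∀ α ∈ X, f α ≠ g α := by
        intro α hα hcon
        obtain ⟨h1, h2, h3, h4⟩ := (hXmem α).mp hα
        have hαroot : α ∈ R.roots := posRoots_sub_roots R h1
        rw [hfdef] at hcon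
        rcases hgval α with h' | h' <;> rw [h'] at hcon
        · -- sref si α = sref γ α
          have h5 : ⟪α, si⟫_ℝ • si = ⟪α, γ⟫_ℝ • γ := by
            rw [sref_apply, sref_apply] at hcon
            linear_combination (norm := module) -hcon
          have h6 := congrArg (fun v => ⟪v, si⟫_ℝ) h5
          simp only [real_inner_smul_left] at h6
          rw [hsinorm, hγsi] at h6
          rcases h2 with h'' | h'' <;> rw [h''] at h6 <;> norm_num at h6
        · -- sref si α = -(sref γ α): 2α = c si + t γ
          have h5 : (2:ℝ) • α = ⟪α, si⟫_ℝ • si + ⟪α, γ⟫_ℝ • γ := by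
            rw [sref_apply, sref_apply] at hcon
            linear_combination (norm := module) hcon
          have h6 := congrArg (fun v => ⟪v, v⟫_ℝ) h5
          simp only [inner_add_left, inner_add_right, real_inner_smul_left,
            real_inner_smul_right] at h6
          rw [hsinorm, hγnorm, hγsi, root_norm hSL hαroot, real_inner_comm γ si, hγsi] at h6
          obtain ⟨n, hn⟩ := pair_int hSL hαroot hγroot
          obtain ⟨hb1, hb2⟩ := pair_sq_le hSL hαroot hγroot
          rw [hn] at h6 hb1 hb2
          have hc2 : ⟪α, si⟫_ℝ * ⟪α, si⟫_ℝ = 1 := by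
            rcases h2 with h'' | h'' <;> rw [h''] <;> norm_num
          have hn3 : (n:ℝ) * n = 3 := by nlinarith [h6, hc2]
          have hnb1 : -2 ≤ n := by exact_mod_cast hb1
          have hnb2 : n ≤ 2 := by exact_mod_cast hb2
          have : (n * n : ℤ) = 3 := by exact_mod_cast hn3
          interval_cases n <;> omega
      -- identify the g-fixed filter
      have hgfix : X.filter (fun α => g α = α)
          = FT.filter (fun α => ∀ δ ∈ (γ :: P'), ⟪α, δ⟫_ℝ = 0) := by
        apply Finset.ext
        intro α
        simp only [hX, Finset.mem_filter]
        constructor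
        · rintro ⟨⟨hαFT, hαP'⟩, hαfix⟩
          refine ⟨hαFT, ?_⟩
          intro δ hδ
          rcases List.mem_cons.mp hδ with rfl | hδ'
          · -- ⟪α, γ⟫ = 0 from g α = α
            obtain ⟨h1, h2, h3⟩ := (hFTmem α).mp hαFT
            by_cases hc : sref δ α ∈ R.posRoots
            · rw [hgdef, if_pos hc] at hαfix
              have h5 : ⟪α, δ⟫_ℝ • δ = 0 := by
                rw [sref_apply] at hαfix
                linear_combination (norm := module) -hαfix
              rcases smul_eq_zero.mp h5 with h' | h'
              · exact h'
              · exact absurd h' (root_ne_zero R hγroot)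
            · rw [hgdef, if_neg hc] at hαfix
              exfalso
              have h5 : (2:ℝ) • α = ⟪α, δ⟫_ℝ • δ := by
                rw [sref_apply] at hαfix
                linear_combination (norm := module) -hαfix
              have h6 := congrArg (fun v => ⟪v, v⟫_ℝ) h5
              simp only [real_inner_smul_left, real_inner_smul_right] at h6
              rw [hγnorm, root_norm hSL (posRoots_sub_roots R h1)] at h6
              have ht2 : ⟪α, δ⟫_ℝ * ⟪α, δ⟫_ℝ = 4 := by nlinarith [h6]
              -- pair with si
              have h7 := congrArg (fun v => ⟪v, si⟫_ℝ) h5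
              simp only [real_inner_smul_left] at h7
              rw [hγsi] at h7
              rcases h2 with h'' | h'' <;> rw [h''] at h7 <;> norm_num at h7
          · exact hαP' δ hδ'
        · rintro ⟨hαFT, hαall⟩
          have hαγ : ⟪α, γ⟫_ℝ = 0 := hαall γ (List.mem_cons_self)
          refine ⟨⟨hαFT, fun δ hδ => hαall δ (List.mem_cons_of_mem γ hδ)⟩, ?_⟩
          have heq : sref γ α = α := sref_orth γ α hαγ
          rw [hgdef, heq, if_pos ((hFTmem α).mp hαFT).1]
      -- apply the Klein lemma
      have hstep2 := klein_card X f g hfX hgX hffX hggX hcommX hfne hfg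
      rw [hgfix] at hstep2
      exact hstep1.trans hstep2
  -- conclude
  have hfinal := hchain L (fun γ hγ => ⟨hGsub ((hLmem γ).mp hγ), (hGprop γ ((hLmem γ).mp hγ)).1,
    (hGprop γ ((hLmem γ).mp hγ)).2⟩) hLpair
  rw [hM] at hfinal
  unfold Nat.ModEq at hfinal
  rw [Finset.card_empty] at hfinal
  -- FT.card % 4 = 0, FT.card = FA + FB = 2 FA
  have hFT2 : FT.card = 2 * FA.card := by rw [hFsplit, hFbij]; ring
  refine ⟨FA.card / 2, ?_⟩
  omega

end Stmt5Aux

open Stmt5Aux in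
/-- if `o : I → {±1}` satisfies `o_i o_j = −1` whenever `a_ij < 0`, and `ī` is
defined by `w₀(α_i) = −α_ī` for the longest element `w₀`, then `o_i o_ī = (−1)^h`. -/
theorem stmt5 {V : Type*} [NormedAddCommGroup V] [InnerProductSpace ℝ V] [FiniteDimensional ℝ V]
    {I : Type*} [Fintype I] (R : RootSystemData V I)
    (hSL : R.IsSimplyLaced) (hirr : R.IsIrreducible)
    (h : ℕ) (hcox : R.HasCoxeterNumber h)
    (w : V ≃ₗᵢ[ℝ] V) (hwW : w ∈ R.weylGroup)
    (hlong : ∀ α ∈ R.posRoots, w α ∈ R.negRoots)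
    (bar : I → I) (hbar : ∀ i, w (R.simple i) = -(R.simple (bar i)))
    (o : I → ℤ) (ho : ∀ i, o i = 1 ∨ o i = -1)
    (hsign : ∀ i j, ⟪R.simple i, R.simple j⟫_ℝ < 0 → o i * o j = -1) :
    ∀ i, o i * o (bar i) = (-1) ^ h := by
  intro i
  have hq := q_const hSL hirr hwW hbar o ho hsign
  rcases pivot hSL hirr hwW hlong hbar i with ⟨p, hp⟩ | ⟨p, hp1, hp2⟩
  · -- bar-fixed vertex: q = 1 and h is even
    obtain ⟨m, hm⟩ := case_fixed hSL hwW hlong hbar hp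
    have hA := Aset_card hSL hirr hcox p
    have hh : h = 2 * m + 2 := by
      rw [hm] at hA
      have : ((2 * m + 2 : ℕ) : ℝ) = (h : ℝ) := by push_cast; push_cast at hA; linarith
      exact_mod_cast this.symm
    have hq1 : o p * o (bar p) = 1 := by
      rw [hp]
      rcases ho p with h' | h' <;> rw [h'] <;> norm_num
    rw [hq i p, hq1, hh, pow_add, pow_mul]
    norm_num
  · -- bar-inverted edge: q = -1 and h is odd
    obtain ⟨m, hm⟩ := case_edge hSL hwW hlong hbar hp1 hp2
    have hA := Aset_card hSL hirr hcox p
    have hh : h = 2 * m + 3 := by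
      rw [hm] at hA
      have : ((2 * m + 3 : ℕ) : ℝ) = (h : ℝ) := by push_cast; push_cast at hA; linarith
      exact_mod_cast this.symm
    have hqm1 : o p * o (bar p) = -1 := hsign p (bar p) (by rw [hp2]; norm_num)
    rw [hq i p, hqm1, hh, pow_add, pow_mul]
    norm_num
end

section
/- Let A = ℤ[q,q⁻¹] and let W be a free A-module with a finite (or arbitrary) basis B. Let β : W → W be an additive involution satisfying β(q^n x) = q^{−n} β(x) and β(b) = b for every b ∈ B. Let (·|·) : W × W → A be a symmetric A-bilinear pairing such that (b|b') ∈ δ_{b,b'} + q⁻¹ℤ[q⁻¹] for all b, b' ∈ B. Then the set {x ∈ W : β(x) = x and (x|x) ∈ 1 + q⁻¹ℤ[q⁻¹]} equals {±b : b ∈ B}. -/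
open LaurentPolynomial

/-- The ℤ-submodule `q⁻¹ℤ[q⁻¹]` of `ℤ[q,q⁻¹]`: Laurent polynomials supported in degrees ≤ −1. -/
noncomputable def lowQ : Submodule ℤ (LaurentPolynomial ℤ) :=
  Submodule.span ℤ {p : LaurentPolynomial ℤ | ∃ n : ℤ, n ≤ -1 ∧ p = LaurentPolynomial.T n}

section Aux

theorem stmt6_smul_coeff (f : LaurentPolynomial ℤ) (c : ℤ) (m : ℤ) : (c • f).coeff m = c * (f.coeff m) := by
  rw [zsmul_eq_mul, show ((c : ℤ[T;T⁻¹])) = AddMonoidAlgebra.single 0 c from rfl,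
    AddMonoidAlgebra.coeff_single_mul_apply]
  simp

theorem stmt6_lowQ_coeff {r : LaurentPolynomial ℤ} (hr : r ∈ lowQ)
    {m : ℤ} (hm : 0 ≤ m) : r.coeff m = 0 := by
  unfold lowQ at hr
  induction hr using Submodule.span_induction with
  | mem p hp => obtain ⟨n, hn, rfl⟩ := hp; simp; omega
  | zero => simp
  | add p q _ _ hp hq => rw [AddMonoidAlgebra.coeff_add, Finsupp.add_apply, hp, hq, add_zero]
  | smul c p _ hp => rw [stmt6_smul_coeff, hp, mul_zero]

theorem stmt6_mul_bound {f g : LaurentPolynomial ℤ} {a c : ℤ}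
    (hf : ∀ m, a < m → f.coeff m = 0) (hg : ∀ m, c < m → g.coeff m = 0)
    {m : ℤ} (hm : a + c < m) : (f * g).coeff m = 0 := by
  classical
  by_contra h
  have hmem : m ∈ (f * g).coeff.support := Finsupp.mem_support_iff.mpr h
  have := AddMonoidAlgebra.support_coeff_mul_subset f g hmem
  rw [Finset.mem_add] at this
  obtain ⟨u, hu, v, hv, rfl⟩ := this
  have h1 : u ≤ a := by by_contra h1; exact (Finsupp.mem_support_iff.mp hu) (hf u (by omega))
  have h2 : v ≤ c := by by_contra h2; exact (Finsupp.mem_support_iff.mp hv) (hg v (by omega))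
  omega

theorem stmt6_mul_lead {f g : LaurentPolynomial ℤ} {a c : ℤ}
    (hf : ∀ m, a < m → f.coeff m = 0) (hg : ∀ m, c < m → g.coeff m = 0) :
    (f * g).coeff (a + c) = f.coeff a * g.coeff c := by
  set s : LaurentPolynomial ℤ := AddMonoidAlgebra.single a (f.coeff a) with hs
  rw [show f * g = s * g + (f - s) * g by rw [← add_mul]; ring_nf, AddMonoidAlgebra.coeff_add, Finsupp.add_apply]
  have h1 : (s * g : LaurentPolynomial ℤ).coeff (a + c) = f.coeff a * g.coeff c := by
    rw [show s = AddMonoidAlgebra.single a (f.coeff a) from rfl,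
      AddMonoidAlgebra.coeff_single_mul_apply]
    ring_nf
  have h2 : ((f - s) * g : LaurentPolynomial ℤ).coeff (a + c) = 0 := by
    apply stmt6_mul_bound (a := a - 1) (c := c) _ hg (by omega)
    intro m hm
    rw [AddMonoidAlgebra.coeff_sub, Finsupp.sub_apply, hs, AddMonoidAlgebra.coeff_single, Finsupp.single_apply]
    by_cases h : a = m
    · subst h; simp
    · rw [if_neg h, hf m (by omega), sub_zero]
  rw [h1, h2, add_zero]

/-- The bar involution `q ↦ q⁻¹` on `ℤ[q,q⁻¹]`. -/
noncomputable def stmt6_bar (q : LaurentPolynomial ℤ) : LaurentPolynomial ℤ :=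
  AddMonoidAlgebra.ofCoeff (Finsupp.equivMapDomain (Equiv.neg ℤ) q.coeff)

theorem stmt6_bar_apply (q : LaurentPolynomial ℤ) (m : ℤ) : (stmt6_bar q).coeff m = q.coeff (-m) := by
  simp [stmt6_bar, AddMonoidAlgebra.coeff_ofCoeff, Finsupp.equivMapDomain_apply]

theorem stmt6_sum_C_T (q : LaurentPolynomial ℤ) : q = ∑ n ∈ q.coeff.support, C (q.coeff n) * T n := by
  conv_lhs => rw [← AddMonoidAlgebra.sum_coeff_single q]
  rw [Finsupp.sum]
  exact Finset.sum_congr rfl fun n _ => single_eq_C_mul_T (q.coeff n) n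

theorem stmt6_bar_eq_sum (q : LaurentPolynomial ℤ) :
    stmt6_bar q = ∑ n ∈ q.coeff.support, C (q.coeff n) * T (-n) := by
  rw [stmt6_bar, Finsupp.equivMapDomain_eq_mapDomain, Finsupp.mapDomain, Finsupp.sum,
    AddMonoidAlgebra.ofCoeff_sum]
  exact Finset.sum_congr rfl fun n _ => by
    rw [AddMonoidAlgebra.ofCoeff_single]; exact single_eq_C_mul_T (q.coeff n) (-n)

theorem stmt6_beta_smul {W : Type*} [AddCommGroup W] [Module (LaurentPolynomial ℤ) W]
    (β : W → W) (hadd : ∀ x y, β (x + y) = β x + β y)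
    (hsemi : ∀ (n : ℤ) (x : W), β ((LaurentPolynomial.T n : LaurentPolynomial ℤ) • x)
      = (LaurentPolynomial.T (-n) : LaurentPolynomial ℤ) • β x)
    (q : LaurentPolynomial ℤ) (w : W) :
    β (q • w) = stmt6_bar q • β w := by
  let B : W →+ W := AddMonoidHom.mk' β hadd
  have hB : ∀ x, B x = β x := fun _ => rfl
  have key : ∀ n c, β ((C c * T n : LaurentPolynomial ℤ) • w)
      = (C c * T (-n) : LaurentPolynomial ℤ) • β w := by
    intro n c
    rw [mul_smul, mul_smul]
    rw [show (C c : LaurentPolynomial ℤ) = ((c : ℤ) : LaurentPolynomial ℤ) from rfl]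
    rw [Int.cast_smul_eq_zsmul, Int.cast_smul_eq_zsmul, ← hB, map_zsmul, hB, hsemi]
  calc β (q • w) = β ((∑ n ∈ q.coeff.support, (C (q.coeff n) * T n : LaurentPolynomial ℤ)) • w) := by
        rw [← stmt6_sum_C_T]
    _ = β (∑ n ∈ q.coeff.support, (C (q.coeff n) * T n : LaurentPolynomial ℤ) • w) := by
        rw [Finset.sum_smul]
    _ = ∑ n ∈ q.coeff.support, β ((C (q.coeff n) * T n : LaurentPolynomial ℤ) • w) := by
        rw [← hB, map_sum]; rfl
    _ = ∑ n ∈ q.coeff.support, (C (q.coeff n) * T (-n) : LaurentPolynomial ℤ) • β w := by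
        exact Finset.sum_congr rfl fun n _ => key n (q.coeff n)
    _ = stmt6_bar q • β w := by rw [stmt6_bar_eq_sum, Finset.sum_smul]

theorem stmt6_sum_sq {ι : Type*} (s : Finset ι) (c : ι → ℤ)
    (h : ∑ i ∈ s, c i * c i = 1) :
    ∃ i₀ ∈ s, (c i₀ = 1 ∨ c i₀ = -1) ∧ ∀ j ∈ s, j ≠ i₀ → c j = 0 := by
  classical
  obtain ⟨i₀, hi₀s, hi₀⟩ : ∃ i ∈ s, c i ≠ 0 := by
    by_contra hc
    push_neg at hc
    rw [Finset.sum_eq_zero (fun i hi => by rw [hc i hi, mul_zero])] at h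
    omega
  have hsplit : c i₀ * c i₀ + ∑ j ∈ s.erase i₀, c j * c j = 1 :=
    (Finset.add_sum_erase s (fun j => c j * c j) hi₀s).trans h
  have hpos : 0 < c i₀ * c i₀ := mul_self_pos.mpr hi₀
  have hrest : 0 ≤ ∑ j ∈ s.erase i₀, c j * c j :=
    Finset.sum_nonneg fun j _ => mul_self_nonneg (c j)
  have h1 : c i₀ * c i₀ = 1 := by omega
  have h2 : ∑ j ∈ s.erase i₀, c j * c j = 0 := by omega
  refine ⟨i₀, hi₀s, Int.isUnit_iff.mp (IsUnit.of_mul_eq_one _ h1), fun j hj hji₀ => ?_⟩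
  have := (Finset.sum_eq_zero_iff_of_nonneg fun j _ => mul_self_nonneg (c j)).mp h2 j
    (Finset.mem_erase.mpr ⟨hji₀, hj⟩)
  exact mul_self_eq_zero.mp this

end Aux

/-- let `W` be a free `A = ℤ[q,q⁻¹]`-module with basis `B`, `β` an additive
involution with `β(qⁿx) = q⁻ⁿ β(x)` fixing the basis, and `(·|·)` a symmetric bilinear pairing
with `(b|b') ∈ δ_{b,b'} + q⁻¹ℤ[q⁻¹]`. Then
`{x : β(x) = x, (x|x) ∈ 1 + q⁻¹ℤ[q⁻¹]} = {±b : b ∈ B}`. -/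
theorem stmt6 {ι W : Type*} [DecidableEq ι] [AddCommGroup W] [Module (LaurentPolynomial ℤ) W]
    (b : Module.Basis ι (LaurentPolynomial ℤ) W) (β : W → W)
    (hadd : ∀ x y, β (x + y) = β x + β y)
    (hinv : ∀ x, β (β x) = x)
    (hsemi : ∀ (n : ℤ) (x : W), β ((LaurentPolynomial.T n : LaurentPolynomial ℤ) • x) = (LaurentPolynomial.T (-n) : LaurentPolynomial ℤ) • β x)
    (hb : ∀ i, β (b i) = b i)
    (P : W →ₗ[LaurentPolynomial ℤ] W →ₗ[LaurentPolynomial ℤ] LaurentPolynomial ℤ)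
    (hsymm : ∀ x y, P x y = P y x)
    (hPb : ∀ i j, P (b i) (b j) - (if i = j then 1 else 0) ∈ lowQ) :
    {x : W | β x = x ∧ P x x - 1 ∈ lowQ} = {x : W | ∃ i, x = b i ∨ x = -(b i)} := by
  classical
  have one_coeff : ∀ m : ℤ, (1 : LaurentPolynomial ℤ).coeff m = if (0 : ℤ) = m then 1 else 0 := by
    intro m
    rw [← T_zero, T_apply]
  let B : W →+ W := AddMonoidHom.mk' β hadd
  have hB : ∀ x, B x = β x := fun _ => rfl
  ext x
  simp only [Set.mem_setOf_eq]
  constructor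
  · rintro ⟨hβx, hPx⟩
    set p : ι →₀ LaurentPolynomial ℤ := b.repr x with hp
    have hx : x = ∑ i ∈ p.support, p i • b i := by
      conv_lhs => rw [← b.linearCombination_repr x]
      rw [Finsupp.linearCombination_apply, Finsupp.sum]
    -- coefficients are bar-invariant
    have hβ : β x = ∑ i ∈ p.support, stmt6_bar (p i) • b i := by
      conv_lhs => rw [hx, ← hB, map_sum]
      refine Finset.sum_congr rfl fun i _ => ?_
      rw [hB, stmt6_beta_smul β hadd hsemi, hb]
    have hrepr : ∀ j ∈ p.support, stmt6_bar (p j) = p j := by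
      intro j hj
      have h1 : b.repr (β x) = ∑ i ∈ p.support, Finsupp.single i (stmt6_bar (p i)) := by
        rw [hβ, map_sum]
        refine Finset.sum_congr rfl fun i _ => ?_
        rw [map_smul, Module.Basis.repr_self, Finsupp.smul_single, smul_eq_mul, mul_one]
      have h2 : b.repr (β x) j = p j := by rw [hβx, hp]
      rw [h1, Finsupp.finset_sum_apply] at h2
      rw [Finset.sum_eq_single j (fun i _ hij => Finsupp.single_eq_of_ne' hij)
        (fun h => absurd hj h)] at h2
      rwa [Finsupp.single_eq_same] at h2
    have hsymc : ∀ j ∈ p.support, ∀ m, (p j).coeff (-m) = (p j).coeff m := by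
      intro j hj m
      rw [← stmt6_bar_apply, hrepr j hj]
    -- expansion of P x x
    have hPxx2 : P x x = ∑ i ∈ p.support, ∑ j ∈ p.support, p i * p j * P (b i) (b j) := by
      calc P x x = P (∑ i ∈ p.support, p i • b i) x := by rw [← hx]
        _ = ∑ i ∈ p.support, p i * P (b i) x := by
            rw [map_sum, LinearMap.coe_sum, Finset.sum_apply]
            exact Finset.sum_congr rfl fun i _ =>
              by rw [map_smul, LinearMap.smul_apply, smul_eq_mul]
        _ = ∑ i ∈ p.support, ∑ j ∈ p.support, p i * p j * P (b i) (b j) := by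
            refine Finset.sum_congr rfl fun i _ => ?_
            rw [show P (b i) x = ∑ j ∈ p.support, p j * P (b i) (b j) by
              conv_lhs => rw [hx, map_sum]
              exact Finset.sum_congr rfl fun j _ => by rw [map_smul, smul_eq_mul]]
            rw [Finset.mul_sum]
            exact Finset.sum_congr rfl fun j _ => by ring
    have hPxx : P x x = (∑ i ∈ p.support, p i * p i)
        + ∑ i ∈ p.support, ∑ j ∈ p.support,
            p i * p j * (P (b i) (b j) - if i = j then 1 else 0) := by
      rw [hPxx2, ← Finset.sum_add_distrib]
      refine Finset.sum_congr rfl fun i hi => ?_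
      have hδ : ∑ j ∈ p.support, p i * p j * (if i = j then 1 else 0) = p i * p i := by
        simp only [mul_ite, mul_one, mul_zero]
        rw [Finset.sum_ite_eq p.support i (fun j => p i * p j), if_pos hi]
      rw [← hδ, ← Finset.sum_add_distrib]
      exact Finset.sum_congr rfl fun j _ => by ring
    -- support is nonempty
    have hps : p.support.Nonempty := by
      rw [Finset.nonempty_iff_ne_empty]
      intro hemp
      have hx0 : x = 0 := by rw [hx, hemp, Finset.sum_empty]
      rw [hx0] at hPx
      have hP0 : P (0 : W) (0 : W) - 1 = (-1 : LaurentPolynomial ℤ) := by simp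
      rw [hP0] at hPx
      have h0 := stmt6_lowQ_coeff hPx (le_refl (0 : ℤ))
      rw [AddMonoidAlgebra.coeff_neg, Finsupp.neg_apply, one_coeff] at h0
      simp at h0
    set Ts : Finset ℤ := p.support.sup (fun i => (p i).coeff.support) with hTs
    have hTsne : Ts.Nonempty := by
      obtain ⟨i₀, hi₀⟩ := hps
      obtain ⟨m, hm⟩ := Finsupp.support_nonempty_iff.mpr
        (fun h => Finsupp.mem_support_iff.mp hi₀ (AddMonoidAlgebra.coeff_eq_zero.mp h))
      exact ⟨m, Finset.mem_sup.mpr ⟨i₀, hi₀, hm⟩⟩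
    set n : ℤ := Ts.max' hTsne with hn
    have hTop : ∀ i, ∀ m, n < m → (p i).coeff m = 0 := by
      intro i m hm
      by_contra hne
      have hi : i ∈ p.support := Finsupp.mem_support_iff.mpr fun h0 => hne (by rw [h0]; rfl)
      have hms : m ∈ (p i).coeff.support := Finsupp.mem_support_iff.mpr hne
      have hmem : m ∈ Ts := Finset.mem_sup.mpr ⟨i, hi, hms⟩
      exact absurd (Finset.le_max' Ts m hmem) (by omega)
    obtain ⟨i₁, hi₁s, hi₁⟩ : ∃ i ∈ p.support, (p i).coeff n ≠ 0 := by
      have hmem := Ts.max'_mem hTsne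
      rw [Finset.mem_sup] at hmem
      obtain ⟨i, his, hin⟩ := hmem
      exact ⟨i, his, Finsupp.mem_support_iff.mp hin⟩
    have hn0 : 0 ≤ n := by
      have hne : (p i₁).coeff (-n) ≠ 0 := by rw [hsymc i₁ hi₁s n]; exact hi₁
      have hmem : -n ∈ Ts := Finset.mem_sup.mpr ⟨i₁, hi₁s, Finsupp.mem_support_iff.mpr hne⟩
      have := Finset.le_max' Ts _ hmem
      omega
    -- coefficient of P x x at 2n
    have hco : (P x x).coeff (2 * n) = ∑ i ∈ p.support, (p i).coeff n * (p i).coeff n := by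
      rw [hPxx, AddMonoidAlgebra.coeff_add, Finsupp.add_apply]
      have h1 : ((∑ i ∈ p.support, p i * p i : LaurentPolynomial ℤ)).coeff (2 * n)
          = ∑ i ∈ p.support, (p i).coeff n * (p i).coeff n := by
        rw [AddMonoidAlgebra.coeff_sum, Finsupp.finset_sum_apply]
        refine Finset.sum_congr rfl fun i _ => ?_
        rw [show (2 * n) = n + n by ring]
        exact stmt6_mul_lead (hTop i) (hTop i)
      have h2 : ((∑ i ∈ p.support, ∑ j ∈ p.support,
          p i * p j * (P (b i) (b j) - if i = j then 1 else 0) : LaurentPolynomial ℤ)).coeff (2 * n)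
          = 0 := by
        rw [AddMonoidAlgebra.coeff_sum, Finsupp.finset_sum_apply]
        refine Finset.sum_eq_zero fun i _ => ?_
        rw [AddMonoidAlgebra.coeff_sum, Finsupp.finset_sum_apply]
        refine Finset.sum_eq_zero fun j _ => ?_
        have hfg : ∀ m, n + n < m → (p i * p j : LaurentPolynomial ℤ).coeff m = 0 :=
          fun m hm => stmt6_mul_bound (hTop i) (hTop j) hm
        have hr : ∀ m, (-1 : ℤ) < m → (P (b i) (b j) - if i = j then 1 else 0).coeff m = 0 :=
          fun m hm => stmt6_lowQ_coeff (hPb i j) (by omega)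
        exact stmt6_mul_bound hfg hr (by omega)
      rw [h1, h2, add_zero]
    have hval : (P x x).coeff (2 * n) = if (0 : ℤ) = 2 * n then 1 else 0 := by
      have h0 := stmt6_lowQ_coeff hPx (by omega : (0 : ℤ) ≤ 2 * n)
      rw [AddMonoidAlgebra.coeff_sub, Finsupp.sub_apply, one_coeff, sub_eq_zero] at h0
      exact h0
    have hnz : n = 0 := by
      by_contra hne
      have hsum0 : ∑ i ∈ p.support, (p i).coeff n * (p i).coeff n = 0 := by
        rw [← hco, hval, if_neg (by omega : (0 : ℤ) ≠ 2 * n)]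
      have := (Finset.sum_eq_zero_iff_of_nonneg fun i _ => mul_self_nonneg ((p i).coeff n)).mp
        hsum0 i₁ hi₁s
      exact hi₁ (mul_self_eq_zero.mp this)
    rw [hnz] at hco hval
    have hsum1 : ∑ i ∈ p.support, (p i).coeff 0 * (p i).coeff 0 = 1 := by
      rw [← hco, hval]
      simp
    obtain ⟨i₀, hi₀s, hpm, hzero⟩ := stmt6_sum_sq p.support (fun i => (p i).coeff 0) hsum1
    have hTop0 : ∀ i m, 0 < m → (p i).coeff m = 0 := fun i m hm => hTop i m (by omega)
    have hsingle : ∀ j ∈ p.support, p j = C ((p j).coeff 0) := by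
      intro j hj
      have hC : (AddMonoidAlgebra.single (0 : ℤ) ((p j).coeff 0) : LaurentPolynomial ℤ) = C ((p j).coeff 0) := by
        rw [single_eq_C_mul_T, T_zero, mul_one]
      rw [← hC]
      apply LaurentPolynomial.ext
      intro m
      rw [AddMonoidAlgebra.coeff_single, Finsupp.single_apply]
      by_cases hm : (0 : ℤ) = m
      · rw [if_pos hm, hm]
      · rw [if_neg hm]
        rcases lt_or_gt_of_ne (fun h => hm h.symm) with h | h
        · rw [← hsymc j hj m]
          exact hTop0 j (-m) (by omega)
        · exact hTop0 j m h
    have hsupp : p.support = {i₀} := by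
      apply Finset.eq_singleton_iff_unique_mem.mpr
      refine ⟨hi₀s, fun j hj => ?_⟩
      by_contra hne
      have hz := hzero j hj hne
      have hpj : p j = 0 := by rw [hsingle j hj, hz, map_zero]
      exact Finsupp.mem_support_iff.mp hj hpj
    refine ⟨i₀, ?_⟩
    have hxval : x = p i₀ • b i₀ := by rw [hx, hsupp, Finset.sum_singleton]
    rcases hpm with h1 | h1
    · left
      rw [hxval, hsingle i₀ hi₀s, h1, map_one, one_smul]
    · right
      rw [hxval, hsingle i₀ hi₀s, h1,
        show (C (-1 : ℤ) : LaurentPolynomial ℤ) = -1 by rw [map_neg, map_one],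
        neg_smul, one_smul]
  · rintro ⟨i, rfl | rfl⟩
    · refine ⟨hb i, ?_⟩
      have := hPb i i
      simpa using this
    · constructor
      · rw [← hB, map_neg, hB, hb]
      · rw [show P (-(b i)) (-(b i)) = P (b i) (b i) by simp]
        have := hPb i i
        simpa using this
end

section
/- Let Δ be a simply-laced root system with Coxeter number h, Weyl group longest element w₀, fundamental weights ω_i, and fix a dominant weight λ; set ν = λ − w₀(λ) and write ν = ∑_j k_j α_j. For α in the root lattice Q define |α|² = ∑_j (ω_j,α)² and x(α) = (h−1)|α|² + (1 − h/2)(α,α) + (h−2)(λ,α) + (1−h)∑_j k_j (ω_j,α) + C for any constant C. Then x(w₀*α) = x(α) for all α ∈ Q, where w₀*α = ν + w₀(α). -/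
open scoped InnerProductSpace Classical

/-- the quadratic normalization map
`x(α) = (h−1)|α|² + (1 − h/2)(α,α) + (h−2)(λ,α) + (1−h)∑_j k_j (ω_j,α) + C`
(with `ν = λ − w₀λ = ∑ k_j α_j`) satisfies `x(w₀*α) = x(α)` for all `α` in the root lattice,
where `w₀*α = ν + w₀(α)`. -/
theorem stmt11 {V : Type*} [NormedAddCommGroup V] [InnerProductSpace ℝ V]
    {I : Type*} [Fintype I] (R : RootSystemData V I)
    (hSL : R.IsSimplyLaced) (hirr : R.IsIrreducible)
    (h : ℕ) (hcox : R.HasCoxeterNumber h)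
    (fw : I → V) (hfw : R.IsFundamental fw)
    (lam : V) (hdom : ∀ i, 0 ≤ ⟪lam, R.simple i⟫_ℝ)
    (w : V ≃ₗᵢ[ℝ] V) (bar : I → I)
    (hw2 : ∀ v, w (w v) = v)
    (hwα : ∀ i, w (R.simple i) = -(R.simple (bar i)))
    (hwω : ∀ i, w (fw i) = -(fw (bar i)))
    (C : ℝ) (x : V → ℝ)
    (hx : ∀ β, x β = ((h : ℝ) - 1) * (∑ j, ⟪fw j, β⟫_ℝ ^ 2)
        + (1 - (h : ℝ) / 2) * ⟪β, β⟫_ℝ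
        + ((h : ℝ) - 2) * ⟪lam, β⟫_ℝ
        + (1 - (h : ℝ)) * (∑ j, ⟪fw j, lam - w lam⟫_ℝ * ⟪fw j, β⟫_ℝ)
        + C) :
    ∀ α ∈ Submodule.span ℤ (Set.range R.simple), x ((lam - w lam) + w α) = x α := by
  intro α _
  have hadj : ∀ u v : V, ⟪w u, v⟫_ℝ = ⟪u, w v⟫_ℝ := by
    intro u v
    conv_lhs => rw [← hw2 v]
    exact w.inner_map_map u (w v)
  have hfwinj : Function.Injective fw := by
    intro i i' hii
    by_contra hne
    have h1 := hfw i i'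
    rw [hii, hfw i' i'] at h1
    simp [hne] at h1
  have hbarinv : Function.Involutive bar := by
    intro i
    apply hfwinj
    have h2 := hw2 (fw i)
    rw [hwω i, map_neg, hwω (bar i), neg_neg] at h2
    exact h2
  set ν : V := lam - w lam with hν
  have hwnu : w ν = -ν := by
    simp [hν, map_sub, hw2]
  have hfww : ∀ (j : I) (v : V), ⟪fw j, w v⟫_ℝ = -⟪fw (bar j), v⟫_ℝ := by
    intro j v
    rw [← hadj, hwω j, inner_neg_left]
  have hk : ∀ j, ⟪fw (bar j), ν⟫_ℝ = ⟪fw j, ν⟫_ℝ := by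
    intro j
    have := hfww j ν
    rw [hwnu, inner_neg_right] at this
    exact (neg_inj.mp this).symm
  have hjβ : ∀ j, ⟪fw j, ν + w α⟫_ℝ = ⟪fw j, ν⟫_ℝ - ⟪fw (bar j), α⟫_ℝ := by
    intro j
    rw [inner_add_right, hfww j α]
    ring
  set e : Equiv.Perm I := hbarinv.toPerm bar with he
  -- sum 1
  have hsum1 : ∑ j, ⟪fw j, ν + w α⟫_ℝ ^ 2
      = ∑ j, (⟪fw j, ν⟫_ℝ - ⟪fw j, α⟫_ℝ) ^ 2 := by
    simp_rw [hjβ]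
    refine Fintype.sum_equiv e _ _ (fun j => ?_)
    show _ = (⟪fw (e j), ν⟫_ℝ - ⟪fw (e j), α⟫_ℝ) ^ 2
    have hej : e j = bar j := rfl
    rw [hej, hk j]
  -- sum 2
  have hsum2 : ∑ j, ⟪fw j, ν⟫_ℝ * ⟪fw j, ν + w α⟫_ℝ
      = ∑ j, ⟪fw j, ν⟫_ℝ * (⟪fw j, ν⟫_ℝ - ⟪fw j, α⟫_ℝ) := by
    simp_rw [hjβ]
    refine Fintype.sum_equiv e _ _ (fun j => ?_)
    show _ = ⟪fw (e j), ν⟫_ℝ * (⟪fw (e j), ν⟫_ℝ - ⟪fw (e j), α⟫_ℝ)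
    have hej : e j = bar j := rfl
    rw [hej, hk j]
  have hαα : ⟪w α, w α⟫_ℝ = ⟪α, α⟫_ℝ := w.inner_map_map α α
  have hνwα : ⟪ν, w α⟫_ℝ = -⟪ν, α⟫_ℝ := by
    rw [← hadj, hwnu, inner_neg_left]
  have hlwa : ⟪lam, w α⟫_ℝ = ⟪lam, α⟫_ℝ - ⟪ν, α⟫_ℝ := by
    rw [← hadj]
    have : w lam = lam - ν := by simp [hν]
    rw [this, inner_sub_left]
  have hββ : ⟪ν + w α, ν + w α⟫_ℝ = ⟪ν, ν⟫_ℝ - 2 * ⟪ν, α⟫_ℝ + ⟪α, α⟫_ℝ := by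
    rw [real_inner_add_add_self, hαα, hνwα]
    ring
  have hlb : ⟪lam, ν + w α⟫_ℝ = ⟪lam, ν⟫_ℝ + ⟪lam, α⟫_ℝ - ⟪ν, α⟫_ℝ := by
    rw [inner_add_right, hlwa]
    ring
  have hνν : ⟪ν, ν⟫_ℝ = 2 * ⟪lam, ν⟫_ℝ := by
    have hll : ⟪w lam, w lam⟫_ℝ = ⟪lam, lam⟫_ℝ := w.inner_map_map lam lam
    have hlw : ⟪w lam, lam⟫_ℝ = ⟪lam, w lam⟫_ℝ := real_inner_comm _ _
    simp only [hν, inner_sub_left, inner_sub_right, hll, hlw]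
    ring
  -- expand squared sums
  have hexp : ∑ j, (⟪fw j, ν⟫_ℝ - ⟪fw j, α⟫_ℝ) ^ 2
      = ∑ j, ⟪fw j, ν⟫_ℝ ^ 2 - 2 * ∑ j, ⟪fw j, ν⟫_ℝ * ⟪fw j, α⟫_ℝ
        + ∑ j, ⟪fw j, α⟫_ℝ ^ 2 := by
    rw [Finset.mul_sum, ← Finset.sum_sub_distrib, ← Finset.sum_add_distrib]
    exact Finset.sum_congr rfl (fun j _ => by ring)
  have hexp2 : ∑ j, ⟪fw j, ν⟫_ℝ * (⟪fw j, ν⟫_ℝ - ⟪fw j, α⟫_ℝ)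
      = ∑ j, ⟪fw j, ν⟫_ℝ ^ 2 - ∑ j, ⟪fw j, ν⟫_ℝ * ⟪fw j, α⟫_ℝ := by
    rw [← Finset.sum_sub_distrib]
    exact Finset.sum_congr rfl (fun j _ => by ring)
  rw [hx, hx, hsum1, hsum2, hexp, hexp2, hββ, hlb, hνν]
  ring
end

section
/- Let Δ be a simply-laced root system with simple roots α_i, α_k satisfying (α_i,α_k) = −1 (i.e. a_{ik} = −1). Suppose w = x·s_i·s_k in the Weyl group with l(w) = l(x) + 2. Then Δ⁺ ∩ w⁻¹(Δ⁻) = s_k s_i(Δ⁺ ∩ x⁻¹(Δ⁻)) ⊔ {α_k, α_i + α_k}, a disjoint union. Consequently, setting a(w,i) = (1/2)∑_{α∈Δ⁺∩w⁻¹Δ⁻}(α_i,α)², one has a(w,i) = a(x,k) + 1 whenever additionally x(α_k) is a simple root. -/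
open scoped InnerProductSpace Classical

set_option linter.unusedSectionVars false
namespace RootSystemData

variable {V : Type*} [NormedAddCommGroup V] [InnerProductSpace ℝ V]
  {I : Type*} [Fintype I] [FiniteDimensional ℝ V]

lemma refl_apply (R : RootSystemData V I) (hSL : R.IsSimplyLaced) (i : I) (v : V) :
    R.refl i v = v - ⟪v, R.simple i⟫_ℝ • R.simple i := by
  have h2 : ⟪R.simple i, R.simple i⟫_ℝ = 2 := hSL _ (R.simple_mem i)
  have hn : ‖R.simple i‖ ^ 2 = 2 := by
    rw [← real_inner_self_eq_norm_sq]; exact h2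
  rw [RootSystemData.refl, Submodule.reflection_orthogonal_apply, Submodule.reflection_singleton_apply]
  simp only [RCLike.ofReal_real_eq_id, id_eq, hn, real_inner_comm (R.simple i) v]
  match_scalars <;> ring

lemma coeff_zero (R : RootSystemData V I) {f : I → ℝ}
    (h : ∑ j, f j • R.simple j = 0) : ∀ j, f j = 0 :=
  Fintype.linearIndependent_iff.mp R.indep f h

lemma posRoots_subset (R : RootSystemData V I) : R.posRoots ⊆ R.roots :=
  Finset.filter_subset _ _

lemma mem_posRoots {R : RootSystemData V I} {α : V} :
    α ∈ R.posRoots ↔ α ∈ R.roots ∧ ∃ c : I → ℕ, α = ∑ j, (c j : ℝ) • R.simple j :=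
  Finset.mem_filter

lemma mem_negRoots {R : RootSystemData V I} {α : V} :
    α ∈ R.negRoots ↔ -α ∈ R.posRoots := by
  simp only [RootSystemData.negRoots, Finset.mem_image]
  constructor
  · rintro ⟨β, hβ, rfl⟩; simpa
  · intro h; exact ⟨-α, h, by simp⟩

lemma neg_notMem_posRoots {R : RootSystemData V I} {α : V} (h : α ∈ R.posRoots) :
    -α ∉ R.posRoots := by
  intro h'
  obtain ⟨hr, c, hc⟩ := mem_posRoots.mp h
  obtain ⟨hr', d, hd⟩ := mem_posRoots.mp h'
  have hsum : ∑ j, ((c j : ℝ) + (d j : ℝ)) • R.simple j = 0 := by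
    simp only [add_smul, Finset.sum_add_distrib, ← hc, ← hd]; simp
  have hz := R.coeff_zero hsum
  have hc0 : ∀ j, c j = 0 := by
    intro j
    have := hz j
    have h1 : (0:ℝ) ≤ (c j : ℝ) := Nat.cast_nonneg _
    have h2 : (0:ℝ) ≤ (d j : ℝ) := Nat.cast_nonneg _
    have hcj : (c j : ℝ) = 0 := by linarith
    exact_mod_cast hcj
  have : α = 0 := by
    rw [hc]; simp [hc0]
  exact R.zero_notMem (this ▸ hr)

end RootSystemData
namespace RootSystemData

variable {V : Type*} [NormedAddCommGroup V] [InnerProductSpace ℝ V]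
  {I : Type*} [Fintype I] [FiniteDimensional ℝ V]

lemma negRoots_iff_not_pos {R : RootSystemData V I} {α : V} (hα : α ∈ R.roots) :
    α ∈ R.negRoots ↔ α ∉ R.posRoots := by
  constructor
  · intro hn hp
    exact neg_notMem_posRoots hp (mem_negRoots.mp hn)
  · intro hp
    rcases R.pos_or_neg α hα with ⟨c, hc⟩ | ⟨c, hc⟩
    · exact absurd (mem_posRoots.mpr ⟨hα, c, hc⟩) hp
    · refine mem_negRoots.mpr (mem_posRoots.mpr ⟨R.neg_mem α hα, c, ?_⟩)
      rw [hc]; simp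

lemma simple_mem_posRoots (R : RootSystemData V I) (k : I) :
    R.simple k ∈ R.posRoots := by
  refine mem_posRoots.mpr ⟨R.simple_mem k, fun j => if j = k then 1 else 0, ?_⟩
  rw [Finset.sum_eq_single k] <;> simp +contextual

lemma refl_root_mem (R : RootSystemData V I) (hSL : R.IsSimplyLaced) (i : I)
    {α : V} (hα : α ∈ R.roots) : R.refl i α ∈ R.roots := by
  have h2 : ⟪R.simple i, R.simple i⟫_ℝ = 2 := hSL _ (R.simple_mem i)
  have := R.reflect_mem (R.simple i) (R.simple_mem i) α hα
  rw [h2] at this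
  rw [refl_apply R hSL]
  convert this using 3
  ring

lemma weyl_root_mem (R : RootSystemData V I) (hSL : R.IsSimplyLaced)
    {g : V ≃ₗᵢ[ℝ] V} (hg : g ∈ R.weylGroup) :
    ∀ α ∈ R.roots, g α ∈ R.roots := by
  refine Subgroup.closure_induction (p := fun g _ => ∀ α ∈ R.roots, g α ∈ R.roots)
    ?_ (by simp) ?_ ?_ hg
  · rintro _ ⟨i, rfl⟩ α hα
    exact R.refl_root_mem hSL i hα
  · intro a b _ _ ha hb α hα
    have : (a * b) α = a (b α) := rfl
    rw [this]; exact ha _ (hb _ hα)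
  · intro a _ ha α hα
    have himg : R.roots.image a = R.roots := by
      apply Finset.eq_of_subset_of_card_le
      · intro β hβ
        obtain ⟨γ, hγ, rfl⟩ := Finset.mem_image.mp hβ
        exact ha γ hγ
      · rw [Finset.card_image_of_injective _ a.injective]
    have : α ∈ R.roots.image a := himg.symm ▸ hα
    obtain ⟨γ, hγ, hγα⟩ := Finset.mem_image.mp this
    have : a⁻¹ α = γ := by
      subst hγα; exact a.symm_apply_apply γ
    rw [this]; exact hγ

end RootSystemData
namespace RootSystemData

variable {V : Type*} [NormedAddCommGroup V] [InnerProductSpace ℝ V]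
  {I : Type*} [Fintype I] [FiniteDimensional ℝ V]

lemma refl_refl (R : RootSystemData V I) (k : I) (v : V) :
    R.refl k (R.refl k v) = v :=
  Submodule.reflection_reflection _ v

lemma refl_simple_self (R : RootSystemData V I) (hSL : R.IsSimplyLaced) (k : I) :
    R.refl k (R.simple k) = -(R.simple k) := by
  rw [refl_apply R hSL, hSL _ (R.simple_mem k)]
  module

lemma refl_pos (R : RootSystemData V I) (hSL : R.IsSimplyLaced) (k : I)
    {β : V} (hβ : β ∈ R.posRoots) (hne : β ≠ R.simple k) :
    R.refl k β ∈ R.posRoots ∧ R.refl k β ≠ R.simple k := by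
  obtain ⟨hr, c, hc⟩ := mem_posRoots.mp hβ
  -- some coefficient away from k is nonzero
  have hj : ∃ j, j ≠ k ∧ c j ≠ 0 := by
    by_contra hcon
    push_neg at hcon
    have hβk : β = (c k : ℝ) • R.simple k := by
      rw [hc, Finset.sum_eq_single k]
      · intro j _ hjk; rw [hcon j hjk]; simp
      · simp
    have h2 : ⟪β, β⟫_ℝ = 2 := hSL _ hr
    have h2k : ⟪R.simple k, R.simple k⟫_ℝ = 2 := hSL _ (R.simple_mem k)
    rw [hβk, real_inner_smul_left, real_inner_smul_right, h2k] at h2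
    have hck : (c k : ℝ) = 1 := by nlinarith [sq_nonneg ((c k : ℝ) - 1), sq_nonneg ((c k : ℝ) + 1), Nat.cast_nonneg (α := ℝ) (c k)]
    exact hne (by rw [hβk, hck, one_smul])
  obtain ⟨j, hjk, hcj⟩ := hj
  have hroot : R.refl k β ∈ R.roots := R.refl_root_mem hSL k hr
  have hform : R.refl k β = ∑ m, ((c m : ℝ) - (if m = k then ⟪β, R.simple k⟫_ℝ else 0)) • R.simple m := by
    rw [refl_apply R hSL]
    simp only [sub_smul, Finset.sum_sub_distrib, ← hc]
    congr 1
    rw [Finset.sum_eq_single k]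
    · simp
    · intro m _ hmk; simp [hmk]
    · simp
  have hposc : R.refl k β ∈ R.posRoots := by
    rcases R.pos_or_neg _ hroot with ⟨d, hd⟩ | ⟨d, hd⟩
    · exact mem_posRoots.mpr ⟨hroot, d, hd⟩
    · exfalso
      have hsum : ∑ m, (((c m : ℝ) - (if m = k then ⟪β, R.simple k⟫_ℝ else 0)) + (d m : ℝ)) • R.simple m = 0 := by
        simp only [add_smul, Finset.sum_add_distrib, ← hform]
        rw [hd]; simp
      have := R.coeff_zero hsum j
      simp only [if_neg hjk, sub_zero] at this
      have : (c j : ℝ) = -(d j : ℝ) := by linarith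
      have h1 : (0:ℝ) ≤ (c j : ℝ) := Nat.cast_nonneg _
      have h2 : (0:ℝ) ≤ (d j : ℝ) := Nat.cast_nonneg _
      have : (c j : ℝ) = 0 := by linarith
      exact hcj (by exact_mod_cast this)
  refine ⟨hposc, fun heq => ?_⟩
  have : β = R.refl k (R.simple k) := by rw [← heq, refl_refl]
  rw [refl_simple_self R hSL] at this
  exact neg_notMem_posRoots (R.simple_mem_posRoots k) (this ▸ hβ)

end RootSystemData
namespace RootSystemData

variable {V : Type*} [NormedAddCommGroup V] [InnerProductSpace ℝ V]
  {I : Type*} [Fintype I] [FiniteDimensional ℝ V]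

lemma mem_inversions {R : RootSystemData V I} {u : V ≃ₗᵢ[ℝ] V} {β : V} :
    β ∈ R.inversions u ↔ β ∈ R.posRoots ∧ u β ∈ R.negRoots :=
  Finset.mem_filter

lemma apply_neg_mem_neg_iff (R : RootSystemData V I) (hSL : R.IsSimplyLaced)
    {u : V ≃ₗᵢ[ℝ] V} (huW : u ∈ R.weylGroup) {α : V} (hα : α ∈ R.roots) :
    u (-α) ∈ R.negRoots ↔ u α ∉ R.negRoots := by
  have h1 : u (-α) = -(u α) := map_neg u α
  have h2 : u α ∈ R.roots := R.weyl_root_mem hSL huW α hα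
  rw [h1, mem_negRoots, neg_neg, negRoots_iff_not_pos h2, not_not]

lemma inversions_step_pos (R : RootSystemData V I) (hSL : R.IsSimplyLaced)
    {u : V ≃ₗᵢ[ℝ] V} (huW : u ∈ R.weylGroup) (k : I)
    (hk : R.simple k ∉ R.inversions u) :
    R.inversions (u * R.refl k) = (R.inversions u).image (R.refl k) ∪ {R.simple k} ∧
      R.simple k ∉ (R.inversions u).image (R.refl k) := by
  have hkpos := R.simple_mem_posRoots k
  have hknotimg : R.simple k ∉ (R.inversions u).image (R.refl k) := by
    intro h
    obtain ⟨γ, hγ, hγk⟩ := Finset.mem_image.mp h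
    have hγpos := (mem_inversions.mp hγ).1
    have hγne : γ ≠ R.simple k := fun h' => hk (h' ▸ hγ)
    exact (R.refl_pos hSL k hγpos hγne).2 hγk
  refine ⟨Finset.ext fun β => ?_, hknotimg⟩
  have happ : ∀ v, (u * R.refl k) v = u (R.refl k v) := fun _ => rfl
  rw [mem_inversions, happ, Finset.mem_union, Finset.mem_singleton]
  by_cases hβk : β = R.simple k
  · subst hβk
    simp only [or_iff_right_of_imp, eq_self_iff_true, or_true, iff_true]
    refine ⟨hkpos, ?_⟩
    rw [refl_simple_self R hSL, apply_neg_mem_neg_iff R hSL huW (R.simple_mem k)]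
    intro h
    exact hk (mem_inversions.mpr ⟨hkpos, h⟩)
  · by_cases hβpos : β ∈ R.posRoots
    · obtain ⟨hrpos, hrne⟩ := R.refl_pos hSL k hβpos hβk
      constructor
      · rintro ⟨-, hneg⟩
        left
        exact Finset.mem_image.mpr ⟨R.refl k β, mem_inversions.mpr ⟨hrpos, hneg⟩,
          refl_refl R k β⟩
      · rintro (h | h)
        · obtain ⟨γ, hγ, rfl⟩ := Finset.mem_image.mp h
          obtain ⟨hγpos, hγneg⟩ := mem_inversions.mp hγ
          exact ⟨hβpos, by rwa [refl_refl]⟩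
        · exact absurd h hβk
    · constructor
      · rintro ⟨h, -⟩; exact absurd h hβpos
      · rintro (h | h)
        · obtain ⟨γ, hγ, rfl⟩ := Finset.mem_image.mp h
          have hγpos := (mem_inversions.mp hγ).1
          have hγne : γ ≠ R.simple k := fun h' => hk (h' ▸ hγ)
          exact absurd (R.refl_pos hSL k hγpos hγne).1 hβpos
        · exact absurd (h ▸ hkpos) hβpos

lemma inversions_step_neg (R : RootSystemData V I) (hSL : R.IsSimplyLaced)
    {u : V ≃ₗᵢ[ℝ] V} (huW : u ∈ R.weylGroup) (k : I)
    (hk : R.simple k ∈ R.inversions u) :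
    R.inversions (u * R.refl k) = (R.inversions u \ {R.simple k}).image (R.refl k) := by
  have hkpos := R.simple_mem_posRoots k
  refine Finset.ext fun β => ?_
  have happ : ∀ v, (u * R.refl k) v = u (R.refl k v) := fun _ => rfl
  rw [mem_inversions, happ, Finset.mem_image]
  by_cases hβk : β = R.simple k
  · subst hβk
    constructor
    · rintro ⟨-, hneg⟩
      exfalso
      rw [refl_simple_self R hSL, apply_neg_mem_neg_iff R hSL huW (R.simple_mem k)] at hneg
      exact hneg (mem_inversions.mp hk).2
    · rintro ⟨γ, hγ, hγβ⟩
      exfalso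
      rw [Finset.mem_sdiff, Finset.mem_singleton] at hγ
      exact (R.refl_pos hSL k (mem_inversions.mp hγ.1).1 hγ.2).2 hγβ
  · by_cases hβpos : β ∈ R.posRoots
    · obtain ⟨hrpos, hrne⟩ := R.refl_pos hSL k hβpos hβk
      constructor
      · rintro ⟨-, hneg⟩
        refine ⟨R.refl k β, ?_, refl_refl R k β⟩
        rw [Finset.mem_sdiff, Finset.mem_singleton]
        exact ⟨mem_inversions.mpr ⟨hrpos, hneg⟩, hrne⟩
      · rintro ⟨γ, hγ, rfl⟩
        rw [Finset.mem_sdiff, Finset.mem_singleton] at hγ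
        obtain ⟨hγpos, hγneg⟩ := mem_inversions.mp hγ.1
        exact ⟨hβpos, by rwa [refl_refl]⟩
    · constructor
      · rintro ⟨h, -⟩; exact absurd h hβpos
      · rintro ⟨γ, hγ, rfl⟩
        rw [Finset.mem_sdiff, Finset.mem_singleton] at hγ
        exact absurd (R.refl_pos hSL k (mem_inversions.mp hγ.1).1 hγ.2).1 hβpos

lemma card_step_pos (R : RootSystemData V I) (hSL : R.IsSimplyLaced)
    {u : V ≃ₗᵢ[ℝ] V} (huW : u ∈ R.weylGroup) (k : I)
    (hk : R.simple k ∉ R.inversions u) :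
    (R.inversions (u * R.refl k)).card = (R.inversions u).card + 1 := by
  obtain ⟨heq, hnot⟩ := R.inversions_step_pos hSL huW k hk
  rw [heq, Finset.card_union_of_disjoint (by simpa using hnot),
    Finset.card_image_of_injective _ (R.refl k).injective, Finset.card_singleton]

lemma card_step_neg (R : RootSystemData V I) (hSL : R.IsSimplyLaced)
    {u : V ≃ₗᵢ[ℝ] V} (huW : u ∈ R.weylGroup) (k : I)
    (hk : R.simple k ∈ R.inversions u) :
    (R.inversions (u * R.refl k)).card = (R.inversions u).card - 1 := by
  rw [R.inversions_step_neg hSL huW k hk,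
    Finset.card_image_of_injective _ (R.refl k).injective,
    Finset.card_sdiff_of_subset (by simpa using hk), Finset.card_singleton]

end RootSystemData

set_option maxHeartbeats 1000000 in
/-- in a simply-laced root system with `(α_i,α_k) = −1`, if `w = x·s_i·s_k` with
`l(w) = l(x) + 2`, then `Δ⁺ ∩ w⁻¹(Δ⁻) = s_k s_i(Δ⁺ ∩ x⁻¹(Δ⁻)) ⊔ {α_k, α_i + α_k}` disjointly;
consequently, with `a(w,i) = (1/2)∑_{α∈Δ⁺∩w⁻¹Δ⁻}(α_i,α)²`, one has `a(w,i) = a(x,k) + 1`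
whenever `x(α_k)` is a simple root. -/
theorem stmt15 {V : Type*} [NormedAddCommGroup V] [InnerProductSpace ℝ V] [FiniteDimensional ℝ V]
    {I : Type*} [Fintype I] (R : RootSystemData V I)
    (hSL : R.IsSimplyLaced)
    (w x : V ≃ₗᵢ[ℝ] V) (hwW : w ∈ R.weylGroup) (hxW : x ∈ R.weylGroup)
    (i k : I) (hik : ⟪R.simple i, R.simple k⟫_ℝ = -1)
    (hw : w = x * R.refl i * R.refl k)
    (hlen : (R.inversions w).card = (R.inversions x).card + 2) :
    (R.inversions w = (R.inversions x).image (fun α => R.refl k (R.refl i α))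
        ∪ {R.simple k, R.simple i + R.simple k})
    ∧ Disjoint ((R.inversions x).image (fun α => R.refl k (R.refl i α)))
        ({R.simple k, R.simple i + R.simple k} : Finset V)
    ∧ R.simple k ≠ R.simple i + R.simple k
    ∧ ((∃ j, x (R.simple k) = R.simple j) →
        (∑ α ∈ R.inversions w, ⟪R.simple i, α⟫_ℝ ^ 2) / 2
          = (∑ α ∈ R.inversions x, ⟪R.simple k, α⟫_ℝ ^ 2) / 2 + 1) := by
  classical
  have hiW : R.refl i ∈ R.weylGroup := Subgroup.subset_closure ⟨i, rfl⟩
  have hkW : R.refl k ∈ R.weylGroup := Subgroup.subset_closure ⟨k, rfl⟩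
  have huW : x * R.refl i ∈ R.weylGroup := mul_mem hxW hiW
  have h2i : ⟪R.simple i, R.simple i⟫_ℝ = 2 := hSL _ (R.simple_mem i)
  have h2k : ⟪R.simple k, R.simple k⟫_ℝ = 2 := hSL _ (R.simple_mem k)
  have hki : ⟪R.simple k, R.simple i⟫_ℝ = -1 := by rw [real_inner_comm]; exact hik
  -- both steps must increase the inversion count
  have hlen' : (R.inversions ((x * R.refl i) * R.refl k)).card
      = (R.inversions x).card + 2 := by rw [← hw]; exact hlen
  have hαi_not : R.simple i ∉ R.inversions x := by
    by_contra h
    have hc1 : 0 < (R.inversions x).card := Finset.card_pos.mpr ⟨_, h⟩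
    have h1 := R.card_step_neg hSL hxW i h
    by_cases h2 : R.simple k ∈ R.inversions (x * R.refl i)
    · have h3 := R.card_step_neg hSL huW k h2
      omega
    · have h3 := R.card_step_pos hSL huW k h2
      omega
  have h1 := R.card_step_pos hSL hxW i hαi_not
  have hαk_not : R.simple k ∉ R.inversions (x * R.refl i) := by
    by_contra h2
    have h3 := R.card_step_neg hSL huW k h2
    omega
  obtain ⟨hinvu, hnotu⟩ := R.inversions_step_pos hSL hxW i hαi_not
  obtain ⟨hinvw, hnotw⟩ := R.inversions_step_pos hSL huW k hαk_not
  have hreflkαi : R.refl k (R.simple i) = R.simple i + R.simple k := by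
    rw [R.refl_apply hSL, hik]; module
  have hrefliαi : R.refl i (R.simple i) = -(R.simple i) := R.refl_simple_self hSL i
  have hreflkik : R.refl k (R.simple i + R.simple k) = R.simple i := by
    rw [R.refl_apply hSL]
    rw [inner_add_left, hik, h2k]
    module
  -- the set identity
  have hEq : R.inversions w = (R.inversions x).image (fun α => R.refl k (R.refl i α))
      ∪ {R.simple k, R.simple i + R.simple k} := by
    have himg : Finset.image (⇑(R.refl k)) (Finset.image (⇑(R.refl i)) (R.inversions x))
        = (R.inversions x).image (fun α => R.refl k (R.refl i α)) := Finset.image_image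
    rw [hw, hinvw, hinvu, Finset.image_union, himg, Finset.image_singleton, hreflkαi]
    ext β
    simp only [Finset.mem_union, Finset.mem_singleton, Finset.mem_insert]
    tauto
  -- non-membership facts for disjointness
  have hAk : R.simple k ∉ (R.inversions x).image (fun α => R.refl k (R.refl i α)) := by
    intro h
    apply hnotw
    obtain ⟨γ, hγ, hγe⟩ := Finset.mem_image.mp h
    refine Finset.mem_image.mpr ⟨R.refl i γ, ?_, hγe⟩
    rw [hinvu]
    exact Finset.mem_union_left _ (Finset.mem_image_of_mem _ hγ)
  have hAik : R.simple i + R.simple k ∉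
      (R.inversions x).image (fun α => R.refl k (R.refl i α)) := by
    intro h
    obtain ⟨γ, hγ, hγe⟩ := Finset.mem_image.mp h
    have e1 : R.refl i γ = R.simple i := by
      have := congrArg (R.refl k) hγe
      rwa [R.refl_refl, hreflkik] at this
    have e2 : γ = -(R.simple i) := by
      have := congrArg (R.refl i) e1
      rwa [R.refl_refl, hrefliαi] at this
    have hγpos := (RootSystemData.mem_inversions.mp hγ).1
    rw [e2] at hγpos
    exact RootSystemData.neg_notMem_posRoots (R.simple_mem_posRoots i) hγpos
  have hne : R.simple k ≠ R.simple i + R.simple k := by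
    intro h
    have hi0 : R.simple i = 0 := right_eq_add.mp h
    exact R.zero_notMem (hi0 ▸ R.simple_mem i)
  have hdisj : Disjoint ((R.inversions x).image (fun α => R.refl k (R.refl i α)))
      ({R.simple k, R.simple i + R.simple k} : Finset V) := by
    rw [Finset.disjoint_right]
    intro β hβ
    rcases Finset.mem_insert.mp hβ with rfl | hβ
    · exact hAk
    · rw [Finset.mem_singleton] at hβ
      subst hβ
      exact hAik
  refine ⟨hEq, hdisj, hne, fun _ => ?_⟩
  -- the sum computation
  have key : ∀ γ : V, ⟪R.simple i, R.refl k (R.refl i γ)⟫_ℝ = ⟪R.simple k, γ⟫_ℝ := by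
    intro γ
    rw [R.refl_apply hSL, R.refl_apply hSL]
    simp only [inner_sub_left, inner_sub_right, real_inner_smul_left, real_inner_smul_right,
      h2i, h2k, hik, hki, real_inner_comm γ (R.simple i), real_inner_comm γ (R.simple k)]
    ring
  have hinj : ∀ a ∈ R.inversions x, ∀ b ∈ R.inversions x,
      R.refl k (R.refl i a) = R.refl k (R.refl i b) → a = b := fun a _ b _ h =>
    (R.refl i).injective ((R.refl k).injective h)
  rw [hEq, Finset.sum_union hdisj, Finset.sum_pair hne,
    Finset.sum_image hinj]
  have hsum : ∑ γ ∈ R.inversions x, ⟪R.simple i, R.refl k (R.refl i γ)⟫_ℝ ^ 2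
      = ∑ γ ∈ R.inversions x, ⟪R.simple k, γ⟫_ℝ ^ 2 :=
    Finset.sum_congr rfl fun γ _ => by rw [key]
  rw [hsum, hik, inner_add_right, h2i, hik]
  ring
end
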